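/- arXiv:cs/0505076 — 9 statements merged into one kernel-verified Lean document; each statement's English description precedes it below -/
import Mathlib

section
/- Assume G1 is connected and every vertex of G2 has degree at most d0. Then G1 and G2 are isomorphic if and only if there exists a vertex τ ∈ V2 of degree d0 in G2 such that σ0 and τ are automorphism equivalent in the graph G_τ. -/
attribute [local instance] Classical.propDecidable

/-- The graph `G_τ` on the vertex set `V₁ ⊕ V₂` (disjoint union) whose edge set is
`E₁ ∪ E₂ ∪ {{σ₀, τ}}`. -/
def GraphTau {V₁ V₂ : Type*} (G₁ : SimpleGraph V₁) (G₂ : SimpleGraph V₂)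
    (σ₀ : V₁) (τ : V₂) : SimpleGraph (V₁ ⊕ V₂) where
  Adj u v :=
    match u, v with
    | Sum.inl a, Sum.inl b => G₁.Adj a b
    | Sum.inr a, Sum.inr b => G₂.Adj a b
    | Sum.inl a, Sum.inr b => a = σ₀ ∧ b = τ
    | Sum.inr a, Sum.inl b => b = σ₀ ∧ a = τ
  symm := ⟨by
    rintro (a | a) (b | b) hab
    · exact G₁.adj_symm hab
    · exact hab
    · exact hab
    · exact G₂.adj_symm hab⟩
  loopless := ⟨by
    rintro (a | a) hab
    · exact G₁.ne_of_adj hab rfl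
    · exact G₂.ne_of_adj hab rfl⟩

section Aux
variable {V₁ V₂ : Type*} [Fintype V₁] [Fintype V₂]
  (G₁ : SimpleGraph V₁) (G₂ : SimpleGraph V₂) (σ₀ : V₁) (τ : V₂)

lemma iso_degree_eq {V W : Type*} {G : SimpleGraph V} {H : SimpleGraph W}
    [Fintype V] [Fintype W] (f : G ≃g H) (v : V) : H.degree (f v) = G.degree v := by
  rw [← SimpleGraph.card_neighborSet_eq_degree, ← SimpleGraph.card_neighborSet_eq_degree]
  exact (Fintype.card_congr (f.mapNeighborSet v)).symm

lemma graphTau_neighborFinset_inl (v : V₁) :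
    (GraphTau G₁ G₂ σ₀ τ).neighborFinset (Sum.inl v) =
      (G₁.neighborFinset v).image Sum.inl ∪ (if v = σ₀ then {Sum.inr τ} else ∅) := by
  ext u
  rcases u with a | a
  · simp only [SimpleGraph.mem_neighborFinset, Finset.mem_union, Finset.mem_image]
    constructor
    · intro h
      exact Or.inl ⟨a, h, rfl⟩
    · rintro (⟨x, hx, hxe⟩ | h)
      · cases hxe
        exact hx
      · split at h <;> simp_all
  · simp only [SimpleGraph.mem_neighborFinset, Finset.mem_union, Finset.mem_image]
    show (v = σ₀ ∧ a = τ) ↔ _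
    constructor
    · rintro ⟨rfl, rfl⟩
      simp
    · rintro (⟨x, _, hxe⟩ | h)
      · exact absurd hxe (by simp)
      · split at h <;> simp_all

lemma graphTau_degree_inl (v : V₁) :
    (GraphTau G₁ G₂ σ₀ τ).degree (Sum.inl v) =
      G₁.degree v + if v = σ₀ then 1 else 0 := by
  rw [← SimpleGraph.card_neighborFinset_eq_degree, graphTau_neighborFinset_inl,
    Finset.card_union_of_disjoint, Finset.card_image_of_injective _ Sum.inl_injective,
    SimpleGraph.card_neighborFinset_eq_degree]
  · split <;> simp
  · split
    · simp
    · simp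

end Aux

/-- Let `G₁, G₂` be graphs on disjoint vertex sets of the same cardinality `n > 1`, let `σ₀`
be a vertex of maximal degree `d₀` in `G₁`, assume `G₁` is connected and every vertex of `G₂`
has degree at most `d₀`. Then `G₁` and `G₂` are isomorphic if and only if there is a vertex
`τ` of degree `d₀` in `G₂` such that `σ₀` and `τ` are automorphism equivalent in `G_τ`. -/
theorem isomorphic_iff_exists_automorphism_equivalent
    {V₁ V₂ : Type*} [Fintype V₁] [Fintype V₂]
    (G₁ : SimpleGraph V₁) (G₂ : SimpleGraph V₂)
    (n : ℕ) (hn : 1 < n) (hcard₁ : Fintype.card V₁ = n) (hcard₂ : Fintype.card V₂ = n)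
    (σ₀ : V₁) (d₀ : ℕ) (hσ₀ : G₁.degree σ₀ = d₀) (hmax : ∀ v : V₁, G₁.degree v ≤ d₀)
    (hconn : G₁.Connected) (hdeg₂ : ∀ v : V₂, G₂.degree v ≤ d₀) :
    Nonempty (G₁ ≃g G₂) ↔
      ∃ τ : V₂, G₂.degree τ = d₀ ∧
        ∃ π : GraphTau G₁ G₂ σ₀ τ ≃g GraphTau G₁ G₂ σ₀ τ,
          π (Sum.inl σ₀) = Sum.inr τ := by
  constructor
  · rintro ⟨f⟩
    refine ⟨f σ₀, ?_, ?_⟩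
    · rw [iso_degree_eq f σ₀]; exact hσ₀
    · refine ⟨⟨⟨fun u => match u with
          | Sum.inl a => Sum.inr (f.toEquiv a)
          | Sum.inr b => Sum.inl (f.toEquiv.symm b),
        fun u => match u with
          | Sum.inl a => Sum.inr (f.toEquiv a)
          | Sum.inr b => Sum.inl (f.toEquiv.symm b),
        by
          rintro (a | b)
          · exact congrArg Sum.inl (f.toEquiv.symm_apply_apply a)
          · exact congrArg Sum.inr (f.toEquiv.apply_symm_apply b),
        by
          rintro (a | b)
          · exact congrArg Sum.inl (f.toEquiv.symm_apply_apply a)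
          · exact congrArg Sum.inr (f.toEquiv.apply_symm_apply b)⟩, ?_⟩, rfl⟩
      rintro (a | a) (b | b)
      · exact f.map_adj_iff
      · show (f.toEquiv.symm b = σ₀ ∧ f.toEquiv a = f σ₀) ↔ (a = σ₀ ∧ b = f σ₀)
        constructor
        · rintro ⟨h1, h2⟩
          exact ⟨f.toEquiv.injective h2, (f.toEquiv.symm_apply_eq).1 h1⟩
        · rintro ⟨rfl, rfl⟩
          exact ⟨f.toEquiv.symm_apply_apply _, rfl⟩
      · show (f.toEquiv.symm a = σ₀ ∧ f.toEquiv b = f σ₀) ↔ (b = σ₀ ∧ a = f σ₀)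
        constructor
        · rintro ⟨h1, h2⟩
          exact ⟨f.toEquiv.injective h2, (f.toEquiv.symm_apply_eq).1 h1⟩
        · rintro ⟨rfl, rfl⟩
          exact ⟨f.toEquiv.symm_apply_apply _, rfl⟩
      · exact f.symm.map_adj_iff
  · rintro ⟨τ, hτ, π, hπ⟩
    have step : ∀ x y : V₁, G₁.Adj x y → (∃ b, π (Sum.inl x) = Sum.inr b) →
        ∃ b, π (Sum.inl y) = Sum.inr b := by
      rintro x y hxy ⟨b, hb⟩
      have hadj : (GraphTau G₁ G₂ σ₀ τ).Adj (π (Sum.inl x)) (π (Sum.inl y)) :=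
        π.map_adj_iff.2 (show (GraphTau G₁ G₂ σ₀ τ).Adj (Sum.inl x) (Sum.inl y) from hxy)
      rcases hy : π (Sum.inl y) with c | c
      · exfalso
        rw [hb, hy] at hadj
        obtain ⟨hc, hbτ⟩ := hadj
        rw [hc] at hy
        have hyne : y ≠ σ₀ := by
          rintro rfl
          rw [hπ] at hy
          simp at hy
        have hdeg := iso_degree_eq π (Sum.inl y)
        rw [hy, graphTau_degree_inl, graphTau_degree_inl] at hdeg
        rw [if_pos rfl, if_neg hyne, hσ₀, add_zero] at hdeg
        have := hmax y
        omega
      · exact ⟨c, rfl⟩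
    have key : ∀ (x a : V₁) (_ : G₁.Walk x a), (∃ b, π (Sum.inl x) = Sum.inr b) →
        ∃ b, π (Sum.inl a) = Sum.inr b := by
      intro x a w
      induction w with
      | nil => exact id
      | cons h p ih => exact fun hx => ih (step _ _ h hx)
    have key' : ∀ a : V₁, ∃ b, π (Sum.inl a) = Sum.inr b := fun a =>
      key σ₀ a (hconn.preconnected σ₀ a).some ⟨τ, hπ⟩
    set g : V₁ → V₂ := fun a => (key' a).choose with hgdef
    have hg : ∀ a, π (Sum.inl a) = Sum.inr (g a) := fun a => (key' a).choose_spec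
    have hginj : Function.Injective g := by
      intro a a' h
      have : π (Sum.inl a) = π (Sum.inl a') := by rw [hg a, hg a', h]
      exact Sum.inl_injective (π.injective this)
    have hgbij : Function.Bijective g :=
      (Fintype.bijective_iff_injective_and_card g).2 ⟨hginj, by rw [hcard₁, hcard₂]⟩
    refine ⟨⟨Equiv.ofBijective g hgbij, ?_⟩⟩
    intro a b
    have h2 : (GraphTau G₁ G₂ σ₀ τ).Adj (π (Sum.inl a)) (π (Sum.inl b)) ↔
        (GraphTau G₁ G₂ σ₀ τ).Adj (Sum.inl a) (Sum.inl b) := π.map_adj_iff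
    rw [hg a, hg b] at h2
    exact h2
end

section
/- If t ↦ X(t) is a solution of the system on an interval J ⊆ ℝ, then the total energy E_k(X′(t)) + E_p(X(t)) is constant on J: for all t, t' ∈ J, E_k(X′(t)) + E_p(X(t)) = E_k(X′(t')) + E_p(X(t')). -/
open scoped RealInnerProductSpace

/-- The force acting on the `i`-th point of a configuration `X` of `m` points of `ℝ^m`,
for the adjacency matrix `h`:  `F_i(X) = ∑_{k ≠ i} (x_i − x_k)·(1/‖x_i − x_k‖² − h_{ik})`. -/
noncomputable def force (m : ℕ) (h : Matrix (Fin m) (Fin m) ℝ)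
    (X : Fin m → EuclideanSpace ℝ (Fin m)) (i : Fin m) : EuclideanSpace ℝ (Fin m) :=
  ∑ k ∈ Finset.univ.filter (fun k => k ≠ i), (1 / ‖X i - X k‖ ^ 2 - h i k) • (X i - X k)

/-- `X : ℝ → (ℝ^m)^m` is a solution of the system `x_i″ = F_i(X)` on the set `S ⊆ ℝ`:
its points are pairwise distinct at every `t ∈ S`, it is differentiable at every `t ∈ S`,
and its velocity `deriv` has derivative `F_i(X(t))` at every `t ∈ S`. -/
def IsSolution (m : ℕ) (h : Matrix (Fin m) (Fin m) ℝ) (S : Set ℝ)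
    (X : ℝ → Fin m → EuclideanSpace ℝ (Fin m)) : Prop :=
  (∀ t ∈ S, ∀ i k : Fin m, i ≠ k → X t i ≠ X t k) ∧
  (∀ i : Fin m, ∀ t ∈ S, DifferentiableAt ℝ (fun s => X s i) t) ∧
  (∀ i : Fin m, ∀ t ∈ S, HasDerivAt (deriv (fun s => X s i)) (force m h (X t) i) t)

/-- Kinetic energy of a tuple of velocities: `E_k(Y) = (1/2) ∑_r ‖y_r‖²`. -/
noncomputable def kineticEnergy (m : ℕ) (Y : Fin m → EuclideanSpace ℝ (Fin m)) : ℝ :=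
  (1 / 2) * ∑ r, ‖Y r‖ ^ 2

/-- Potential energy of a configuration:
`E_p(X) = −(1/2) ∑_{r<s} (log ‖x_r − x_s‖² − h_{rs}‖x_r − x_s‖²)`. -/
noncomputable def potentialEnergy (m : ℕ) (h : Matrix (Fin m) (Fin m) ℝ)
    (X : Fin m → EuclideanSpace ℝ (Fin m)) : ℝ :=
  -(1 / 2) * ∑ p ∈ Finset.univ.filter (fun p : Fin m × Fin m => p.1 < p.2),
      (Real.log (‖X p.1 - X p.2‖ ^ 2) - h p.1 p.2 * ‖X p.1 - X p.2‖ ^ 2)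

/-- Splitting a sum over off-diagonal ordered pairs into a sum over unordered pairs. -/
lemma pair_sum_aux {m : ℕ} (f : Fin m → Fin m → ℝ) :
    ∑ r, ∑ k ∈ Finset.univ.filter (fun k => k ≠ r), f r k
      = ∑ r, ∑ k, if r < k then f r k + f k r else 0 := by
  have h1 : ∀ r, ∑ k ∈ Finset.univ.filter (fun k => k ≠ r), f r k
      = ∑ k, ((if r < k then f r k else 0) + (if k < r then f r k else 0)) := by
    intro r
    rw [Finset.sum_filter]
    refine Finset.sum_congr rfl fun k _ => ?_
    rcases lt_trichotomy r k with hlt | heq | hgt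
    · simp [hlt, hlt.ne', not_lt_of_gt hlt]
    · simp [heq]
    · simp [hgt, hgt.ne, not_lt_of_gt hgt]
  simp_rw [h1, Finset.sum_add_distrib]
  rw [Finset.sum_comm (f := fun r k => if k < r then f r k else 0)]
  simp_rw [← Finset.sum_add_distrib, ite_add_ite, add_zero]

/-- A sum over ordered pairs `p.1 < p.2` as a double sum. -/
lemma pair_sum_aux2 {m : ℕ} (W : Fin m → Fin m → ℝ) :
    ∑ p ∈ Finset.univ.filter (fun p : Fin m × Fin m => p.1 < p.2), W p.1 p.2
      = ∑ r, ∑ k, if r < k then W r k else 0 := by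
  rw [Finset.sum_filter, Fintype.sum_prod_type]

/-- Energy conservation: along a solution of the system on an interval `J ⊆ ℝ`, the total
energy `E_k(X′(t)) + E_p(X(t))` is constant. -/
theorem energy_conservation (m : ℕ) (hm : 2 ≤ m) (h : Matrix (Fin m) (Fin m) ℝ)
    (hsymm : ∀ i k, h i k = h k i) (hdiag : ∀ i, h i i = 0)
    (h01 : ∀ i k, h i k = 0 ∨ h i k = 1)
    (J : Set ℝ) (hJ : J.OrdConnected)
    (X : ℝ → Fin m → EuclideanSpace ℝ (Fin m)) (hX : IsSolution m h J X) :
    ∀ t ∈ J, ∀ t' ∈ J,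
      kineticEnergy m (fun i => deriv (fun s => X s i) t) + potentialEnergy m h (X t) =
        kineticEnergy m (fun i => deriv (fun s => X s i) t') + potentialEnergy m h (X t') := by
  obtain ⟨hdist, hdiff, hforce⟩ := hX
  -- the main derivative computation, for an abstract velocity field `v`
  have key0 : ∀ (v : Fin m → ℝ → EuclideanSpace ℝ (Fin m)), ∀ t ∈ J,
      (∀ i, HasDerivAt (fun s => X s i) (v i t) t) →
      (∀ i, HasDerivAt (v i) (force m h (X t) i) t) →
      HasDerivAt (fun s => kineticEnergy m (fun i => v i s) + potentialEnergy m h (X s))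
        (0 : ℝ) t := by
    intro v t ht hxd hvd
    -- kinetic energy derivative
    have hK : HasDerivAt (fun s => kineticEnergy m (fun i => v i s))
        ((1/2) * ∑ r, (⟪v r t, force m h (X t) r⟫ + ⟪force m h (X t) r, v r t⟫)) t := by
      unfold kineticEnergy
      exact HasDerivAt.const_mul _ (HasDerivAt.fun_sum fun r _ => by
        have := (hvd r).inner (𝕜 := ℝ) (hvd r)
        simp only [real_inner_self_eq_norm_sq] at this
        exact this)
    -- potential energy derivative
    have hP : HasDerivAt (fun s => potentialEnergy m h (X s))
        (-(1/2) * ∑ p ∈ Finset.univ.filter (fun p : Fin m × Fin m => p.1 < p.2),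
          ((⟪X t p.1 - X t p.2, v p.1 t - v p.2 t⟫ + ⟪v p.1 t - v p.2 t, X t p.1 - X t p.2⟫)
              / ‖X t p.1 - X t p.2‖ ^ 2
            - h p.1 p.2 * (⟪X t p.1 - X t p.2, v p.1 t - v p.2 t⟫
                + ⟪v p.1 t - v p.2 t, X t p.1 - X t p.2⟫))) t := by
      unfold potentialEnergy
      refine HasDerivAt.const_mul _ (HasDerivAt.fun_sum fun p hp => ?_)
      have hplt : p.1 < p.2 := (Finset.mem_filter.1 hp).2
      have hne : X t p.1 ≠ X t p.2 := hdist t ht _ _ hplt.ne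
      have hd : HasDerivAt (fun s => X s p.1 - X s p.2) (v p.1 t - v p.2 t) t :=
        (hxd p.1).sub (hxd p.2)
      have hn2 : HasDerivAt (fun s => ‖X s p.1 - X s p.2‖ ^ 2)
          (⟪X t p.1 - X t p.2, v p.1 t - v p.2 t⟫
            + ⟪v p.1 t - v p.2 t, X t p.1 - X t p.2⟫) t := by
        have := hd.inner (𝕜 := ℝ) hd
        simp only [real_inner_self_eq_norm_sq] at this
        exact this
      have hnz : ‖X t p.1 - X t p.2‖ ^ 2 ≠ 0 :=
        pow_ne_zero _ (norm_ne_zero_iff.2 (sub_ne_zero.2 hne))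
      exact (hn2.log hnz).sub (hn2.const_mul _)
    have hsum := hK.add hP
    -- the derivative value is zero
    have e1 : ∀ r, ⟪v r t, force m h (X t) r⟫ + ⟪force m h (X t) r, v r t⟫
        = ∑ k ∈ Finset.univ.filter (fun k => k ≠ r),
            2 * ((1 / ‖X t r - X t k‖ ^ 2 - h r k) * ⟪X t r - X t k, v r t⟫) := by
      intro r
      rw [real_inner_comm (v r t), ← two_mul, force, inner_sum, Finset.mul_sum]
      exact Finset.sum_congr rfl fun k _ => by
        rw [real_inner_smul_right, real_inner_comm (v r t)]
    have e2 : ∑ r, (⟪v r t, force m h (X t) r⟫ + ⟪force m h (X t) r, v r t⟫)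
        = ∑ r, ∑ k, if r < k then
            2 * ((1 / ‖X t r - X t k‖ ^ 2 - h r k) * ⟪X t r - X t k, v r t⟫)
              + 2 * ((1 / ‖X t k - X t r‖ ^ 2 - h k r) * ⟪X t k - X t r, v k t⟫) else 0 := by
      simp_rw [e1]
      exact pair_sum_aux
        (fun r k => 2 * ((1 / ‖X t r - X t k‖ ^ 2 - h r k) * ⟪X t r - X t k, v r t⟫))
    have e3 : ∑ p ∈ Finset.univ.filter (fun p : Fin m × Fin m => p.1 < p.2),
          ((⟪X t p.1 - X t p.2, v p.1 t - v p.2 t⟫ + ⟪v p.1 t - v p.2 t, X t p.1 - X t p.2⟫)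
              / ‖X t p.1 - X t p.2‖ ^ 2
            - h p.1 p.2 * (⟪X t p.1 - X t p.2, v p.1 t - v p.2 t⟫
                + ⟪v p.1 t - v p.2 t, X t p.1 - X t p.2⟫))
        = ∑ r, ∑ k, if r < k then
            ((⟪X t r - X t k, v r t - v k t⟫ + ⟪v r t - v k t, X t r - X t k⟫)
                / ‖X t r - X t k‖ ^ 2
              - h r k * (⟪X t r - X t k, v r t - v k t⟫
                  + ⟪v r t - v k t, X t r - X t k⟫)) else 0 :=
      pair_sum_aux2 (fun r k =>
        (⟪X t r - X t k, v r t - v k t⟫ + ⟪v r t - v k t, X t r - X t k⟫) / ‖X t r - X t k‖ ^ 2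
          - h r k * (⟪X t r - X t k, v r t - v k t⟫ + ⟪v r t - v k t, X t r - X t k⟫))
    have e4 : ∀ r k : Fin m, r < k →
        2 * ((1 / ‖X t r - X t k‖ ^ 2 - h r k) * ⟪X t r - X t k, v r t⟫)
          + 2 * ((1 / ‖X t k - X t r‖ ^ 2 - h k r) * ⟪X t k - X t r, v k t⟫)
        = (⟪X t r - X t k, v r t - v k t⟫ + ⟪v r t - v k t, X t r - X t k⟫)
              / ‖X t r - X t k‖ ^ 2
            - h r k * (⟪X t r - X t k, v r t - v k t⟫
                + ⟪v r t - v k t, X t r - X t k⟫) := by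
      intro r k hrk
      have hne : X t r ≠ X t k := hdist t ht _ _ hrk.ne
      have hnz : ‖X t r - X t k‖ ^ 2 ≠ 0 :=
        pow_ne_zero _ (norm_ne_zero_iff.2 (sub_ne_zero.2 hne))
      rw [hsymm k r, norm_sub_rev (X t k)]
      simp only [inner_sub_left, inner_sub_right, real_inner_comm (v r t),
        real_inner_comm (v k t)]
      field_simp
      ring
    have hval : (1/2) * (∑ r, (⟪v r t, force m h (X t) r⟫ + ⟪force m h (X t) r, v r t⟫))
        + (-(1/2) * ∑ p ∈ Finset.univ.filter (fun p : Fin m × Fin m => p.1 < p.2),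
          ((⟪X t p.1 - X t p.2, v p.1 t - v p.2 t⟫ + ⟪v p.1 t - v p.2 t, X t p.1 - X t p.2⟫)
              / ‖X t p.1 - X t p.2‖ ^ 2
            - h p.1 p.2 * (⟪X t p.1 - X t p.2, v p.1 t - v p.2 t⟫
                + ⟪v p.1 t - v p.2 t, X t p.1 - X t p.2⟫))) = 0 := by
      rw [e2, e3]
      have : (∑ r, ∑ k, if r < k then
            2 * ((1 / ‖X t r - X t k‖ ^ 2 - h r k) * ⟪X t r - X t k, v r t⟫)
              + 2 * ((1 / ‖X t k - X t r‖ ^ 2 - h k r) * ⟪X t k - X t r, v k t⟫) else 0)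
          = ∑ r, ∑ k, if r < k then
            ((⟪X t r - X t k, v r t - v k t⟫ + ⟪v r t - v k t, X t r - X t k⟫)
                / ‖X t r - X t k‖ ^ 2
              - h r k * (⟪X t r - X t k, v r t - v k t⟫
                  + ⟪v r t - v k t, X t r - X t k⟫)) else 0 :=
        Finset.sum_congr rfl fun r _ => Finset.sum_congr rfl fun k _ => by
          by_cases hrk : r < k
          · rw [if_pos hrk, if_pos hrk, e4 r k hrk]
          · rw [if_neg hrk, if_neg hrk]
      rw [this]
      ring
    rw [hval] at hsum
    exact hsum
  have key : ∀ t ∈ J, HasDerivAt (fun s =>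
      kineticEnergy m (fun i => deriv (fun u => X u i) s) + potentialEnergy m h (X s))
      (0 : ℝ) t := fun t ht =>
    key0 (fun i => deriv (fun u => X u i)) t ht
      (fun i => (hdiff i t ht).hasDerivAt) (fun i => hforce i t ht)
  -- constancy on the order-connected set
  set E : ℝ → ℝ := fun s =>
    kineticEnergy m (fun i => deriv (fun u => X u i) s) + potentialEnergy m h (X s) with hE
  have main : ∀ a ∈ J, ∀ b ∈ J, a ≤ b → E b = E a := by
    intro a ha b hb hab
    have hsub : Set.Icc a b ⊆ J := hJ.out ha hb
    have hc : ContinuousOn E (Set.Icc a b) := fun x hx =>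
      ((key x (hsub hx)).continuousAt).continuousWithinAt
    exact constant_of_has_deriv_right_zero hc
      (fun x hx => ((key x (hsub (Set.mem_Icc_of_Ico hx))).hasDerivWithinAt))
      b (Set.right_mem_Icc.2 hab)
  intro t ht t' ht'
  rcases le_total t t' with hle | hle
  · exact (main t ht t' ht' hle).symm
  · exact main t' ht' t ht hle
end

section
/- The system is Hamiltonian: the potential energy E_p is differentiable at every configuration X with pairwise distinct points, and for each index i and each coordinate j the partial derivative of E_p with respect to the j-th coordinate of the i-th point equals −(F_i(X))_j, i.e. the force is the negative gradient of the potential energy. -/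
open scoped RealInnerProductSpace


/-- The system is Hamiltonian: the potential energy is differentiable at every configuration
with pairwise distinct points, and the partial derivative of `E_p` with respect to the `j`-th
coordinate of the `i`-th point equals `−(F_i(X))_j`. -/
theorem force_is_neg_grad_potential (m : ℕ) (hm : 2 ≤ m) (h : Matrix (Fin m) (Fin m) ℝ)
    (hsymm : ∀ i k, h i k = h k i) (hdiag : ∀ i, h i i = 0)
    (h01 : ∀ i k, h i k = 0 ∨ h i k = 1)
    (X : Fin m → EuclideanSpace ℝ (Fin m)) (hX : ∀ i k : Fin m, i ≠ k → X i ≠ X k) :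
    DifferentiableAt ℝ (potentialEnergy m h) X ∧
      ∀ i j : Fin m,
        fderiv ℝ (potentialEnergy m h) X (Pi.single i (EuclideanSpace.single j 1)) =
          -(force m h X i j) := by
  set P : Finset (Fin m × Fin m) :=
    Finset.univ.filter (fun p : Fin m × Fin m => p.1 < p.2) with hP
  set L : Fin m × Fin m → ((Fin m → EuclideanSpace ℝ (Fin m)) →L[ℝ] EuclideanSpace ℝ (Fin m)) :=
    fun p => (ContinuousLinearMap.proj p.1 : (Fin m → EuclideanSpace ℝ (Fin m)) →L[ℝ] _)
      - ContinuousLinearMap.proj p.2 with hLdef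
  set D : (Fin m → EuclideanSpace ℝ (Fin m)) →L[ℝ] ℝ :=
    (-(1/2) : ℝ) • ∑ p ∈ P,
        ((‖X p.1 - X p.2‖ ^ 2)⁻¹ •
            (2 • (innerSL ℝ (X p.1 - X p.2)).comp (L p)) -
          h p.1 p.2 • (2 • (innerSL ℝ (X p.1 - X p.2)).comp (L p))) with hD
  have key : ∀ p ∈ P,
      HasFDerivAt (fun Y : Fin m → EuclideanSpace ℝ (Fin m) =>
          Real.log (‖Y p.1 - Y p.2‖ ^ 2) - h p.1 p.2 * ‖Y p.1 - Y p.2‖ ^ 2)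
        ((‖X p.1 - X p.2‖ ^ 2)⁻¹ •
            (2 • (innerSL ℝ (X p.1 - X p.2)).comp (L p)) -
          h p.1 p.2 • (2 • (innerSL ℝ (X p.1 - X p.2)).comp (L p))) X := by
    intro p hp
    simp only [hP, Finset.mem_filter, Finset.mem_univ, true_and] at hp
    have hne : X p.1 ≠ X p.2 := hX _ _ hp.ne
    have hd : X p.1 - X p.2 ≠ 0 := sub_ne_zero.mpr hne
    have hd' : (0:ℝ) < ‖X p.1 - X p.2‖ := norm_pos_iff.mpr hd
    have hpos : (0:ℝ) < ‖X p.1 - X p.2‖ ^ 2 := by positivity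
    have hL : HasFDerivAt (fun Y : Fin m → EuclideanSpace ℝ (Fin m) => Y p.1 - Y p.2)
        (L p) X := (L p).hasFDerivAt
    have hn := hL.norm_sq
    have hlog := (Real.hasDerivAt_log hpos.ne').comp_hasFDerivAt X hn
    exact hlog.sub (hn.const_mul _)
  have hDeriv : HasFDerivAt (potentialEnergy m h) D X := by
    have := (HasFDerivAt.fun_sum key).const_mul (-(1/2) : ℝ)
    exact this
  refine ⟨hDeriv.differentiableAt, fun i j => ?_⟩
  rw [hDeriv.fderiv]
  set u : Fin m → EuclideanSpace ℝ (Fin m) := Pi.single i (EuclideanSpace.single j 1) with hu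
  have hLu : ∀ p : Fin m × Fin m,
      ⟪X p.1 - X p.2, L p u⟫ =
        (if p.1 = i then (X p.1 - X p.2) j else 0)
          - (if p.2 = i then (X p.1 - X p.2) j else 0) := by
    intro p
    have hLuv : L p u = u p.1 - u p.2 := rfl
    rw [hLuv, inner_sub_right, hu]
    congr 1 <;>
    · rw [Pi.single_apply]
      split_ifs <;> simp [EuclideanSpace.inner_single_right]
  have happ : ∀ p : Fin m × Fin m,
      ((‖X p.1 - X p.2‖ ^ 2)⁻¹ • (2 • (innerSL ℝ (X p.1 - X p.2)).comp (L p)) -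
        h p.1 p.2 • (2 • (innerSL ℝ (X p.1 - X p.2)).comp (L p))) u
      = ((‖X p.1 - X p.2‖ ^ 2)⁻¹ - h p.1 p.2) * (2 * ⟪X p.1 - X p.2, L p u⟫) := by
    intro p
    simp only [ContinuousLinearMap.sub_apply, ContinuousLinearMap.smul_apply,
      ContinuousLinearMap.comp_apply, innerSL_apply_apply, smul_eq_mul, nsmul_eq_mul, Nat.cast_ofNat]
    ring
  have hDval : D u = ∑ p ∈ P,
      ((if p.1 = i then
          -((1 / ‖X p.1 - X p.2‖ ^ 2 - h p.1 p.2) * ((X p.1 - X p.2) j)) else 0)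
        + (if p.2 = i then
          (1 / ‖X p.1 - X p.2‖ ^ 2 - h p.1 p.2) * ((X p.1 - X p.2) j) else 0)) := by
    rw [hD, ContinuousLinearMap.smul_apply, ContinuousLinearMap.sum_apply, smul_eq_mul,
      Finset.mul_sum]
    refine Finset.sum_congr rfl fun p hp => ?_
    rw [happ p, hLu p]
    split_ifs <;> ring
  rw [hDval]
  -- now the combinatorial part
  have hforce : force m h X i j = ∑ k ∈ Finset.univ.filter (fun k => k ≠ i),
      (1 / ‖X i - X k‖ ^ 2 - h i k) * ((X i - X k) j) := by
    rw [force, show (∑ k ∈ Finset.univ.filter (fun k => k ≠ i),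
        (1 / ‖X i - X k‖ ^ 2 - h i k) • (X i - X k)) j
      = EuclideanSpace.proj (𝕜 := ℝ) j (∑ k ∈ Finset.univ.filter (fun k => k ≠ i),
        (1 / ‖X i - X k‖ ^ 2 - h i k) • (X i - X k)) from rfl, map_sum]
    simp
  rw [hforce]
  have hsplit : Finset.univ.filter (fun k : Fin m => k ≠ i)
      = (Finset.univ.filter (fun k : Fin m => i < k))
        ∪ (Finset.univ.filter (fun k : Fin m => k < i)) := by
    ext k
    simp only [Finset.mem_filter, Finset.mem_univ, true_and, Finset.mem_union,
      Fin.lt_def, Ne, Fin.ext_iff]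
    omega
  have hdisj : Disjoint (Finset.univ.filter (fun k : Fin m => i < k))
      (Finset.univ.filter (fun k : Fin m => k < i)) := by
    rw [Finset.disjoint_left]
    intro a ha hb
    simp only [Finset.mem_filter, Finset.mem_univ, true_and] at ha hb
    exact absurd (ha.trans hb) (lt_irrefl i)
  rw [hsplit, Finset.sum_union hdisj, Finset.sum_add_distrib,
    ← Finset.sum_filter, ← Finset.sum_filter, neg_add,
    ← Finset.sum_neg_distrib, ← Finset.sum_neg_distrib]
  congr 1
  · refine Finset.sum_bij' (fun p _ => p.2) (fun k _ => (i, k)) ?_ ?_ ?_ ?_ ?_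
    · intro p hp
      simp only [hP, Finset.mem_filter, Finset.mem_univ, true_and] at hp ⊢
      exact hp.2 ▸ hp.1
    · intro k hk
      simp only [hP, Finset.mem_filter, Finset.mem_univ, true_and] at hk ⊢
      exact ⟨hk, trivial⟩
    · intro p hp
      simp only [hP, Finset.mem_filter, Finset.mem_univ, true_and] at hp
      exact Prod.ext hp.2.symm rfl
    · intro k _; rfl
    · intro p hp
      simp only [hP, Finset.mem_filter, Finset.mem_univ, true_and] at hp
      rw [hp.2]
  · refine Finset.sum_bij' (fun p _ => p.1) (fun k _ => (k, i)) ?_ ?_ ?_ ?_ ?_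
    · intro p hp
      simp only [hP, Finset.mem_filter, Finset.mem_univ, true_and] at hp ⊢
      exact hp.2 ▸ hp.1
    · intro k hk
      simp only [hP, Finset.mem_filter, Finset.mem_univ, true_and] at hk ⊢
      exact ⟨hk, trivial⟩
    · intro p hp
      simp only [hP, Finset.mem_filter, Finset.mem_univ, true_and] at hp
      exact Prod.ext rfl hp.2.symm
    · intro k _; rfl
    · intro p hp
      simp only [hP, Finset.mem_filter, Finset.mem_univ, true_and] at hp
      rw [hp.2]
      have h1 : ‖X p.1 - X i‖ = ‖X i - X p.1‖ := norm_sub_rev _ _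
      have h2 : (X p.1 - X i) j = -((X i - X p.1) j) := by
        rw [PiLp.sub_apply, PiLp.sub_apply]; ring
      rw [h1, h2, hsymm p.1 i]
      ring
end

section
/- Let π be a permutation of {1, …, m} with h_{π(i)π(k)} = h_{ik} for all i, k (an automorphism of the adjacency matrix). If t ↦ X(t) is a solution of the system on ℝ with initial conditions x_i(0) = e_i (the i-th standard basis vector of ℝ^m) and x_i′(0) = 0 for all i, then the map t ↦ Y(t) defined by y_i(t)(j) = x_{π(i)}(t)(π(j)) is also a solution of the system on ℝ with the same initial conditions y_i(0) = e_i and y_i′(0) = 0. -/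
/-- The linear isometry of `ℝ^m` permuting coordinates by `π`: `(L v)(j) = v(π j)`. -/
noncomputable def permIso (m : ℕ) (π : Equiv.Perm (Fin m)) :
    EuclideanSpace ℝ (Fin m) ≃ₗᵢ[ℝ] EuclideanSpace ℝ (Fin m) :=
  LinearIsometryEquiv.piLpCongrLeft 2 ℝ ℝ π.symm

lemma permIso_apply (m : ℕ) (π : Equiv.Perm (Fin m)) (v : EuclideanSpace ℝ (Fin m))
    (j : Fin m) : permIso m π v j = v (π j) := by
  simp [permIso, LinearIsometryEquiv.piLpCongrLeft_apply, Equiv.piCongrLeft']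

lemma permIso_hasDerivAt (m : ℕ) (π : Equiv.Perm (Fin m))
    {f : ℝ → EuclideanSpace ℝ (Fin m)} {f' : EuclideanSpace ℝ (Fin m)} {t : ℝ}
    (hf : HasDerivAt f f' t) :
    HasDerivAt (fun s => permIso m π (f s)) (permIso m π f') t :=
  ((permIso m π).toContinuousLinearEquiv.toContinuousLinearMap.hasFDerivAt).comp_hasDerivAt t hf

/-- Equivariance of the force under the coordinate/index permutation. -/
lemma force_perm (m : ℕ) (h : Matrix (Fin m) (Fin m) ℝ) (π : Equiv.Perm (Fin m))
    (hπ : ∀ i k, h (π i) (π k) = h i k) (X : Fin m → EuclideanSpace ℝ (Fin m)) (i : Fin m) :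
    force m h (fun r => permIso m π (X (π r))) i = permIso m π (force m h X (π i)) := by
  unfold force
  rw [map_sum]
  refine Finset.sum_equiv π ?_ ?_
  · intro k
    simp [Equiv.apply_eq_iff_eq]
  · intro k hk
    rw [← map_sub, map_smul, LinearIsometryEquiv.norm_map, hπ]

/-- If `π` is an automorphism of the adjacency matrix `h` and `X` is a solution of the system
on `ℝ` with initial conditions `x_i(0) = e_i`, `x_i′(0) = 0`, then
`Y` defined by `y_i(t)(j) = x_{π(i)}(t)(π(j))` is also a solution of the system on `ℝ`
with the same initial conditions. -/
theorem relabeled_solution_is_solution (m : ℕ) (hm : 2 ≤ m)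
    (h : Matrix (Fin m) (Fin m) ℝ)
    (hsymm : ∀ i k, h i k = h k i) (hdiag : ∀ i, h i i = 0)
    (h01 : ∀ i k, h i k = 0 ∨ h i k = 1)
    (π : Equiv.Perm (Fin m)) (hπ : ∀ i k, h (π i) (π k) = h i k)
    (X : ℝ → Fin m → EuclideanSpace ℝ (Fin m))
    (hX : IsSolution m h Set.univ X)
    (hX0 : ∀ i, X 0 i = EuclideanSpace.single i (1 : ℝ))
    (hX0' : ∀ i, deriv (fun t => X t i) 0 = 0) :
    IsSolution m h Set.univ
        (fun t i => (WithLp.toLp 2 (fun j => X t (π i) (π j)) : EuclideanSpace ℝ (Fin m))) ∧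
      (∀ i, (WithLp.toLp 2 (fun j => X 0 (π i) (π j)) : EuclideanSpace ℝ (Fin m)) =
        EuclideanSpace.single i (1 : ℝ)) ∧
      (∀ i, deriv (fun t => (WithLp.toLp 2 (fun j => X t (π i) (π j)) : EuclideanSpace ℝ (Fin m))) 0 = 0) := by
  obtain ⟨hdist, hdiff, hforce⟩ := hX
  refine ⟨⟨?_, ?_, ?_⟩, ?_, ?_⟩
  · intro t _ i k hik hcontra
    exact hdist t trivial (π i) (π k) (fun e => hik (π.injective e))
      ((permIso m π).injective hcontra)
  · intro i t _
    exact (permIso_hasDerivAt m π ((hdiff (π i) t trivial).hasDerivAt)).differentiableAt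
  · intro i t _
    have h2 := permIso_hasDerivAt m π (hforce (π i) t trivial)
    have h3 : HasDerivAt (deriv (fun s => permIso m π (X s (π i))))
        (permIso m π (force m h (X t) (π i))) t := by
      apply h2.congr_of_eventuallyEq
      filter_upwards with s
      exact (permIso_hasDerivAt m π ((hdiff (π i) s trivial).hasDerivAt)).deriv
    rw [← force_perm m h π hπ (X t) i] at h3
    exact h3
  · intro i
    ext j
    show X 0 (π i) (π j) = EuclideanSpace.single i (1 : ℝ) j
    rw [hX0 (π i)]
    simp [EuclideanSpace.single_apply, Equiv.apply_eq_iff_eq]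
  · intro i
    have hcomp : ∀ j : Fin m, HasDerivAt (fun t => X t (π i) (π j)) 0 0 := by
      intro j
      have h1 : HasDerivAt (fun t => X t (π i)) 0 0 := by
        have := (hdiff (π i) 0 trivial).hasDerivAt
        rwa [hX0' (π i)] at this
      have := ((PiLp.proj 2 (fun _ : Fin m => ℝ) (π j) :
        EuclideanSpace ℝ (Fin m) →L[ℝ] ℝ).hasFDerivAt).comp_hasDerivAt 0 h1
      exact this
    have : HasDerivAt (fun t => (WithLp.toLp 2 (fun j => X t (π i) (π j)) : EuclideanSpace ℝ (Fin m)))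
        (0 : EuclideanSpace ℝ (Fin m)) 0 := by
      have h1 : HasDerivAt (fun t => X t (π i)) 0 0 := by
        have := (hdiff (π i) 0 trivial).hasDerivAt
        rwa [hX0' (π i)] at this
      have h2 := permIso_hasDerivAt m π h1
      rw [map_zero] at h2
      exact h2
    exact this.deriv
end

section
/- Let π be a permutation of {1, …, m} with h_{π(i)π(k)} = h_{ik} for all i, k, and let t ↦ X(t) be a solution of the system on ℝ with initial conditions x_i(0) = e_i and x_i′(0) = 0 for all i. Assume the initial value problem has a unique solution, i.e. every solution of the system on ℝ with these initial conditions equals X. Then for all t ∈ ℝ and all i, j one has x_{π(i)}(t)(π(j)) = x_i(t)(j); in particular, for every vertex i the coordinate tuple x_{π(i)}(t) is a permutation of the coordinate tuple x_i(t), so automorphism-equivalent vertices have permutation-equivalent rows of coordinates at every time. -/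
/-- If `π` is an automorphism of the adjacency matrix `h`, `X` is a solution of the system on
`ℝ` with initial conditions `x_i(0) = e_i`, `x_i′(0) = 0`, and this initial value problem has
a unique solution, then `x_{π(i)}(t)(π(j)) = x_i(t)(j)` for all `t, i, j`; in particular the
row of coordinates of `x_{π(i)}(t)` is a permutation of the row of coordinates of `x_i(t)`. -/
theorem automorphism_rows_permutation_equivalent (m : ℕ) (hm : 2 ≤ m)
    (h : Matrix (Fin m) (Fin m) ℝ)
    (hsymm : ∀ i k, h i k = h k i) (hdiag : ∀ i, h i i = 0)
    (h01 : ∀ i k, h i k = 0 ∨ h i k = 1)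
    (π : Equiv.Perm (Fin m)) (hπ : ∀ i k, h (π i) (π k) = h i k)
    (X : ℝ → Fin m → EuclideanSpace ℝ (Fin m))
    (hX : IsSolution m h Set.univ X)
    (hX0 : ∀ i, X 0 i = EuclideanSpace.single i (1 : ℝ))
    (hX0' : ∀ i, deriv (fun t => X t i) 0 = 0)
    (huniq : ∀ Y : ℝ → Fin m → EuclideanSpace ℝ (Fin m),
      IsSolution m h Set.univ Y → (∀ i, Y 0 i = EuclideanSpace.single i (1 : ℝ)) →
        (∀ i, deriv (fun t => Y t i) 0 = 0) → Y = X) :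
    (∀ t : ℝ, ∀ i j : Fin m, X t (π i) (π j) = X t i j) ∧
      ∀ t : ℝ, ∀ i : Fin m, ∃ σ : Equiv.Perm (Fin m),
        ∀ j : Fin m, X t (π i) (σ j) = X t i j := by
  classical
  have main : ∀ t : ℝ, ∀ i j : Fin m, X t (π i) (π j) = X t i j := by
    classical
    set T : EuclideanSpace ℝ (Fin m) ≃ₗᵢ[ℝ] EuclideanSpace ℝ (Fin m) :=
      LinearIsometryEquiv.piLpCongrLeft 2 ℝ ℝ π.symm with hTdef
    have hTapp : ∀ (f : EuclideanSpace ℝ (Fin m)) (j : Fin m), T f j = f (π j) := by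
      intro f j
      simp [hTdef, LinearIsometryEquiv.piLpCongrLeft_apply]
    set Y : ℝ → Fin m → EuclideanSpace ℝ (Fin m) := fun t i => T (X t (π i)) with hYdef
    -- derivative of Y
    have hdY : ∀ i : Fin m, deriv (fun s => Y s i)
        = fun s => T (deriv (fun s => X s (π i)) s) := by
      intro i
      funext s
      have hd : HasDerivAt (fun s => X s (π i)) (deriv (fun s => X s (π i)) s) s :=
        (hX.2.1 (π i) s trivial).hasDerivAt
      have : HasDerivAt (fun s => T (X s (π i)))
          (T (deriv (fun s => X s (π i)) s)) s :=
        (T.toContinuousLinearEquiv.toContinuousLinearMap.hasFDerivAt).comp_hasDerivAt s hd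
      exact this.deriv
    -- force identity
    have hforce : ∀ t (i : Fin m), force m h (Y t) i = T (force m h (X t) (π i)) := by
      intro t i
      have hre : ∀ g : Fin m → EuclideanSpace ℝ (Fin m),
          ∑ k ∈ Finset.univ.filter (fun k => k ≠ π i), g k
            = ∑ k ∈ Finset.univ.filter (fun k => k ≠ i), g (π k) := by
        intro g
        refine Finset.sum_nbij' (fun k => π.symm k) (fun k => π k) ?_ ?_ ?_ ?_ ?_
        · intro k hk
          simp only [Finset.mem_filter, Finset.mem_univ, true_and] at hk ⊢
          intro hkk; exact hk (by simpa using congrArg π hkk)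
        · intro k hk
          simp only [Finset.mem_filter, Finset.mem_univ, true_and] at hk ⊢
          intro hkk; exact hk (π.injective hkk)
        · intro k _; simp
        · intro k _; simp
        · intro k _; simp
      unfold force
      rw [map_sum, hre (fun k => T ((1 / ‖X t (π i) - X t k‖ ^ 2 - h (π i) k) • (X t (π i) - X t k)))]
      refine Finset.sum_congr rfl fun k hk => ?_
      have h1 : Y t i - Y t k = T (X t (π i) - X t (π k)) := by
        simp [hYdef, map_sub]
      rw [h1, T.norm_map, hπ, ← map_smul]
    have hYsol : IsSolution m h Set.univ Y := by
      refine ⟨?_, ?_, ?_⟩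
      · intro t _ i k hik hEq
        exact hX.1 t trivial (π i) (π k) (fun hc => hik (π.injective hc)) (T.injective hEq)
      · intro i t _
        exact (T.toContinuousLinearEquiv.toContinuousLinearMap.differentiable.differentiableAt).comp
          t (hX.2.1 (π i) t trivial)
      · intro i t _
        rw [hdY i, hforce t i]
        exact (T.toContinuousLinearEquiv.toContinuousLinearMap.hasFDerivAt).comp_hasDerivAt t
          (hX.2.2 (π i) t trivial)
    have hY0 : ∀ i, Y 0 i = EuclideanSpace.single i (1 : ℝ) := by
      intro i
      ext j
      rw [hYdef]
      simp only
      rw [hTapp, hX0]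
      simp [EuclideanSpace.single_apply, Equiv.apply_eq_iff_eq]
    have hY0' : ∀ i, deriv (fun t => Y t i) 0 = 0 := by
      intro i
      rw [hdY i]
      show T (deriv (fun s => X s (π i)) 0) = 0
      rw [hX0' (π i), map_zero]
    have hYX := huniq Y hYsol hY0 hY0'
    intro t i j
    have := congrFun (congrFun hYX t) i
    have h2 := congrArg (fun v => v j) this
    rw [hYdef] at h2
    simp only at h2
    rw [hTapp] at h2
    exact h2
  exact ⟨main, fun t i => ⟨π, fun j => main t i j⟩⟩
end

section
/- Suppose t ↦ X(t) is a solution of the system on the half-open interval [t0, β) with β < +∞. Then the solution together with its velocity is bounded: there exists D > 0 such that for all t ∈ [t0, β), ∑_{r} ‖x_r(t)‖² + ∑_{r} ‖x_r′(t)‖² < D². -/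
open Finset
open scoped RealInnerProductSpace

/-- Summing a function over all ordered pairs of distinct indices equals summing the
symmetrized function over unordered pairs. -/
theorem sum_offdiag_pairs_aux (m : ℕ) (g : Fin m → Fin m → ℝ) :
    ∑ r, ∑ k ∈ Finset.univ.filter (fun k => k ≠ r), g r k
      = ∑ p ∈ Finset.univ.filter (fun p : Fin m × Fin m => p.1 < p.2), (g p.1 p.2 + g p.2 p.1) := by
  have k1 : ∑ p ∈ Finset.univ.filter (fun p : Fin m × Fin m => p.1 < p.2), g p.1 p.2
      = ∑ r, ∑ k, if r < k then g r k else 0 := by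
    rw [Finset.sum_filter]; exact Fintype.sum_prod_type _
  have k2 : ∑ p ∈ Finset.univ.filter (fun p : Fin m × Fin m => p.1 < p.2), g p.2 p.1
      = ∑ r, ∑ k, if r < k then g k r else 0 := by
    rw [Finset.sum_filter]; exact Fintype.sum_prod_type _
  rw [Finset.sum_add_distrib, k1, k2]
  have key : ∀ r : Fin m, ∑ k ∈ Finset.univ.filter (fun k => k ≠ r), g r k
      = (∑ k, if r < k then g r k else 0) + ∑ k, if k < r then g r k else 0 := by
    intro r
    rw [Finset.sum_filter, ← Finset.sum_add_distrib]
    congr 1; funext k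
    rcases lt_trichotomy r k with hc | hc | hc
    · simp [hc, hc.ne', not_lt_of_gt hc]
    · simp [hc]
    · simp [hc, hc.ne, not_lt_of_gt hc]
  simp_rw [key]
  rw [Finset.sum_add_distrib]
  congr 1
  rw [Finset.sum_comm]


/-- A solution of the system on `[t₀, β)` with `β < +∞` is bounded together with its
velocity: there is `D > 0` with `∑_r ‖x_r(t)‖² + ∑_r ‖x_r′(t)‖² < D²` on `[t₀, β)`. -/
theorem solution_bounded_on_Ico (m : ℕ) (hm : 2 ≤ m) (h : Matrix (Fin m) (Fin m) ℝ)
    (hsymm : ∀ i k, h i k = h k i) (hdiag : ∀ i, h i i = 0)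
    (h01 : ∀ i k, h i k = 0 ∨ h i k = 1)
    (t₀ β : ℝ) (X : ℝ → Fin m → EuclideanSpace ℝ (Fin m))
    (hX : IsSolution m h (Set.Ico t₀ β) X) :
    ∃ D > (0 : ℝ), ∀ t ∈ Set.Ico t₀ β,
      (∑ r, ‖X t r‖ ^ 2) + ∑ r, ‖deriv (fun s => X s r) t‖ ^ 2 < D ^ 2 := by
  by_cases hβ : t₀ < β
  case neg =>
    refine ⟨1, one_pos, fun t ht => absurd (lt_of_le_of_lt ht.1 ht.2) hβ⟩
  obtain ⟨hdist, hdiff, hforce⟩ := hX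
  have hv : ∀ i : Fin m, ∀ t ∈ Set.Ico t₀ β,
      HasDerivAt (fun s => X s i) (deriv (fun s => X s i) t) t :=
    fun i t ht => (hdiff i t ht).hasDerivAt
  -- the energy function
  set Eng : ℝ → ℝ := fun u =>
    kineticEnergy m (fun r => deriv (fun s => X s r) u) + potentialEnergy m h (X u) with hEng
  -- Step 1: the energy has derivative 0 on the interval
  have hE : ∀ t ∈ Set.Ico t₀ β, HasDerivAt Eng 0 t := by
    intro t ht
    have hkin : HasDerivAt (fun u => kineticEnergy m (fun r => deriv (fun s => X s r) u))
        (∑ r, ⟪deriv (fun s => X s r) t, force m h (X t) r⟫) t := by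
      have h1 : ∀ r : Fin m, HasDerivAt (fun u => ‖deriv (fun s => X s r) u‖ ^ 2)
          (2 * ⟪deriv (fun s => X s r) t, force m h (X t) r⟫) t := by
        intro r
        have h2 := (hforce r t ht).inner ℝ (hforce r t ht)
        have heq : (fun u => ⟪deriv (fun s => X s r) u, deriv (fun s => X s r) u⟫)
            = fun u => ‖deriv (fun s => X s r) u‖ ^ 2 := by
          funext u; rw [real_inner_self_eq_norm_sq]
        rw [heq] at h2
        exact h2.congr_deriv (by rw [real_inner_comm]; ring)
      have h3 := HasDerivAt.const_mul (1/2 : ℝ)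
        (HasDerivAt.fun_sum (fun r (_ : r ∈ Finset.univ) => h1 r))
      unfold kineticEnergy
      refine h3.congr_deriv ?_
      rw [Finset.mul_sum]
      congr 1; funext r; ring
    have hpot : HasDerivAt (fun u => potentialEnergy m h (X u))
        (-∑ p ∈ Finset.univ.filter (fun p : Fin m × Fin m => p.1 < p.2),
          (1 / ‖X t p.1 - X t p.2‖ ^ 2 - h p.1 p.2) *
            ⟪X t p.1 - X t p.2, deriv (fun s => X s p.1) t - deriv (fun s => X s p.2) t⟫) t := by
      have hterm : ∀ p ∈ Finset.univ.filter (fun p : Fin m × Fin m => p.1 < p.2),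
          HasDerivAt (fun u => Real.log (‖X u p.1 - X u p.2‖ ^ 2)
              - h p.1 p.2 * ‖X u p.1 - X u p.2‖ ^ 2)
            (2 * ((1 / ‖X t p.1 - X t p.2‖ ^ 2 - h p.1 p.2) *
              ⟪X t p.1 - X t p.2, deriv (fun s => X s p.1) t - deriv (fun s => X s p.2) t⟫)) t := by
        intro p hp
        have hplt : p.1 < p.2 := (Finset.mem_filter.1 hp).2
        have hne : X t p.1 - X t p.2 ≠ 0 := sub_ne_zero.2 (hdist t ht p.1 p.2 hplt.ne)
        have hd2ne : ‖X t p.1 - X t p.2‖ ^ 2 ≠ 0 := pow_ne_zero 2 (norm_ne_zero_iff.2 hne)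
        have hw : HasDerivAt (fun u => X u p.1 - X u p.2)
            (deriv (fun s => X s p.1) t - deriv (fun s => X s p.2) t) t :=
          (hv p.1 t ht).sub (hv p.2 t ht)
        have hd2 : HasDerivAt (fun u => ‖X u p.1 - X u p.2‖ ^ 2)
            (2 * ⟪X t p.1 - X t p.2,
              deriv (fun s => X s p.1) t - deriv (fun s => X s p.2) t⟫) t := by
          have h2 := hw.inner ℝ hw
          have heq : (fun u => ⟪X u p.1 - X u p.2, X u p.1 - X u p.2⟫)
              = fun u => ‖X u p.1 - X u p.2‖ ^ 2 := by
            funext u; rw [real_inner_self_eq_norm_sq]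
          rw [heq] at h2
          exact h2.congr_deriv (by rw [real_inner_comm]; ring)
        have hlog := hd2.log hd2ne
        have h4 := hlog.sub (hd2.const_mul (h p.1 p.2))
        refine h4.congr_deriv ?_
        ring
      have h5 := HasDerivAt.const_mul (-(1/2) : ℝ) (HasDerivAt.fun_sum hterm)
      unfold potentialEnergy
      refine h5.congr_deriv ?_
      rw [Finset.mul_sum, ← Finset.sum_neg_distrib]
      congr 1; funext p; ring
    have hiden : ∑ r, ⟪deriv (fun s => X s r) t, force m h (X t) r⟫
        = ∑ p ∈ Finset.univ.filter (fun p : Fin m × Fin m => p.1 < p.2),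
          (1 / ‖X t p.1 - X t p.2‖ ^ 2 - h p.1 p.2) *
            ⟪X t p.1 - X t p.2, deriv (fun s => X s p.1) t - deriv (fun s => X s p.2) t⟫ := by
      have step1 : ∀ r : Fin m, ⟪deriv (fun s => X s r) t, force m h (X t) r⟫
          = ∑ k ∈ Finset.univ.filter (fun k => k ≠ r),
              (1 / ‖X t r - X t k‖ ^ 2 - h r k) * ⟪deriv (fun s => X s r) t, X t r - X t k⟫ := by
        intro r
        unfold force
        rw [inner_sum]
        congr 1; funext k
        rw [real_inner_smul_right]
      simp_rw [step1]
      rw [sum_offdiag_pairs_aux m (fun r k => (1 / ‖X t r - X t k‖ ^ 2 - h r k) *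
        ⟪deriv (fun s => X s r) t, X t r - X t k⟫)]
      congr 1; funext p
      have hsy : ‖X t p.2 - X t p.1‖ = ‖X t p.1 - X t p.2‖ := norm_sub_rev _ _
      rw [hsy, hsymm p.2 p.1]
      simp only [inner_sub_left, inner_sub_right]
      rw [real_inner_comm (deriv (fun s => X s p.1) t) (X t p.1),
        real_inner_comm (deriv (fun s => X s p.1) t) (X t p.2),
        real_inner_comm (deriv (fun s => X s p.2) t) (X t p.1),
        real_inner_comm (deriv (fun s => X s p.2) t) (X t p.2)]
      ring
    have h6 := hkin.add hpot
    rw [hiden] at h6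
    simp at h6; exact h6
  -- Step 2: the energy is constant
  have hEconst : ∀ t ∈ Set.Ico t₀ β, Eng t = Eng t₀ := by
    intro t ht
    rcases eq_or_lt_of_le ht.1 with he | hlt'
    · rw [← he]
    · have hsub : Set.Icc t₀ t ⊆ Set.Ico t₀ β :=
        fun x hx => ⟨hx.1, lt_of_le_of_lt hx.2 ht.2⟩
      have hcont : ContinuousOn Eng (Set.Icc t₀ t) :=
        fun x hx => ((hE x (hsub hx)).continuousAt).continuousWithinAt
      exact constant_of_has_deriv_right_zero hcont
        (fun x hx => (hE x (hsub ⟨hx.1, hx.2.le⟩)).hasDerivWithinAt)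
        t (Set.right_mem_Icc.2 ht.1)
  have ht₀mem : t₀ ∈ Set.Ico t₀ β := ⟨le_refl _, hβ⟩
  -- notation for position and velocity square sums
  set Q : ℝ → ℝ := fun u => ∑ r, ‖X u r‖ ^ 2 with hQdef
  set Vf : ℝ → ℝ := fun u => ∑ r, ‖deriv (fun s => X s r) u‖ ^ 2 with hVdef
  have hQnonneg : ∀ u, 0 ≤ Q u := fun u => Finset.sum_nonneg fun r _ => sq_nonneg _
  have hVnonneg : ∀ u, 0 ≤ Vf u := fun u => Finset.sum_nonneg fun r _ => sq_nonneg _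
  have hsingle : ∀ u : ℝ, ∀ r : Fin m, ‖X u r‖ ^ 2 ≤ Q u := by
    intro u r
    exact Finset.single_le_sum (fun i _ => sq_nonneg ‖X u i‖) (Finset.mem_univ r)
  -- Step 3: the velocity square sum is bounded by the position square sum
  have hkinbound : ∀ t ∈ Set.Ico t₀ β, Vf t ≤ 2 * Eng t₀ + 4 * (m : ℝ)^2 * Q t := by
    intro t ht
    have hconst := hEconst t ht
    have hkinval : kineticEnergy m (fun r => deriv (fun s => X s r) t) = (1/2) * Vf t := rfl
    have hsum : ∑ p ∈ Finset.univ.filter (fun p : Fin m × Fin m => p.1 < p.2),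
        (Real.log (‖X t p.1 - X t p.2‖ ^ 2) - h p.1 p.2 * ‖X t p.1 - X t p.2‖ ^ 2)
        ≤ 4 * (m : ℝ)^2 * Q t := by
      have hterm : ∀ p ∈ Finset.univ.filter (fun p : Fin m × Fin m => p.1 < p.2),
          Real.log (‖X t p.1 - X t p.2‖ ^ 2) - h p.1 p.2 * ‖X t p.1 - X t p.2‖ ^ 2
            ≤ 4 * Q t := by
        intro p hp
        have hplt : p.1 < p.2 := (Finset.mem_filter.1 hp).2
        have hne : X t p.1 - X t p.2 ≠ 0 := sub_ne_zero.2 (hdist t ht p.1 p.2 hplt.ne)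
        have hd2pos : 0 < ‖X t p.1 - X t p.2‖ ^ 2 :=
          pow_pos (norm_pos_iff.2 hne) 2
        have hlog : Real.log (‖X t p.1 - X t p.2‖ ^ 2) ≤ ‖X t p.1 - X t p.2‖ ^ 2 :=
          le_trans (Real.log_le_sub_one_of_pos hd2pos) (by linarith)
        have hh : 0 ≤ h p.1 p.2 := by rcases h01 p.1 p.2 with h0 | h0 <;> rw [h0] <;> norm_num
        have hd2Q : ‖X t p.1 - X t p.2‖ ^ 2 ≤ 4 * Q t := by
          have h1 : ‖X t p.1 - X t p.2‖ ≤ ‖X t p.1‖ + ‖X t p.2‖ := norm_sub_le _ _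
          have h2 : ‖X t p.1 - X t p.2‖ ^ 2 ≤ (‖X t p.1‖ + ‖X t p.2‖) ^ 2 := by
            apply pow_le_pow_left₀ (norm_nonneg _) h1
          nlinarith [hsingle t p.1, hsingle t p.2, norm_nonneg (X t p.1), norm_nonneg (X t p.2),
            sq_nonneg (‖X t p.1‖ - ‖X t p.2‖)]
        nlinarith [mul_nonneg hh hd2pos.le]
      calc ∑ p ∈ Finset.univ.filter (fun p : Fin m × Fin m => p.1 < p.2),
            (Real.log (‖X t p.1 - X t p.2‖ ^ 2) - h p.1 p.2 * ‖X t p.1 - X t p.2‖ ^ 2)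
          ≤ ∑ p ∈ Finset.univ.filter (fun p : Fin m × Fin m => p.1 < p.2), 4 * Q t :=
            Finset.sum_le_sum hterm
        _ = (Finset.univ.filter (fun p : Fin m × Fin m => p.1 < p.2)).card * (4 * Q t) := by
            rw [Finset.sum_const, nsmul_eq_mul]
        _ ≤ ((m : ℝ) * m) * (4 * Q t) := by
            apply mul_le_mul_of_nonneg_right _ (by positivity)
            have hcard : (Finset.univ.filter (fun p : Fin m × Fin m => p.1 < p.2)).card
                ≤ m * m := by
              calc (Finset.univ.filter (fun p : Fin m × Fin m => p.1 < p.2)).card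
                  ≤ (Finset.univ : Finset (Fin m × Fin m)).card := Finset.card_filter_le _ _
                _ = m * m := by simp [Finset.card_univ]
            exact_mod_cast hcard
        _ = 4 * (m : ℝ)^2 * Q t := by ring
    have hpe : potentialEnergy m h (X t)
        = -(1/2) * ∑ p ∈ Finset.univ.filter (fun p : Fin m × Fin m => p.1 < p.2),
          (Real.log (‖X t p.1 - X t p.2‖ ^ 2) - h p.1 p.2 * ‖X t p.1 - X t p.2‖ ^ 2) := rfl
    have hEt : (1/2) * Vf t + potentialEnergy m h (X t) = Eng t₀ := by
      rw [← hkinval]; exact hconst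
    rw [hpe] at hEt
    set S := ∑ p ∈ Finset.univ.filter (fun p : Fin m × Fin m => p.1 < p.2),
          (Real.log (‖X t p.1 - X t p.2‖ ^ 2) - h p.1 p.2 * ‖X t p.1 - X t p.2‖ ^ 2) with hSdef
    clear_value S
    clear_value Q Vf Eng
    linarith
  -- Step 4: Gronwall bound on Q
  have hQ' : ∀ t ∈ Set.Ico t₀ β, HasDerivAt Q
      (∑ r, 2 * ⟪X t r, deriv (fun s => X s r) t⟫) t := by
    intro t ht
    have h1 : ∀ r : Fin m, HasDerivAt (fun u => ‖X u r‖ ^ 2)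
        (2 * ⟪X t r, deriv (fun s => X s r) t⟫) t := by
      intro r
      have h2 := (hv r t ht).inner ℝ (hv r t ht)
      have heq : (fun u => ⟪X u r, X u r⟫) = fun u => ‖X u r‖ ^ 2 := by
        funext u; rw [real_inner_self_eq_norm_sq]
      rw [heq] at h2
      exact h2.congr_deriv (by rw [real_inner_comm]; ring)
    exact HasDerivAt.fun_sum (fun r _ => h1 r)
  set K : ℝ := 4 * (m : ℝ)^2 + 1 with hKdef
  set ε : ℝ := max (2 * Eng t₀) 0 with hεdef
  have hKpos : (0 : ℝ) < K := by positivity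
  have hεnonneg : (0 : ℝ) ≤ ε := le_max_right _ _
  have hder_bound : ∀ t ∈ Set.Ico t₀ β,
      ‖∑ r, 2 * ⟪X t r, deriv (fun s => X s r) t⟫‖ ≤ K * ‖Q t‖ + ε := by
    intro t ht
    have h1 : ‖∑ r, 2 * ⟪X t r, deriv (fun s => X s r) t⟫‖ ≤ Q t + Vf t := by
      calc ‖∑ r, 2 * ⟪X t r, deriv (fun s => X s r) t⟫‖
          ≤ ∑ r, ‖2 * ⟪X t r, deriv (fun s => X s r) t⟫‖ := norm_sum_le _ _
        _ ≤ ∑ r, (‖X t r‖ ^ 2 + ‖deriv (fun s => X s r) t‖ ^ 2) := by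
            apply Finset.sum_le_sum
            intro r _
            have h2 : |(⟪X t r, deriv (fun s => X s r) t⟫ : ℝ)|
                ≤ ‖X t r‖ * ‖deriv (fun s => X s r) t‖ := abs_real_inner_le_norm _ _
            have h3 : 2 * (‖X t r‖ * ‖deriv (fun s => X s r) t‖)
                ≤ ‖X t r‖ ^ 2 + ‖deriv (fun s => X s r) t‖ ^ 2 := by
              nlinarith [sq_nonneg (‖X t r‖ - ‖deriv (fun s => X s r) t‖)]
            rw [norm_mul, Real.norm_eq_abs, Real.norm_eq_abs]
            rw [abs_of_nonneg (by norm_num : (0:ℝ) ≤ 2)]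
            linarith [mul_le_mul_of_nonneg_left h2 (by norm_num : (0:ℝ) ≤ 2)]
        _ = Q t + Vf t := Finset.sum_add_distrib
    have h4 : Q t + Vf t ≤ K * Q t + ε := by
      have := hkinbound t ht
      have h5 : 2 * Eng t₀ ≤ ε := le_max_left _ _
      rw [hKdef]
      nlinarith [hQnonneg t]
    rw [Real.norm_eq_abs (Q t), abs_of_nonneg (hQnonneg t)]
    linarith
  set δ : ℝ := Q t₀ with hδdef
  have hgron : ∀ t ∈ Set.Ico t₀ β, Q t ≤ gronwallBound δ K ε (t - t₀) := by
    intro t ht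
    have hsub : Set.Icc t₀ t ⊆ Set.Ico t₀ β :=
      fun x hx => ⟨hx.1, lt_of_le_of_lt hx.2 ht.2⟩
    have hcont : ContinuousOn Q (Set.Icc t₀ t) :=
      fun x hx => ((hQ' x (hsub hx)).continuousAt).continuousWithinAt
    have hQt := norm_le_gronwallBound_of_norm_deriv_right_le (a := t₀) (b := t)
      (f := Q) (f' := fun x => ∑ r, 2 * ⟪X x r, deriv (fun s => X s r) x⟫)
      (δ := δ) (K := K) (ε := ε)
      hcont
      (fun x hx => (hQ' x (hsub ⟨hx.1, hx.2.le⟩)).hasDerivWithinAt)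
      (by rw [Real.norm_eq_abs, abs_of_nonneg (hQnonneg t₀)])
      (fun x hx => hder_bound x (hsub ⟨hx.1, hx.2.le⟩))
      t (Set.right_mem_Icc.2 ht.1)
    calc Q t ≤ ‖Q t‖ := le_abs_self _
      _ ≤ gronwallBound δ K ε (t - t₀) := hQt
  -- monotonicity of the Gronwall bound
  have hδnonneg : (0 : ℝ) ≤ δ := hQnonneg t₀
  set B : ℝ := gronwallBound δ K ε (β - t₀) with hBdef
  have hmono : ∀ x : ℝ, 0 ≤ x → x ≤ β - t₀ → gronwallBound δ K ε x ≤ B := by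
    intro x hx0 hxT
    rw [hBdef]
    simp only [gronwallBound_of_K_ne_0 hKpos.ne']
    have hexp : Real.exp (K * x) ≤ Real.exp (K * (β - t₀)) :=
      Real.exp_le_exp.2 (mul_le_mul_of_nonneg_left hxT hKpos.le)
    have hεK : (0 : ℝ) ≤ ε / K := div_nonneg hεnonneg hKpos.le
    have h1 : δ * Real.exp (K * x) ≤ δ * Real.exp (K * (β - t₀)) :=
      mul_le_mul_of_nonneg_left hexp hδnonneg
    have h2 : ε / K * (Real.exp (K * x) - 1) ≤ ε / K * (Real.exp (K * (β - t₀)) - 1) :=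
      mul_le_mul_of_nonneg_left (by linarith) hεK
    linarith
  have hQbound : ∀ t ∈ Set.Ico t₀ β, Q t ≤ B := by
    intro t ht
    exact le_trans (hgron t ht) (hmono (t - t₀) (by linarith [ht.1]) (by linarith [ht.2]))
  -- conclusion
  have hBnonneg : (0 : ℝ) ≤ B := le_trans (hQnonneg t₀) (hQbound t₀ ht₀mem)
  set Cfin : ℝ := B + (2 * Eng t₀ + 4 * (m : ℝ)^2 * B) with hCdef
  refine ⟨Real.sqrt (max Cfin 0 + 1), Real.sqrt_pos.2 (by positivity), ?_⟩
  intro t ht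
  have hD2 : Real.sqrt (max Cfin 0 + 1) ^ 2 = max Cfin 0 + 1 :=
    Real.sq_sqrt (by positivity)
  rw [hD2]
  have hQt := hQbound t ht
  have hVt : Vf t ≤ 2 * Eng t₀ + 4 * (m : ℝ)^2 * B := by
    have := hkinbound t ht
    nlinarith [hQbound t ht, sq_nonneg (m : ℝ)]
  have hQV : Q t + Vf t ≤ Cfin := by rw [hCdef]; linarith
  have : Q t + Vf t ≤ max Cfin 0 := le_trans hQV (le_max_left _ _)
  have hfinal : Q t + Vf t < max Cfin 0 + 1 := by linarith
  exact hfinal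
end

section
/- Suppose t ↦ X(t) is a solution of the system on the half-open interval [t0, β) with β < +∞. Then the points stay uniformly separated: there exists L > 0 such that for all t ∈ [t0, β) and all pairs r ≠ s, ‖x_r(t) − x_s(t)‖ ≥ L. -/
open Finset Set
open scoped RealInnerProductSpace

namespace AuxSep

variable {m : ℕ}

noncomputable def vel (X : ℝ → Fin m → EuclideanSpace ℝ (Fin m)) (i : Fin m) :
    ℝ → EuclideanSpace ℝ (Fin m) := deriv (fun s => X s i)

def pairs (m : ℕ) : Finset (Fin m × Fin m) := Finset.univ.filter (fun p => p.1 < p.2)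

noncomputable def gg (X : ℝ → Fin m → EuclideanSpace ℝ (Fin m)) (p : Fin m × Fin m) (t : ℝ) :
    ℝ := ⟪X t p.1 - X t p.2, X t p.1 - X t p.2⟫

noncomputable def dgg (X : ℝ → Fin m → EuclideanSpace ℝ (Fin m)) (p : Fin m × Fin m) (t : ℝ) :
    ℝ := 2 * ⟪X t p.1 - X t p.2, vel X p.1 t - vel X p.2 t⟫

noncomputable def Kf (X : ℝ → Fin m → EuclideanSpace ℝ (Fin m)) (t : ℝ) : ℝ :=
  ∑ i, ⟪vel X i t, vel X i t⟫

noncomputable def Uf (h : Matrix (Fin m) (Fin m) ℝ) (X : ℝ → Fin m → EuclideanSpace ℝ (Fin m))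
    (t : ℝ) : ℝ := ∑ p ∈ pairs m, (h p.1 p.2 * gg X p t - Real.log (gg X p t))

noncomputable def Ef (h : Matrix (Fin m) (Fin m) ℝ) (X : ℝ → Fin m → EuclideanSpace ℝ (Fin m))
    (t : ℝ) : ℝ := Kf X t + Uf h X t

noncomputable def Jf (X : ℝ → Fin m → EuclideanSpace ℝ (Fin m)) (t : ℝ) : ℝ :=
  ∑ p ∈ pairs m, gg X p t

noncomputable def dJf (X : ℝ → Fin m → EuclideanSpace ℝ (Fin m)) (t : ℝ) : ℝ :=
  ∑ p ∈ pairs m, dgg X p t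

variable {h : Matrix (Fin m) (Fin m) ℝ} {X : ℝ → Fin m → EuclideanSpace ℝ (Fin m)} {t₀ β : ℝ}

lemma gg_eq (p : Fin m × Fin m) (t : ℝ) : gg X p t = ‖X t p.1 - X t p.2‖ ^ 2 :=
  real_inner_self_eq_norm_sq _

lemma gg_nonneg (p : Fin m × Fin m) (t : ℝ) : 0 ≤ gg X p t := real_inner_self_nonneg

lemma gg_pos (hX : IsSolution m h (Set.Ico t₀ β) X) {t : ℝ} (ht : t ∈ Set.Ico t₀ β)
    {p : Fin m × Fin m} (hp : p.1 ≠ p.2) : 0 < gg X p t := by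
  rw [gg_eq]
  exact pow_pos (norm_pos_iff.2 (sub_ne_zero_of_ne (hX.1 t ht p.1 p.2 hp))) 2

lemma hasDerivAt_X (hX : IsSolution m h (Set.Ico t₀ β) X) {t : ℝ} (ht : t ∈ Set.Ico t₀ β)
    (i : Fin m) : HasDerivAt (fun s => X s i) (vel X i t) t :=
  (hX.2.1 i t ht).hasDerivAt

lemma hasDerivAt_gg (hX : IsSolution m h (Set.Ico t₀ β) X) {t : ℝ} (ht : t ∈ Set.Ico t₀ β)
    (p : Fin m × Fin m) : HasDerivAt (gg X p) (dgg X p t) t := by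
  have h1 := (hasDerivAt_X hX ht p.1).sub (hasDerivAt_X hX ht p.2)
  have h2 := h1.inner ℝ h1
  have : HasDerivAt (gg X p)
      (⟪X t p.1 - X t p.2, vel X p.1 t - vel X p.2 t⟫
        + ⟪vel X p.1 t - vel X p.2 t, X t p.1 - X t p.2⟫) t := h2
  convert this using 1
  rw [dgg, real_inner_comm (vel X p.1 t - vel X p.2 t)]
  ring

lemma hasDerivAt_Kf (hX : IsSolution m h (Set.Ico t₀ β) X) {t : ℝ} (ht : t ∈ Set.Ico t₀ β) :
    HasDerivAt (Kf X) (∑ i, 2 * ⟪vel X i t, force m h (X t) i⟫) t := by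
  have : ∀ i ∈ Finset.univ, HasDerivAt (fun s => ⟪vel X i s, vel X i s⟫)
      (2 * ⟪vel X i t, force m h (X t) i⟫) t := by
    intro i _
    have hv : HasDerivAt (vel X i) (force m h (X t) i) t := hX.2.2 i t ht
    have h2 := hv.inner ℝ hv
    have h3 : (2 * ⟪vel X i t, force m h (X t) i⟫)
        = ⟪vel X i t, force m h (X t) i⟫ + ⟪force m h (X t) i, vel X i t⟫ := by
      rw [real_inner_comm (force m h (X t) i)]
      ring
    rw [h3]; exact h2
  exact HasDerivAt.fun_sum this

lemma hasDerivAt_Uf (hX : IsSolution m h (Set.Ico t₀ β) X) {t : ℝ} (ht : t ∈ Set.Ico t₀ β) :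
    HasDerivAt (Uf h X)
      (∑ p ∈ pairs m, (h p.1 p.2 * dgg X p t - dgg X p t / gg X p t)) t := by
  apply HasDerivAt.fun_sum
  intro p hp
  have hp12 : p.1 ≠ p.2 := by
    simp only [pairs, Finset.mem_filter] at hp; exact hp.2.ne
  exact ((hasDerivAt_gg hX ht p).const_mul (h p.1 p.2)).sub
    ((hasDerivAt_gg hX ht p).log (gg_pos hX ht hp12).ne')

lemma hasDerivAt_Jf (hX : IsSolution m h (Set.Ico t₀ β) X) {t : ℝ} (ht : t ∈ Set.Ico t₀ β) :
    HasDerivAt (Jf X) (dJf X t) t :=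
  HasDerivAt.fun_sum fun p _ => hasDerivAt_gg hX ht p


lemma sum_pairs (f : Fin m → Fin m → ℝ) :
    ∑ i, ∑ k ∈ Finset.univ.filter (fun k => k ≠ i), f i k
      = ∑ p ∈ pairs m, (f p.1 p.2 + f p.2 p.1) := by
  classical
  have h1 : ∑ i, ∑ k ∈ Finset.univ.filter (fun k => k ≠ i), f i k
      = ∑ p ∈ Finset.univ.filter (fun p : Fin m × Fin m => p.2 ≠ p.1), f p.1 p.2 := by
    rw [Finset.sum_filter, ← Finset.univ_product_univ, Finset.sum_product]
    simp only [Finset.sum_filter]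
  rw [h1]
  have h2 : (Finset.univ.filter (fun p : Fin m × Fin m => p.2 ≠ p.1))
      = (Finset.univ.filter (fun p : Fin m × Fin m => p.1 < p.2))
        ∪ (Finset.univ.filter (fun p : Fin m × Fin m => p.2 < p.1)) := by
    ext p
    simp only [Finset.mem_filter, Finset.mem_union, Finset.mem_univ, true_and]
    constructor
    · intro hp; exact (lt_or_gt_of_ne hp).symm.imp id id
    · rintro (hp | hp); exacts [hp.ne', hp.ne]
  have hdisj : Disjoint (Finset.univ.filter (fun p : Fin m × Fin m => p.1 < p.2))
      (Finset.univ.filter (fun p : Fin m × Fin m => p.2 < p.1)) := by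
    rw [Finset.disjoint_left]
    intro p hp hq
    simp only [Finset.mem_filter, Finset.mem_univ, true_and] at hp hq
    exact absurd hq hp.asymm
  rw [h2, Finset.sum_union hdisj, pairs, Finset.sum_add_distrib]
  congr 1
  refine Finset.sum_nbij' (i := Prod.swap) (j := Prod.swap) ?_ ?_ ?_ ?_ ?_
  · intro p hp; simp only [Finset.mem_filter, Finset.mem_univ, true_and] at hp ⊢; exact hp
  · intro p hp; simp only [Finset.mem_filter, Finset.mem_univ, true_and] at hp ⊢; exact hp
  · intro p _; simp
  · intro p _; simp
  · intro p _; rfl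

lemma energy_deriv_zero (hsymm : ∀ i k, h i k = h k i)
    (hX : IsSolution m h (Set.Ico t₀ β) X) {t : ℝ} (ht : t ∈ Set.Ico t₀ β) :
    HasDerivAt (Ef h X) 0 t := by
  have hKd := hasDerivAt_Kf hX ht
  have hUd := hasDerivAt_Uf hX ht
  have hsum := hKd.add hUd
  have hzero : (∑ i, 2 * ⟪vel X i t, force m h (X t) i⟫)
      + (∑ p ∈ pairs m, (h p.1 p.2 * dgg X p t - dgg X p t / gg X p t)) = 0 := by
    have hexp : ∀ i : Fin m, 2 * ⟪vel X i t, force m h (X t) i⟫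
        = ∑ k ∈ Finset.univ.filter (fun k => k ≠ i),
            2 * ((1 / ‖X t i - X t k‖ ^ 2 - h i k) * ⟪vel X i t, X t i - X t k⟫) := by
      intro i
      rw [force, inner_sum, Finset.mul_sum]
      congr 1
      ext k
      rw [real_inner_smul_right]
    simp only [hexp]
    rw [sum_pairs, ← Finset.sum_add_distrib]
    apply Finset.sum_eq_zero
    intro p hp
    have hlt : p.1 < p.2 := by simpa [pairs] using hp
    have hrev : X t p.2 - X t p.1 = -(X t p.1 - X t p.2) := by abel
    have hnrev : ‖X t p.2 - X t p.1‖ = ‖X t p.1 - X t p.2‖ := norm_sub_rev _ _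
    have hG : gg X p t = ‖X t p.1 - X t p.2‖ ^ 2 := gg_eq p t
    have hGpos : (0:ℝ) < ‖X t p.1 - X t p.2‖ ^ 2 := by
      rw [← hG]; exact gg_pos hX ht hlt.ne
    have hdg : dgg X p t
        = 2 * (⟪vel X p.1 t, X t p.1 - X t p.2⟫ - ⟪vel X p.2 t, X t p.1 - X t p.2⟫) := by
      rw [dgg, real_inner_comm, inner_sub_left]
    rw [hnrev, hrev, inner_neg_right, hsymm p.2 p.1, hdg, hG]
    field_simp
    ring

  rw [show (0:ℝ) = (∑ i, 2 * ⟪vel X i t, force m h (X t) i⟫)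
      + (∑ p ∈ pairs m, (h p.1 p.2 * dgg X p t - dgg X p t / gg X p t)) from hzero.symm]
  exact hsum

lemma Ef_const (hsymm : ∀ i k, h i k = h k i)
    (hX : IsSolution m h (Set.Ico t₀ β) X) {t : ℝ} (ht : t ∈ Set.Ico t₀ β) :
    Ef h X t = Ef h X t₀ := by
  have hsub : Set.Icc t₀ t ⊆ Set.Ico t₀ β := fun x hx => ⟨hx.1, lt_of_le_of_lt hx.2 ht.2⟩
  have hcont : ContinuousOn (Ef h X) (Set.Icc t₀ t) := fun x hx =>
    (energy_deriv_zero hsymm hX (hsub hx)).continuousAt.continuousWithinAt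
  have hderiv : ∀ x ∈ Set.Ico t₀ t, HasDerivWithinAt (Ef h X) 0 (Set.Ici x) x := fun x hx =>
    (energy_deriv_zero hsymm hX (hsub ⟨hx.1, hx.2.le⟩)).hasDerivWithinAt
  exact constant_of_has_deriv_right_zero hcont hderiv t ⟨ht.1, le_refl t⟩


lemma Kf_nonneg (t : ℝ) : 0 ≤ Kf X t :=
  Finset.sum_nonneg fun i _ => real_inner_self_nonneg

lemma Kf_eq (t : ℝ) : Kf X t = ∑ i, ‖vel X i t‖ ^ 2 :=
  Finset.sum_congr rfl fun i _ => real_inner_self_eq_norm_sq _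

lemma h_nonneg (h01 : ∀ i k, h i k = 0 ∨ h i k = 1) (i k : Fin m) : 0 ≤ h i k := by
  rcases h01 i k with hh | hh <;> rw [hh] <;> norm_num

lemma Kf_le (hsymm : ∀ i k, h i k = h k i) (h01 : ∀ i k, h i k = 0 ∨ h i k = 1)
    (hX : IsSolution m h (Set.Ico t₀ β) X) {t : ℝ} (ht : t ∈ Set.Ico t₀ β) :
    Kf X t ≤ |Ef h X t₀| + Jf X t := by
  have hE := Ef_const hsymm hX ht
  have hU : -Uf h X t ≤ Jf X t := by
    rw [Uf, ← Finset.sum_neg_distrib, Jf]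
    apply Finset.sum_le_sum
    intro p hp
    have hp12 : p.1 ≠ p.2 := by
      simp only [pairs, Finset.mem_filter] at hp; exact hp.2.ne
    have hgp := gg_pos hX ht hp12
    have hlog := Real.log_le_sub_one_of_pos hgp
    have hhg : 0 ≤ h p.1 p.2 * gg X p t :=
      mul_nonneg (h_nonneg h01 p.1 p.2) (gg_nonneg p t)
    linarith
  have : Kf X t + Uf h X t = Ef h X t₀ := by rw [← hE]; rfl
  have := le_abs_self (Ef h X t₀)
  linarith

lemma dJf_bound (hsymm : ∀ i k, h i k = h k i) (h01 : ∀ i k, h i k = 0 ∨ h i k = 1)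
    (hX : IsSolution m h (Set.Ico t₀ β) X) {t : ℝ} (ht : t ∈ Set.Ico t₀ β) :
    |dJf X t| ≤ (4 * m + 1) * Jf X t + (4 * m) * |Ef h X t₀| := by
  have h1 : |dJf X t| ≤ ∑ p ∈ pairs m, |dgg X p t| := Finset.abs_sum_le_sum_abs _ _
  have h2 : ∀ p ∈ pairs m, |dgg X p t|
      ≤ gg X p t + ‖vel X p.1 t - vel X p.2 t‖ ^ 2 := by
    intro p _
    have hi := abs_real_inner_le_norm (X t p.1 - X t p.2) (vel X p.1 t - vel X p.2 t)
    have hg := gg_eq (X := X) p t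
    have habs : |dgg X p t| = 2 * |⟪X t p.1 - X t p.2, vel X p.1 t - vel X p.2 t⟫| := by
      rw [dgg, abs_mul]; norm_num
    nlinarith [sq_nonneg (‖X t p.1 - X t p.2‖ - ‖vel X p.1 t - vel X p.2 t‖)]
  have h3 : ∑ p ∈ pairs m, |dgg X p t|
      ≤ Jf X t + ∑ p ∈ pairs m, ‖vel X p.1 t - vel X p.2 t‖ ^ 2 := by
    rw [Jf, ← Finset.sum_add_distrib]
    exact Finset.sum_le_sum h2
  have h4 : ∑ p ∈ pairs m, ‖vel X p.1 t - vel X p.2 t‖ ^ 2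
      ≤ ∑ p : Fin m × Fin m, (2 * ‖vel X p.1 t‖ ^ 2 + 2 * ‖vel X p.2 t‖ ^ 2) := by
    calc ∑ p ∈ pairs m, ‖vel X p.1 t - vel X p.2 t‖ ^ 2
        ≤ ∑ p ∈ pairs m, (2 * ‖vel X p.1 t‖ ^ 2 + 2 * ‖vel X p.2 t‖ ^ 2) := by
          apply Finset.sum_le_sum
          intro p _
          have := norm_sub_le (vel X p.1 t) (vel X p.2 t)
          nlinarith [norm_nonneg (vel X p.1 t), norm_nonneg (vel X p.2 t),
            norm_nonneg (vel X p.1 t - vel X p.2 t),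
            sq_nonneg (‖vel X p.1 t‖ - ‖vel X p.2 t‖)]
      _ ≤ ∑ p : Fin m × Fin m, (2 * ‖vel X p.1 t‖ ^ 2 + 2 * ‖vel X p.2 t‖ ^ 2) := by
          apply Finset.sum_le_sum_of_subset_of_nonneg (Finset.filter_subset _ _)
          intro p _ _
          positivity
  have h5 : ∑ p : Fin m × Fin m, (2 * ‖vel X p.1 t‖ ^ 2 + 2 * ‖vel X p.2 t‖ ^ 2)
      = (4 * m) * Kf X t := by
    rw [Kf_eq, Fintype.sum_prod_type]
    simp only [Finset.sum_add_distrib, Finset.sum_const, Finset.card_univ, Fintype.card_fin,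
      nsmul_eq_mul, ← Finset.mul_sum, ← Finset.sum_mul]
    ring
  have h6 := Kf_le hsymm h01 hX ht
  calc |dJf X t| ≤ Jf X t + ∑ p ∈ pairs m, ‖vel X p.1 t - vel X p.2 t‖ ^ 2 :=
        le_trans h1 h3
    _ ≤ Jf X t + (4 * m) * Kf X t := by rw [← h5]; linarith
    _ ≤ (4 * m + 1) * Jf X t + (4 * m) * |Ef h X t₀| := by
        have hm : (0:ℝ) ≤ 4 * m := by positivity
        nlinarith [mul_le_mul_of_nonneg_left h6 hm]


lemma Jf_nonneg (t : ℝ) : 0 ≤ Jf X t := Finset.sum_nonneg fun p _ => gg_nonneg p t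

lemma Jf_le (hsymm : ∀ i k, h i k = h k i) (h01 : ∀ i k, h i k = 0 ∨ h i k = 1)
    (hX : IsSolution m h (Set.Ico t₀ β) X) {t : ℝ} (ht : t ∈ Set.Ico t₀ β) :
    Jf X t ≤ gronwallBound (Jf X t₀) (4 * m + 1) ((4 * m) * |Ef h X t₀|) (β - t₀) := by
  set C : ℝ := 4 * m + 1 with hC
  set ε : ℝ := (4 * m) * |Ef h X t₀| with hε
  have hCpos : (0:ℝ) < C := by positivity
  have hεnn : 0 ≤ ε := by positivity
  have hsub : Set.Icc t₀ t ⊆ Set.Ico t₀ β := fun x hx => ⟨hx.1, lt_of_le_of_lt hx.2 ht.2⟩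
  have hsub' : Set.Ico t₀ t ⊆ Set.Ico t₀ β := fun x hx => ⟨hx.1, hx.2.trans ht.2⟩
  have h1 := norm_le_gronwallBound_of_norm_deriv_right_le (f := Jf X) (f' := dJf X)
    (δ := Jf X t₀) (K := C) (ε := ε) (a := t₀) (b := t)
    (fun x hx => (hasDerivAt_Jf hX (hsub hx)).continuousAt.continuousWithinAt)
    (fun x hx => (hasDerivAt_Jf hX (hsub' hx)).hasDerivWithinAt)
    (by rw [Real.norm_eq_abs, abs_of_nonneg (Jf_nonneg t₀)])
    (fun x hx => by
      have hb := dJf_bound hsymm h01 hX (hsub' hx)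
      rw [Real.norm_eq_abs, Real.norm_eq_abs, abs_of_nonneg (Jf_nonneg x)]
      exact hb)
    t ⟨ht.1, le_refl t⟩
  rw [Real.norm_eq_abs, abs_of_nonneg (Jf_nonneg t)] at h1
  refine h1.trans ?_
  simp only [gronwallBound_of_K_ne_0 hCpos.ne']
  have he : Real.exp (C * (t - t₀)) ≤ Real.exp (C * (β - t₀)) :=
    Real.exp_le_exp.2 (by nlinarith [ht.2, hCpos])
  have h2 : 0 ≤ ε / C := div_nonneg hεnn hCpos.le
  nlinarith [mul_le_mul_of_nonneg_left he (Jf_nonneg (X := X) t₀),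
    mul_le_mul_of_nonneg_left he h2]

lemma gg_lower (hsymm : ∀ i k, h i k = h k i) (h01 : ∀ i k, h i k = 0 ∨ h i k = 1)
    (hX : IsSolution m h (Set.Ico t₀ β) X) (hβ : t₀ < β)
    {M : ℝ} (hM : ∀ t ∈ Set.Ico t₀ β, Jf X t ≤ M)
    {t : ℝ} (ht : t ∈ Set.Ico t₀ β) {p : Fin m × Fin m} (hp : p ∈ pairs m) :
    Real.exp (-(|Ef h X t₀| + (pairs m).card * |Real.log M|)) ≤ gg X p t := by
  have hp12 : p.1 ≠ p.2 := by
    simp only [pairs, Finset.mem_filter] at hp; exact hp.2.ne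
  have hgp := gg_pos hX ht hp12
  -- each pair's squared distance is at most M
  have hggM : ∀ q ∈ pairs m, gg X q t ≤ M := fun q hq =>
    le_trans (Finset.single_le_sum (fun r _ => gg_nonneg r t) hq) (hM t ht)
  -- lower bound for every term of Uf
  have hterm : ∀ q ∈ pairs m, -|Real.log M| ≤ h q.1 q.2 * gg X q t - Real.log (gg X q t) := by
    intro q hq
    have hq12 : q.1 ≠ q.2 := by
      simp only [pairs, Finset.mem_filter] at hq; exact hq.2.ne
    have hgq := gg_pos hX ht hq12
    have hlog : Real.log (gg X q t) ≤ |Real.log M| := by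
      calc Real.log (gg X q t) ≤ Real.log M := Real.log_le_log hgq (hggM q hq)
        _ ≤ |Real.log M| := le_abs_self _
    have hhg : 0 ≤ h q.1 q.2 * gg X q t :=
      mul_nonneg (h_nonneg h01 q.1 q.2) (gg_nonneg q t)
    linarith
  -- Uf is bounded above by |Ef t₀|
  have hUle : Uf h X t ≤ |Ef h X t₀| := by
    have hE := Ef_const hsymm hX ht
    have hK := Kf_nonneg (X := X) t
    have : Kf X t + Uf h X t = Ef h X t₀ := by rw [← hE]; rfl
    have := le_abs_self (Ef h X t₀)
    linarith
  -- sum over the other pairs is bounded below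
  have hsplit : (h p.1 p.2 * gg X p t - Real.log (gg X p t))
      + ∑ q ∈ (pairs m).erase p, (h q.1 q.2 * gg X q t - Real.log (gg X q t)) = Uf h X t := by
    rw [Uf]
    exact Finset.add_sum_erase _ (fun q => h q.1 q.2 * gg X q t - Real.log (gg X q t)) hp
  have hrest : (((pairs m).erase p).card : ℝ) * (-|Real.log M|)
      ≤ ∑ q ∈ (pairs m).erase p, (h q.1 q.2 * gg X q t - Real.log (gg X q t)) := by
    have := Finset.card_nsmul_le_sum ((pairs m).erase p)
      (fun q => h q.1 q.2 * gg X q t - Real.log (gg X q t)) (-|Real.log M|)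
      (fun q hq => hterm q (Finset.mem_of_mem_erase hq))
    simpa [nsmul_eq_mul] using this
  have hcard : (((pairs m).erase p).card : ℝ) ≤ ((pairs m).card : ℝ) := by
    exact_mod_cast Finset.card_erase_le
  have habs : (0:ℝ) ≤ |Real.log M| := abs_nonneg _
  have hkey : -Real.log (gg X p t) ≤ |Ef h X t₀| + (pairs m).card * |Real.log M| := by
    have hhg : 0 ≤ h p.1 p.2 * gg X p t :=
      mul_nonneg (h_nonneg h01 p.1 p.2) (gg_nonneg p t)
    nlinarith [hsplit, hrest, hUle, mul_le_mul_of_nonneg_right hcard habs]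
  calc Real.exp (-(|Ef h X t₀| + (pairs m).card * |Real.log M|))
      ≤ Real.exp (Real.log (gg X p t)) := Real.exp_le_exp.2 (by linarith)
    _ = gg X p t := Real.exp_log hgp

end AuxSep


/-- Along a solution of the system on `[t₀, β)` with `β < +∞`, the points stay uniformly
separated: there is `L > 0` with `‖x_r(t) − x_s(t)‖ ≥ L` for all `t ∈ [t₀, β)` and `r ≠ s`. -/
theorem solution_separated_on_Ico (m : ℕ) (hm : 2 ≤ m) (h : Matrix (Fin m) (Fin m) ℝ)
    (hsymm : ∀ i k, h i k = h k i) (hdiag : ∀ i, h i i = 0)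
    (h01 : ∀ i k, h i k = 0 ∨ h i k = 1)
    (t₀ β : ℝ) (X : ℝ → Fin m → EuclideanSpace ℝ (Fin m))
    (hX : IsSolution m h (Set.Ico t₀ β) X) :
    ∃ L > (0 : ℝ), ∀ t ∈ Set.Ico t₀ β, ∀ r s : Fin m, r ≠ s → L ≤ ‖X t r - X t s‖ := by
  rcases le_or_gt β t₀ with hβ | hβ
  · exact ⟨1, one_pos, fun t ht => absurd (ht.2.trans_le hβ) (not_lt.2 ht.1)⟩
  set M := gronwallBound (AuxSep.Jf X t₀) (4 * m + 1) ((4 * m) * |AuxSep.Ef h X t₀|) (β - t₀)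
    with hM
  have hJM : ∀ t ∈ Set.Ico t₀ β, AuxSep.Jf X t ≤ M := fun t ht =>
    AuxSep.Jf_le hsymm h01 hX ht
  set C₁ := |AuxSep.Ef h X t₀| + (AuxSep.pairs m).card * |Real.log M| with hC₁
  refine ⟨Real.exp (-C₁ / 2), Real.exp_pos _, ?_⟩
  intro t ht r s hrs
  have key : ∀ p ∈ AuxSep.pairs m, Real.exp (-C₁) ≤ AuxSep.gg X p t := fun p hp =>
    AuxSep.gg_lower hsymm h01 hX hβ hJM ht hp
  have hLsq : Real.exp (-C₁ / 2) ^ 2 = Real.exp (-C₁) := by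
    rw [sq, ← Real.exp_add]; ring_nf
  rcases hrs.lt_or_gt with hlt | hlt
  · have hp : (r, s) ∈ AuxSep.pairs m := by simp [AuxSep.pairs, hlt]
    have h1 := key _ hp
    rw [AuxSep.gg_eq] at h1
    nlinarith [norm_nonneg (X t r - X t s), Real.exp_pos (-C₁ / 2)]
  · have hp : (s, r) ∈ AuxSep.pairs m := by simp [AuxSep.pairs, hlt]
    have h1 := key _ hp
    rw [AuxSep.gg_eq] at h1
    rw [show ‖X t r - X t s‖ = ‖X t s - X t r‖ from norm_sub_rev _ _]
    nlinarith [norm_nonneg (X t s - X t r), Real.exp_pos (-C₁ / 2)]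
end

section
/- Suppose t ↦ X(t) is a solution of the system on the half-open interval (α, t0] with α > −∞. Then (i) there exists D > 0 such that for all t ∈ (α, t0], ∑_{r} ‖x_r(t)‖² + ∑_{r} ‖x_r′(t)‖² < D², and (ii) there exists L > 0 such that for all t ∈ (α, t0] and all pairs r ≠ s, ‖x_r(t) − x_s(t)‖ ≥ L. -/
open Finset Real
open scoped RealInnerProductSpace

lemma pair_sum {m : ℕ} (f : Fin m → Fin m → ℝ) :
    ∑ r : Fin m, ∑ k ∈ Finset.univ.filter (fun k => k ≠ r), f r k
    = ∑ p ∈ Finset.univ.filter (fun p : Fin m × Fin m => p.1 < p.2), (f p.1 p.2 + f p.2 p.1) := by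
  rw [Finset.sum_filter, Fintype.sum_prod_type]
  simp only [Finset.sum_filter]
  have key : ∀ r k : Fin m, (if k ≠ r then f r k else 0)
      = (if r < k then f r k else 0) + (if k < r then f r k else 0) := by
    intro r k
    rcases lt_trichotomy r k with hlt | heq | hgt
    · simp [hlt, hlt.ne', not_lt_of_gt hlt, ne_of_gt hlt]
    · simp [heq]
    · simp [hgt, not_lt_of_gt hgt, ne_of_lt hgt]
  have swap : (∑ r : Fin m, ∑ k : Fin m, (if k < r then f r k else 0))
      = ∑ r : Fin m, ∑ k : Fin m, (if r < k then f k r else 0) := Finset.sum_comm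
  calc ∑ r : Fin m, ∑ k : Fin m, (if k ≠ r then f r k else 0)
      = ∑ r : Fin m, ∑ k : Fin m, ((if r < k then f r k else 0) + (if k < r then f r k else 0)) := by
        simp_rw [key]
    _ = (∑ r : Fin m, ∑ k : Fin m, (if r < k then f r k else 0))
        + ∑ r : Fin m, ∑ k : Fin m, (if k < r then f r k else 0) := by
        simp [Finset.sum_add_distrib]
    _ = ∑ r : Fin m, ∑ k : Fin m, ((if r < k then f r k else 0) + (if r < k then f k r else 0)) := by
        rw [swap]; simp [Finset.sum_add_distrib]
    _ = ∑ r : Fin m, ∑ k : Fin m, (if r < k then f r k + f k r else 0) := by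
        congr 1; ext r; congr 1; ext k; split <;> simp

lemma force_inner_sum (m : ℕ) (h : Matrix (Fin m) (Fin m) ℝ) (hsymm : ∀ i k, h i k = h k i)
    (x v : Fin m → EuclideanSpace ℝ (Fin m)) :
    ∑ r, ⟪force m h x r, v r⟫
    = ∑ p ∈ Finset.univ.filter (fun p : Fin m × Fin m => p.1 < p.2),
        (1 / ‖x p.1 - x p.2‖ ^ 2 - h p.1 p.2) * ⟪x p.1 - x p.2, v p.1 - v p.2⟫ := by
  have hr : ∀ r, ⟪force m h x r, v r⟫ = ∑ k ∈ Finset.univ.filter (fun k => k ≠ r),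
      (1 / ‖x r - x k‖ ^ 2 - h r k) * ⟪x r - x k, v r⟫ := by
    intro r; rw [force, sum_inner]
    exact Finset.sum_congr rfl fun k _ => real_inner_smul_left _ _ _
  simp_rw [hr]
  rw [pair_sum]
  apply Finset.sum_congr rfl
  intro p hp
  rw [norm_sub_rev (x p.2), hsymm p.2 p.1, ← neg_sub (x p.1) (x p.2), inner_neg_left,
    inner_sub_right]
  ring

lemma potential_hasDerivAt (m : ℕ) (h : Matrix (Fin m) (Fin m) ℝ)
    (x v : Fin m → EuclideanSpace ℝ (Fin m))
    (X : ℝ → Fin m → EuclideanSpace ℝ (Fin m)) (t : ℝ)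
    (hv : ∀ r, HasDerivAt (fun τ => X τ r) (v r) t)
    (hx : ∀ r, X t r = x r)
    (hne : ∀ r s : Fin m, r ≠ s → x r ≠ x s) :
    HasDerivAt (fun τ => potentialEnergy m h (X τ))
      (-(1/2 : ℝ) * ∑ p ∈ Finset.univ.filter (fun p : Fin m × Fin m => p.1 < p.2),
        (2 * ⟪x p.1 - x p.2, v p.1 - v p.2⟫ / ‖x p.1 - x p.2‖ ^ 2
          - h p.1 p.2 * (2 * ⟪x p.1 - x p.2, v p.1 - v p.2⟫))) t := by
  simp only [potentialEnergy]
  apply HasDerivAt.const_mul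
  apply HasDerivAt.fun_sum
  intro p hp
  have hplt : p.1 < p.2 := by simpa using hp
  have hdsq : HasDerivAt (fun τ => ‖X τ p.1 - X τ p.2‖ ^ 2)
      (2 * ⟪x p.1 - x p.2, v p.1 - v p.2⟫) t := by
    have := ((hv p.1).fun_sub (hv p.2)).inner ℝ ((hv p.1).fun_sub (hv p.2))
    simp_rw [real_inner_self_eq_norm_sq] at this
    rw [hx p.1, hx p.2] at this
    exact this.congr_deriv (by rw [real_inner_comm]; ring)
  have hsub : x p.1 - x p.2 ≠ 0 := sub_ne_zero.mpr (hne p.1 p.2 hplt.ne)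
  have hd0 : ‖x p.1 - x p.2‖ ^ 2 ≠ 0 := pow_ne_zero _ (norm_ne_zero_iff.mpr hsub)
  have hd0' : ‖X t p.1 - X t p.2‖ ^ 2 ≠ 0 := by rw [hx p.1, hx p.2]; exact hd0
  have hlog := hdsq.log hd0'
  rw [hx p.1, hx p.2] at hlog
  exact hlog.sub (hdsq.const_mul _)

lemma energy_hasDerivAt (m : ℕ) (h : Matrix (Fin m) (Fin m) ℝ) (hsymm : ∀ i k, h i k = h k i)
    (S : Set ℝ) (X : ℝ → Fin m → EuclideanSpace ℝ (Fin m)) (hX : IsSolution m h S X)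
    (t : ℝ) (ht : t ∈ S) :
    HasDerivAt (fun τ => kineticEnergy m (fun r => deriv (fun s => X s r) τ)
      + potentialEnergy m h (X τ)) 0 t := by
  obtain ⟨hdist, hdiff, hforce⟩ := hX
  set x : Fin m → EuclideanSpace ℝ (Fin m) := X t with hxdef
  set v : Fin m → EuclideanSpace ℝ (Fin m) := fun r => deriv (fun s => X s r) t with hvdef
  have hv : ∀ r, HasDerivAt (fun τ => X τ r) (v r) t := fun r => (hdiff r t ht).hasDerivAt
  have hK : HasDerivAt (fun τ => kineticEnergy m (fun r => deriv (fun s => X s r) τ))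
      (∑ r, ⟪force m h x r, v r⟫) t := by
    simp only [kineticEnergy]
    have h1 : ∀ r, HasDerivAt (fun τ => ‖deriv (fun s => X s r) τ‖ ^ 2)
        (2 * ⟪force m h x r, v r⟫) t := by
      intro r
      have hf := hforce r t ht
      have := hf.inner ℝ hf
      simp_rw [real_inner_self_eq_norm_sq] at this
      exact this.congr_deriv (by rw [real_inner_comm]; ring)
    have h2 := HasDerivAt.fun_sum (fun r (_ : r ∈ Finset.univ) => h1 r)
    have h3 := h2.const_mul (1/2 : ℝ)
    exact h3.congr_deriv (by rw [Finset.mul_sum]; exact Finset.sum_congr rfl fun r _ => by ring)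
  have hP := potential_hasDerivAt m h x v X t hv (fun r => rfl)
    (fun r s hrs => hdist t ht r s hrs)
  have hsum := hK.add hP
  have hzero : (∑ r, ⟪force m h x r, v r⟫)
      + (-(1/2 : ℝ) * ∑ p ∈ Finset.univ.filter (fun p : Fin m × Fin m => p.1 < p.2),
        (2 * ⟪x p.1 - x p.2, v p.1 - v p.2⟫ / ‖x p.1 - x p.2‖ ^ 2
          - h p.1 p.2 * (2 * ⟪x p.1 - x p.2, v p.1 - v p.2⟫))) = 0 := by
    rw [force_inner_sum m h hsymm x v, Finset.mul_sum, ← Finset.sum_add_distrib]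
    apply Finset.sum_eq_zero
    intro p hp
    ring
  rw [hzero] at hsum
  exact hsum

set_option maxHeartbeats 1000000 in
/-- A solution of the system on `(α, t₀]` with `α > −∞` is bounded together with its
velocity, and its points stay uniformly separated. -/
theorem solution_bounded_separated_on_Ioc (m : ℕ) (hm : 2 ≤ m)
    (h : Matrix (Fin m) (Fin m) ℝ)
    (hsymm : ∀ i k, h i k = h k i) (hdiag : ∀ i, h i i = 0)
    (h01 : ∀ i k, h i k = 0 ∨ h i k = 1)
    (α t₀ : ℝ) (X : ℝ → Fin m → EuclideanSpace ℝ (Fin m))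
    (hX : IsSolution m h (Set.Ioc α t₀) X) :
    (∃ D > (0 : ℝ), ∀ t ∈ Set.Ioc α t₀,
        (∑ r, ‖X t r‖ ^ 2) + ∑ r, ‖deriv (fun s => X s r) t‖ ^ 2 < D ^ 2) ∧
      ∃ L > (0 : ℝ), ∀ t ∈ Set.Ioc α t₀, ∀ r s : Fin m, r ≠ s → L ≤ ‖X t r - X t s‖ := by
  rcases le_or_gt t₀ α with hαt | hαt
  · have hemp : Set.Ioc α t₀ = ∅ := Set.Ioc_eq_empty (not_lt.mpr hαt)
    exact ⟨⟨1, one_pos, fun t ht => by rw [hemp] at ht; exact absurd ht (Set.notMem_empty t)⟩,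
      ⟨1, one_pos, fun t ht => by rw [hemp] at ht; exact absurd ht (Set.notMem_empty t)⟩⟩
  obtain ⟨hdist, hdiff, hforce⟩ := hX
  have hX' : IsSolution m h (Set.Ioc α t₀) X := ⟨hdist, hdiff, hforce⟩
  have ht₀mem : t₀ ∈ Set.Ioc α t₀ := ⟨hαt, le_refl _⟩
  set S := Set.Ioc α t₀ with hSdef
  -- notation
  set pairs : Finset (Fin m × Fin m) :=
    Finset.univ.filter (fun p : Fin m × Fin m => p.1 < p.2) with hpairs
  set N : ℕ := pairs.card with hN
  set E : ℝ → ℝ := fun τ => kineticEnergy m (fun r => deriv (fun s => X s r) τ)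
      + potentialEnergy m h (X τ) with hE
  set G : ℝ → ℝ := fun τ => ∑ r, ‖X τ r‖ ^ 2 with hG
  -- energy conservation
  have hEconst : ∀ t ∈ S, E t = E t₀ := by
    intro t ht
    have hsub : Set.Icc t t₀ ⊆ S := fun a ha => ⟨lt_of_lt_of_le ht.1 ha.1, ha.2⟩
    have hcont : ContinuousOn E (Set.Icc t t₀) := fun a ha =>
      ((energy_hasDerivAt m h hsymm S X hX' a (hsub ha)).continuousAt).continuousWithinAt
    have hder : ∀ a ∈ Set.Ico t t₀, HasDerivWithinAt E 0 (Set.Ici a) a := fun a ha =>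
      (energy_hasDerivAt m h hsymm S X hX' a (hsub ⟨ha.1, ha.2.le⟩)).hasDerivWithinAt
    have := constant_of_has_deriv_right_zero hcont hder t₀ ⟨ht.2, le_refl _⟩
    exact this.symm
  -- basic facts
  have hGnonneg : ∀ τ, 0 ≤ G τ := fun τ => Finset.sum_nonneg fun r _ => sq_nonneg _
  have hKnonneg : ∀ τ, 0 ≤ kineticEnergy m (fun r => deriv (fun s => X s r) τ) := fun τ => by
    unfold kineticEnergy
    have : (0:ℝ) ≤ ∑ r, ‖deriv (fun s => X s r) τ‖ ^ 2 :=
      Finset.sum_nonneg fun r _ => sq_nonneg _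
    linarith
  have hh0 : ∀ i k, 0 ≤ h i k := fun i k => by rcases h01 i k with h' | h' <;> rw [h'] <;> norm_num
  have hdsq_pos : ∀ t ∈ S, ∀ p ∈ pairs, 0 < ‖X t p.1 - X t p.2‖ ^ 2 := by
    intro t ht p hp
    have hplt : p.1 < p.2 := by rw [hpairs] at hp; simpa using hp
    have := hdist t ht p.1 p.2 hplt.ne
    have : X t p.1 - X t p.2 ≠ 0 := sub_ne_zero.mpr this
    exact pow_pos (norm_pos_iff.mpr this) 2
  have hdsq_le : ∀ t, ∀ p : Fin m × Fin m, p.1 ≠ p.2 →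
      ‖X t p.1 - X t p.2‖ ^ 2 ≤ 2 * G t + 3 := by
    intro t p hne
    have h1 : ‖X t p.1 - X t p.2‖ ^ 2 ≤ 2 * (‖X t p.1‖ ^ 2 + ‖X t p.2‖ ^ 2) := by
      have h0 := norm_sub_le (X t p.1) (X t p.2)
      have h2 := mul_self_le_mul_self (norm_nonneg (X t p.1 - X t p.2)) h0
      nlinarith [sq_nonneg (‖X t p.1‖ - ‖X t p.2‖), h2]
    have h2 : ‖X t p.1‖ ^ 2 + ‖X t p.2‖ ^ 2 ≤ G t := by
      rw [hG]
      have : ({p.1, p.2} : Finset (Fin m)) ⊆ Finset.univ := Finset.subset_univ _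
      calc ‖X t p.1‖ ^ 2 + ‖X t p.2‖ ^ 2 = ∑ r ∈ ({p.1, p.2} : Finset (Fin m)), ‖X t r‖ ^ 2 := by
            rw [Finset.sum_pair hne]
        _ ≤ ∑ r, ‖X t r‖ ^ 2 :=
            Finset.sum_le_sum_of_subset_of_nonneg this fun r _ _ => sq_nonneg _
    linarith
  -- potential lower bound in terms of an upper bound M on all squared distances
  have hPlow : ∀ t ∈ S, ∀ M : ℝ, 1 ≤ M →
      (∀ p ∈ pairs, ‖X t p.1 - X t p.2‖ ^ 2 ≤ M) →
      -((N : ℝ) / 2 * Real.log M) ≤ potentialEnergy m h (X t) := by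
    intro t ht M hM1 hMle
    rw [potentialEnergy]
    have hterm : ∀ p ∈ pairs, Real.log (‖X t p.1 - X t p.2‖ ^ 2)
        - h p.1 p.2 * ‖X t p.1 - X t p.2‖ ^ 2 ≤ Real.log M := by
      intro p hp
      have hpos := hdsq_pos t ht p hp
      have hlog : Real.log (‖X t p.1 - X t p.2‖ ^ 2) ≤ Real.log M :=
        Real.log_le_log hpos (hMle p hp)
      have : 0 ≤ h p.1 p.2 * ‖X t p.1 - X t p.2‖ ^ 2 :=
        mul_nonneg (hh0 _ _) (sq_nonneg _)
      linarith
    have hsum : ∑ p ∈ pairs, (Real.log (‖X t p.1 - X t p.2‖ ^ 2)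
        - h p.1 p.2 * ‖X t p.1 - X t p.2‖ ^ 2) ≤ (N : ℝ) * Real.log M := by
      calc ∑ p ∈ pairs, (Real.log (‖X t p.1 - X t p.2‖ ^ 2)
          - h p.1 p.2 * ‖X t p.1 - X t p.2‖ ^ 2) ≤ ∑ _p ∈ pairs, Real.log M :=
            Finset.sum_le_sum hterm
        _ = (N : ℝ) * Real.log M := by rw [Finset.sum_const, hN, nsmul_eq_mul]
    linarith
  -- velocity sum identity
  have hvel : ∀ τ, ∑ r, ‖deriv (fun s => X s r) τ‖ ^ 2
      = 2 * kineticEnergy m (fun r => deriv (fun s => X s r) τ) := by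
    intro τ; unfold kineticEnergy; ring
  -- derivative of G
  have hGderiv : ∀ t ∈ S, HasDerivAt G
      (∑ r, 2 * ⟪X t r, deriv (fun s => X s r) t⟫) t := by
    intro t ht
    rw [hG]
    apply HasDerivAt.fun_sum
    intro r _
    have hv : HasDerivAt (fun τ => X τ r) (deriv (fun s => X s r) t) t :=
      (hdiff r t ht).hasDerivAt
    have := hv.inner ℝ hv
    simp_rw [real_inner_self_eq_norm_sq] at this
    exact this.congr_deriv (by rw [real_inner_comm]; ring)
  -- |G'| bound
  have hGd_bound : ∀ t ∈ S, |∑ r, 2 * ⟪X t r, deriv (fun s => X s r) t⟫|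
      ≤ (2 * (N : ℝ) + 1) * G t + (2 * |E t₀| + 3 * N) := by
    intro t ht
    have h1 : |∑ r, 2 * ⟪X t r, deriv (fun s => X s r) t⟫|
        ≤ G t + ∑ r, ‖deriv (fun s => X s r) t‖ ^ 2 := by
      calc |∑ r, 2 * ⟪X t r, deriv (fun s => X s r) t⟫|
          ≤ ∑ r, |2 * ⟪X t r, deriv (fun s => X s r) t⟫| := Finset.abs_sum_le_sum_abs _ _
        _ ≤ ∑ r, (‖X t r‖ ^ 2 + ‖deriv (fun s => X s r) t‖ ^ 2) := by
            apply Finset.sum_le_sum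
            intro r _
            have := abs_real_inner_le_norm (X t r) (deriv (fun s => X s r) t)
            rw [abs_mul, abs_two]
            nlinarith [sq_nonneg (‖X t r‖ - ‖deriv (fun s => X s r) t‖),
              abs_nonneg (⟪X t r, deriv (fun s => X s r) t⟫)]
        _ = G t + ∑ r, ‖deriv (fun s => X s r) t‖ ^ 2 := by
            rw [hG, Finset.sum_add_distrib]
    -- kinetic energy bound via energy conservation and potential lower bound
    have hM1 : (1:ℝ) ≤ 2 * G t + 3 := by nlinarith [hGnonneg t]
    have hP := hPlow t ht (2 * G t + 3) hM1 (fun p hp => by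
      have hplt : p.1 < p.2 := by rw [hpairs] at hp; simpa using hp
      exact hdsq_le t p hplt.ne)
    have hEt := hEconst t ht
    have hKle : kineticEnergy m (fun r => deriv (fun s => X s r) t)
        ≤ |E t₀| + (N : ℝ) / 2 * Real.log (2 * G t + 3) := by
      have hKeq : kineticEnergy m (fun r => deriv (fun s => X s r) t)
          = E t - potentialEnergy m h (X t) := by simp only [hE]; ring
      rw [hKeq, hEt]
      have hP' : -((N:ℝ) / 2 * Real.log (2 * G t + 3)) ≤ potentialEnergy m h (X t) := hP
      have habs : E t₀ ≤ |E t₀| := le_abs_self (E t₀)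
      set c : ℝ := (N:ℝ) / 2 * Real.log (2 * G t + 3) with hc
      linarith [hP', habs]
    have hlog : Real.log (2 * G t + 3) ≤ 2 * G t + 3 := by
      have := Real.log_le_sub_one_of_pos (by linarith [hGnonneg t] : (0:ℝ) < 2 * G t + 3)
      linarith
    have hNn : (0:ℝ) ≤ N := Nat.cast_nonneg N
    rw [hvel t] at h1
    calc |∑ r, 2 * ⟪X t r, deriv (fun s => X s r) t⟫|
        ≤ G t + 2 * kineticEnergy m (fun r => deriv (fun s => X s r) t) := h1
      _ ≤ G t + 2 * (|E t₀| + (N : ℝ) / 2 * Real.log (2 * G t + 3)) := by linarith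
      _ ≤ G t + 2 * |E t₀| + (N : ℝ) * (2 * G t + 3) := by nlinarith
      _ ≤ (2 * (N : ℝ) + 1) * G t + (2 * |E t₀| + 3 * N) := by nlinarith [hGnonneg t]
  -- Gronwall: bound G
  set A : ℝ := 2 * (N : ℝ) + 1 with hA
  set B : ℝ := 2 * |E t₀| + 3 * N with hB
  have hApos : 0 < A := by rw [hA]; positivity
  have hBpos : 0 ≤ B := by rw [hB]; positivity
  set C : ℝ := (G t₀ + B / A) * Real.exp (A * (t₀ - α)) with hC
  have hGC : ∀ t ∈ S, G t ≤ C := by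
    intro t ht
    set b : ℝ := t₀ - t with hb
    have hb0 : 0 ≤ b := by rw [hb]; linarith [ht.2]
    set f : ℝ → ℝ := fun s => G (t₀ - s) with hf
    have hmem : ∀ s ∈ Set.Icc (0:ℝ) b, t₀ - s ∈ S := by
      intro s hs
      constructor
      · have : s ≤ b := hs.2
        rw [hb] at this
        linarith [ht.1]
      · linarith [hs.1]
    have hfc : ContinuousOn f (Set.Icc 0 b) := by
      intro s hs
      have hG' := hGderiv (t₀ - s) (hmem s hs)
      have hcont : ContinuousAt G (t₀ - s) := hG'.continuousAt
      exact (hcont.comp ((continuous_const.sub continuous_id).continuousAt)).continuousWithinAt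
    have hfd : ∀ s ∈ Set.Ico (0:ℝ) b, HasDerivWithinAt f
        (-(∑ r, 2 * ⟪X (t₀ - s) r, deriv (fun u => X u r) (t₀ - s)⟫)) (Set.Ici s) s := by
      intro s hs
      have hG' := hGderiv (t₀ - s) (hmem s ⟨hs.1, hs.2.le⟩)
      have hid : HasDerivAt (fun u : ℝ => t₀ - u) (-1) s := by
        simpa using (hasDerivAt_id s).const_sub t₀
      have := hG'.comp s hid
      simp only [mul_neg_one] at this
      exact this.hasDerivWithinAt
    have hf0 : ‖f 0‖ ≤ G t₀ := by
      show ‖G (t₀ - 0)‖ ≤ G t₀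
      rw [sub_zero, Real.norm_eq_abs, abs_of_nonneg (hGnonneg t₀)]
    have hbound : ∀ s ∈ Set.Ico (0:ℝ) b,
        ‖-(∑ r, 2 * ⟪X (t₀ - s) r, deriv (fun u => X u r) (t₀ - s)⟫)‖ ≤ A * ‖f s‖ + B := by
      intro s hs
      rw [Real.norm_eq_abs, abs_neg]
      have := hGd_bound (t₀ - s) (hmem s ⟨hs.1, hs.2.le⟩)
      rw [Real.norm_eq_abs, abs_of_nonneg (hGnonneg (t₀ - s))]
      exact this
    have hiq := norm_le_gronwallBound_of_norm_deriv_right_le hfc hfd hf0 hbound b ⟨hb0, le_refl b⟩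
    rw [sub_zero] at hiq
    have hfb : ‖f b‖ = G t := by
      have h1 : t₀ - b = t := by rw [hb]; ring
      show ‖G (t₀ - b)‖ = G t
      rw [h1, Real.norm_eq_abs, abs_of_nonneg (hGnonneg t)]
    rw [hfb] at hiq
    have hgb : gronwallBound (G t₀) A B b ≤ C := by
      rw [gronwallBound_of_K_ne_0 hApos.ne']
      have hble : b ≤ t₀ - α := by rw [hb]; linarith [ht.1]
      have he1 : Real.exp (A * b) ≤ Real.exp (A * (t₀ - α)) :=
        Real.exp_le_exp.mpr (mul_le_mul_of_nonneg_left hble hApos.le)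
      have he2 : (0:ℝ) < Real.exp (A * b) := Real.exp_pos _
      have hG0 : 0 ≤ G t₀ := hGnonneg t₀
      have hBA : 0 ≤ B / A := div_nonneg hBpos hApos.le
      rw [hC]
      nlinarith [Real.exp_pos (A * (t₀ - α))]
    linarith
  have hC0 : 0 ≤ C := le_trans (hGnonneg t₀) (hGC t₀ ht₀mem)
  -- constant per-pair lower bound for the potential
  set c₀ : ℝ := (1/2) * Real.log (2 * C + 3) with hc₀
  have hc₀0 : 0 ≤ c₀ := by
    rw [hc₀]
    have h1 : (1:ℝ) ≤ 2 * C + 3 := by linarith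
    have h2 := Real.log_nonneg h1
    linarith
  set c₁ : ℝ := (N : ℝ) * c₀ with hc₁
  have hc₁0 : 0 ≤ c₁ := by rw [hc₁]; exact mul_nonneg (Nat.cast_nonneg _) hc₀0
  have hdsqC : ∀ t ∈ S, ∀ p : Fin m × Fin m, p.1 ≠ p.2 →
      ‖X t p.1 - X t p.2‖ ^ 2 ≤ 2 * C + 3 := by
    intro t ht p hne
    have h1 := hdsq_le t p hne
    have h2 := hGC t ht
    linarith
  -- kinetic bound
  have hKmax : ∀ t ∈ S, kineticEnergy m (fun r => deriv (fun s => X s r) t)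
      ≤ |E t₀| + c₁ := by
    intro t ht
    have hM1 : (1:ℝ) ≤ 2 * C + 3 := by linarith
    have hP := hPlow t ht (2 * C + 3) hM1 (fun p hp => by
      have hplt : p.1 < p.2 := by rw [hpairs] at hp; simpa using hp
      exact hdsqC t ht p hplt.ne)
    have hEt := hEconst t ht
    have hKeq : kineticEnergy m (fun r => deriv (fun s => X s r) t)
        = E t - potentialEnergy m h (X t) := by simp only [hE]; ring
    have hcc : c₁ = (N : ℝ) / 2 * Real.log (2 * C + 3) := by rw [hc₁, hc₀]; ring
    rw [hKeq, hEt, hcc]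
    have hP' : -((N:ℝ) / 2 * Real.log (2 * C + 3)) ≤ potentialEnergy m h (X t) := hP
    have habs : E t₀ ≤ |E t₀| := le_abs_self (E t₀)
    set c : ℝ := (N:ℝ) / 2 * Real.log (2 * C + 3) with hc
    linarith [hP', habs]
  have hDarg : (0:ℝ) < C + 2 * (|E t₀| + c₁) + 1 := by
    have := abs_nonneg (E t₀)
    linarith
  refine ⟨⟨Real.sqrt (C + 2 * (|E t₀| + c₁) + 1), Real.sqrt_pos.mpr hDarg, ?_⟩, ?_⟩
  · intro t ht
    rw [Real.sq_sqrt hDarg.le]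
    have h1 : (∑ r, ‖X t r‖ ^ 2) ≤ C := hGC t ht
    have h2 : ∑ r, ‖deriv (fun s => X s r) t‖ ^ 2 ≤ 2 * (|E t₀| + c₁) := by
      rw [hvel t]
      have := hKmax t ht
      linarith
    linarith
  -- separation
  · set M : ℝ := |E t₀| + c₁ with hM
    have hM0 : 0 ≤ M := by
      rw [hM]
      have := abs_nonneg (E t₀)
      linarith
    refine ⟨Real.exp (-M), Real.exp_pos _, ?_⟩
    intro t ht r s hrs
    have key : ∀ p : Fin m × Fin m, p ∈ pairs → Real.exp (-M) ≤ ‖X t p.1 - X t p.2‖ := by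
      intro p hp
      set g : Fin m × Fin m → ℝ := fun q =>
        -(1/2 : ℝ) * (Real.log (‖X t q.1 - X t q.2‖ ^ 2)
          - h q.1 q.2 * ‖X t q.1 - X t q.2‖ ^ 2) with hg
      have hPg : potentialEnergy m h (X t) = ∑ q ∈ pairs, g q := by
        rw [potentialEnergy, hg, Finset.mul_sum]
      have hglow : ∀ q ∈ pairs, -c₀ ≤ g q := by
        intro q hq
        have hqpos := hdsq_pos t ht q hq
        have hqlt : q.1 < q.2 := by rw [hpairs] at hq; simpa using hq
        have hqle := hdsqC t ht q hqlt.ne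
        have hlog : Real.log (‖X t q.1 - X t q.2‖ ^ 2) ≤ Real.log (2 * C + 3) :=
          Real.log_le_log hqpos hqle
        have hpos : 0 ≤ h q.1 q.2 * ‖X t q.1 - X t q.2‖ ^ 2 :=
          mul_nonneg (hh0 _ _) (sq_nonneg _)
        have hgq : g q = -(1/2 : ℝ) * (Real.log (‖X t q.1 - X t q.2‖ ^ 2)
            - h q.1 q.2 * ‖X t q.1 - X t q.2‖ ^ 2) := by rw [hg]
        rw [hgq, hc₀]
        set l1 : ℝ := Real.log (‖X t q.1 - X t q.2‖ ^ 2) with hl1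
        set l2 : ℝ := Real.log (2 * C + 3) with hl2
        set hd : ℝ := h q.1 q.2 * ‖X t q.1 - X t q.2‖ ^ 2 with hhd
        linarith
      have herase : ∑ q ∈ pairs.erase p, g q + g p = ∑ q ∈ pairs, g q :=
        Finset.sum_erase_add _ _ hp
      have hel : -c₁ ≤ ∑ q ∈ pairs.erase p, g q := by
        have h1 : ∀ q ∈ pairs.erase p, -c₀ ≤ g q := fun q hq =>
          hglow q (Finset.mem_of_mem_erase hq)
        have h2 : ((pairs.erase p).card : ℝ) * (-c₀) ≤ ∑ q ∈ pairs.erase p, g q := by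
          have := Finset.card_nsmul_le_sum (pairs.erase p) g (-c₀) h1
          rwa [nsmul_eq_mul] at this
        have h3 : ((pairs.erase p).card : ℝ) ≤ (N : ℝ) := by
          rw [hN]
          exact_mod_cast Finset.card_le_card (Finset.erase_subset _ _)
        have h4 : ((pairs.erase p).card : ℝ) * c₀ ≤ (N : ℝ) * c₀ :=
          mul_le_mul_of_nonneg_right h3 hc₀0
        rw [hc₁]
        set u : ℝ := ((pairs.erase p).card : ℝ) * c₀ with hu
        set w : ℝ := (N : ℝ) * c₀ with hw
        have h2' : -u ≤ ∑ q ∈ pairs.erase p, g q := by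
          rw [hu]
          linarith [h2]
        linarith
      have hPup : potentialEnergy m h (X t) ≤ E t₀ := by
        have h6 := hKnonneg t
        have h5' : kineticEnergy m (fun r => deriv (fun s => X s r) t)
            + potentialEnergy m h (X t) = E t := by simp only [hE]
        linarith [h5', hEconst t ht, h6]
      have hgp : g p ≤ M := by
        have h7 : g p = potentialEnergy m h (X t) - ∑ q ∈ pairs.erase p, g q := by
          rw [hPg]; linarith [herase]
        rw [h7, hM]
        have habs : E t₀ ≤ |E t₀| := le_abs_self (E t₀)
        linarith
      have hppos := hdsq_pos t ht p hp
      have hhp : 0 ≤ h p.1 p.2 * ‖X t p.1 - X t p.2‖ ^ 2 :=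
        mul_nonneg (hh0 _ _) (sq_nonneg _)
      have hloglow : -(2 * M) ≤ Real.log (‖X t p.1 - X t p.2‖ ^ 2) := by
        have hgp' : -(1/2 : ℝ) * (Real.log (‖X t p.1 - X t p.2‖ ^ 2)
            - h p.1 p.2 * ‖X t p.1 - X t p.2‖ ^ 2) ≤ M := by
          have h9 := hgp
          simp only [hg] at h9
          exact h9
        set l3 : ℝ := Real.log (‖X t p.1 - X t p.2‖ ^ 2) with hl3
        set hd2 : ℝ := h p.1 p.2 * ‖X t p.1 - X t p.2‖ ^ 2 with hhd2
        linarith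
      have hexp : Real.exp (-(2 * M)) ≤ ‖X t p.1 - X t p.2‖ ^ 2 := by
        have h8 := Real.exp_le_exp.mpr hloglow
        rwa [Real.exp_log hppos] at h8
      have hexp2 : Real.exp (-M) ^ 2 = Real.exp (-(2 * M)) := by
        rw [sq, ← Real.exp_add, show (-M) + (-M) = -(2 * M) by ring]
      nlinarith [Real.exp_pos (-M), norm_nonneg (X t p.1 - X t p.2), hexp, hexp2]
    rcases lt_or_gt_of_ne hrs with hlt | hgt
    · exact key (r, s) (by rw [hpairs]; simp [hlt])
    · have := key (s, r) (by rw [hpairs]; simp [hgt])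
      rwa [norm_sub_rev] at this
end

section
/- Global existence: for every t0 ∈ ℝ, every initial configuration B = (b_1, …, b_m) of pairwise distinct points of ℝ^m and every tuple of initial velocities V = (v_1, …, v_m) in ℝ^m, there exists a solution t ↦ X(t) of the system defined on all of ℝ (with pairwise distinct points for every t ∈ ℝ) satisfying x_i(t0) = b_i and x_i′(t0) = v_i for all i. -/
namespace NBodyAux

open Set Filter Metric Real
open scoped NNReal Topology


variable {E : Type*} [NormedAddCommGroup E] [NormedSpace ℝ E]

namespace GlobalFlow

variable {g : E → E} {L : ℝ≥0}

/-- Uniform step size for the flow of an `L`-Lipschitz field. -/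
noncomputable def step (L : ℝ≥0) : ℝ := (2 * ((L : ℝ) + 1))⁻¹

lemma step_pos (L : ℝ≥0) : 0 < step L := by
  have : (0:ℝ) < (L:ℝ) + 1 := by positivity
  exact inv_pos.2 (by linarith)

lemma local_sol [CompleteSpace E] (hg : LipschitzWith L g) (s₀ : ℝ) (x : E) :
    ∃ f : ℝ → E, f s₀ = x ∧ ∀ t ∈ Icc (s₀ - step L) (s₀ + step L),
      HasDerivWithinAt f (g (f t)) (Icc (s₀ - step L) (s₀ + step L)) t := by
  have hτ := step_pos L
  have hs₀ : s₀ ∈ Icc (s₀ - step L) (s₀ + step L) := ⟨by linarith, by linarith⟩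
  have hpl : IsPicardLindelof (fun _ : ℝ => g) (tmin := s₀ - step L) (tmax := s₀ + step L)
      ⟨s₀, hs₀⟩ x (‖g x‖₊ + 1) 0 ((L + 1) * (‖g x‖₊ + 1)) L := by
    apply IsPicardLindelof.of_time_independent
    · intro y hy
      simp only [NNReal.coe_mul, NNReal.coe_add, NNReal.coe_one, coe_nnnorm] at hy ⊢
      have h1 : ‖g y - g x‖ ≤ (L : ℝ) * (‖g x‖ + 1) := by
        calc ‖g y - g x‖ ≤ (L : ℝ) * ‖y - x‖ := by
              simpa [dist_eq_norm] using hg.dist_le_mul y x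
        _ ≤ (L : ℝ) * (‖g x‖ + 1) := by
              have : ‖y - x‖ ≤ ‖g x‖ + 1 := by
                simpa [dist_eq_norm] using mem_closedBall_iff_norm.1 hy
              exact mul_le_mul_of_nonneg_left this L.2
      calc ‖g y‖ = ‖g y - g x + g x‖ := by rw [sub_add_cancel]
      _ ≤ ‖g y - g x‖ + ‖g x‖ := norm_add_le _ _
      _ ≤ (L : ℝ) * (‖g x‖ + 1) + (‖g x‖ + 1) := by
          have : ‖g x‖ ≤ ‖g x‖ + 1 := by linarith
          linarith [h1]
      _ = ((L : ℝ) + 1) * (‖g x‖ + 1) := by ring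
    · exact hg.lipschitzOnWith
    · simp only [sub_sub_cancel, add_sub_cancel_left, max_self, NNReal.coe_zero, sub_zero,
        NNReal.coe_mul, NNReal.coe_add, NNReal.coe_one, coe_nnnorm]
      have : ((L : ℝ) + 1) * (‖g x‖ + 1) * step L = (‖g x‖ + 1) / 2 := by
        unfold step
        field_simp
      rw [this]
      have : (0:ℝ) ≤ ‖g x‖ + 1 := by positivity
      linarith
  obtain ⟨f, hf0, hf⟩ := hpl.exists_eq_forall_mem_Icc_hasDerivWithinAt₀
  exact ⟨f, hf0, hf⟩

lemma glue_sol {f₁ f₂ : ℝ → E} {a b c : ℝ} (hab : a ≤ b) (hbc : b ≤ c)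
    (h₁ : ∀ t ∈ Icc a b, HasDerivWithinAt f₁ (g (f₁ t)) (Icc a b) t)
    (h₂ : ∀ t ∈ Icc b c, HasDerivWithinAt f₂ (g (f₂ t)) (Icc b c) t)
    (heq : f₁ b = f₂ b) :
    ∃ f : ℝ → E, (∀ t, t ≤ b → f t = f₁ t) ∧ (∀ t, b < t → f t = f₂ t) ∧
      ∀ t ∈ Icc a c, HasDerivWithinAt f (g (f t)) (Icc a c) t := by
  classical
  set f : ℝ → E := fun t => if t ≤ b then f₁ t else f₂ t with hfdef
  have hle : ∀ t, t ≤ b → f t = f₁ t := fun t ht => if_pos ht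
  have hgt : ∀ t, b < t → f t = f₂ t := fun t ht => if_neg (not_le.2 ht)
  refine ⟨f, hle, hgt, ?_⟩
  intro t ht
  rcases lt_trichotomy t b with h | rfl | h
  · have hmem : Icc a b ∈ 𝓝[Icc a c] t := by
      rw [mem_nhdsWithin]
      exact ⟨Iio b, isOpen_Iio, h, fun s hs => ⟨hs.2.1, hs.1.le⟩⟩
    have hd : HasDerivWithinAt f₁ (g (f₁ t)) (Icc a c) t :=
      (h₁ t ⟨ht.1, h.le⟩).mono_of_mem_nhdsWithin hmem
    have hee : f =ᶠ[𝓝[Icc a c] t] f₁ := by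
      filter_upwards [mem_nhdsWithin_of_mem_nhds (isOpen_Iio.mem_nhds h)] with s hs
      exact hle s (le_of_lt hs)
    have := hd.congr_of_eventuallyEq hee (hle t h.le)
    rwa [hle t h.le]
  · have hL : HasDerivWithinAt f (g (f₁ t)) (Icc a t) t := by
      refine (h₁ t ⟨hab, le_rfl⟩).congr (fun s hs => hle s hs.2) (hle t le_rfl) |>.mono_of_mem_nhdsWithin ?_
      exact self_mem_nhdsWithin
    have hR : HasDerivWithinAt f (g (f₁ t)) (Icc t c) t := by
      have h0 : HasDerivWithinAt f₂ (g (f₂ t)) (Icc t c) t := h₂ t ⟨le_rfl, hbc⟩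
      have hcongr : ∀ s ∈ Icc t c, f s = f₂ s := by
        intro s hs
        rcases eq_or_lt_of_le hs.1 with h' | hlt
        · rw [← h', hle t le_rfl, heq]
        · exact hgt s hlt
      have hx : f t = f₂ t := by rw [hle t le_rfl, heq]
      have := h0.congr hcongr hx
      rwa [← heq] at this
    have := hL.union hR
    rw [Icc_union_Icc_eq_Icc ht.1 ht.2] at this
    rwa [hle t le_rfl]
  · have hmem : Icc b c ∈ 𝓝[Icc a c] t := by
      rw [mem_nhdsWithin]
      exact ⟨Ioi b, isOpen_Ioi, h, fun s hs => ⟨hs.1.le, hs.2.2⟩⟩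
    have hd : HasDerivWithinAt f₂ (g (f₂ t)) (Icc a c) t :=
      (h₂ t ⟨h.le, ht.2⟩).mono_of_mem_nhdsWithin hmem
    have hee : f =ᶠ[𝓝[Icc a c] t] f₂ := by
      filter_upwards [mem_nhdsWithin_of_mem_nhds (isOpen_Ioi.mem_nhds h)] with s hs
      exact hgt s hs
    have := hd.congr_of_eventuallyEq hee (hgt t h)
    rwa [hgt t h]

lemma forward [CompleteSpace E] (hg : LipschitzWith L g) (t₀ : ℝ) (x₀ : E) (n : ℕ) :
    ∃ f : ℝ → E, f t₀ = x₀ ∧ ∀ t ∈ Icc (t₀ - n * step L) (t₀ + n * step L),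
      HasDerivWithinAt f (g (f t)) (Icc (t₀ - n * step L) (t₀ + n * step L)) t := by
  have hτ := step_pos L
  induction n with
  | zero =>
      obtain ⟨f, hf0, hf⟩ := local_sol hg t₀ x₀
      refine ⟨f, hf0, ?_⟩
      intro t ht
      simp only [Nat.cast_zero, zero_mul, sub_zero, add_zero] at ht ⊢
      rw [Icc_self, mem_singleton_iff] at ht
      subst ht
      rw [Icc_self]
      refine (hf t ⟨by linarith, by linarith⟩).mono ?_
      intro s hs
      rw [mem_singleton_iff] at hs
      subst hs
      exact ⟨by linarith, by linarith⟩
  | succ n ih =>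
      obtain ⟨f, hf0, hf⟩ := ih
      set a := t₀ - n * step L with ha
      set b := t₀ + n * step L with hb
      have hab : a ≤ b := by
        have : (0:ℝ) ≤ n * step L := by positivity
        simp only [ha, hb]; linarith
      have hat : a ≤ t₀ := by
        have : (0:ℝ) ≤ n * step L := by positivity
        simp only [ha]; linarith
      -- extend to the right
      obtain ⟨p, hp0, hp⟩ := local_sol hg b (f b)
      have hp' : ∀ t ∈ Icc b (b + step L), HasDerivWithinAt p (g (p t)) (Icc b (b + step L)) t := by
        intro t ht
        refine (hp t ⟨by linarith [ht.1], ht.2⟩).mono ?_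
        exact Icc_subset_Icc (by linarith) le_rfl
      obtain ⟨F₁, hF₁l, _, hF₁⟩ := glue_sol hab (by linarith) hf hp' hp0.symm
      have hF₁t₀ : F₁ t₀ = x₀ := by rw [hF₁l t₀ (by
          have : (0:ℝ) ≤ (n:ℝ) * step L := by positivity
          simp only [hb]; linarith), hf0]
      -- extend to the left
      obtain ⟨q, hq0, hq⟩ := local_sol hg a (F₁ a)
      have hq' : ∀ t ∈ Icc (a - step L) a, HasDerivWithinAt q (g (q t)) (Icc (a - step L) a) t := by
        intro t ht
        refine (hq t ⟨ht.1, by linarith [ht.2]⟩).mono ?_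
        exact Icc_subset_Icc le_rfl (by linarith)
      obtain ⟨F₂, hF₂l, hF₂r, hF₂⟩ := glue_sol (by linarith) (by linarith : a ≤ b + step L) hq' hF₁ hq0
      refine ⟨F₂, ?_, ?_⟩
      · rcases eq_or_lt_of_le hat with hteq | hlt
        · rw [hF₂l t₀ hteq.ge, ← hteq, hq0, hteq, hF₁t₀]
        · rw [hF₂r t₀ hlt, hF₁t₀]
      · have e1 : t₀ - (n+1 : ℕ) * step L = a - step L := by
          simp only [ha]; push_cast; ring
        have e2 : t₀ + (n+1 : ℕ) * step L = b + step L := by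
          simp only [hb]; push_cast; ring
        rw [e1, e2]
        exact hF₂

theorem exists_global_flow [CompleteSpace E] (hg : LipschitzWith L g) (t₀ : ℝ) (x₀ : E) :
    ∃ f : ℝ → E, f t₀ = x₀ ∧ ∀ t, HasDerivAt f (g (f t)) t := by
  classical
  have hτ := step_pos L
  choose S hS0 hS using forward hg t₀ x₀
  -- consistency
  have hcons : ∀ n N : ℕ, n ≤ N →
      EqOn (S n) (S N) (Icc (t₀ - n * step L) (t₀ + n * step L)) := by
    intro n N hnN
    rcases Nat.eq_zero_or_pos n with rfl | hn
    · intro t ht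
      simp only [Nat.cast_zero, zero_mul, sub_zero, add_zero, Icc_self, mem_singleton_iff] at ht
      subst ht
      rw [hS0 0, hS0 N]
    · have hcast : (n:ℝ) ≤ (N:ℝ) := Nat.cast_le.2 hnN
      have hmul : (n:ℝ) * step L ≤ (N:ℝ) * step L :=
        mul_le_mul_of_nonneg_right hcast hτ.le
      have hsub : Icc (t₀ - n * step L) (t₀ + n * step L) ⊆
          Icc (t₀ - N * step L) (t₀ + N * step L) := by
        apply Icc_subset_Icc <;> linarith
      have hnpos : (0:ℝ) < n * step L := by positivity
      have ht₀ : t₀ ∈ Ioo (t₀ - n * step L) (t₀ + n * step L) := by constructor <;> linarith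
      refine ODE_solution_unique_of_mem_Icc (v := fun _ : ℝ => g) (s := fun _ => univ)
        (fun _ _ => hg.lipschitzOnWith) ht₀ ?_ ?_ (fun _ _ => trivial) ?_ ?_ (fun _ _ => trivial) ?_
      · exact fun t ht => (hS n t ht).continuousWithinAt
      · intro t ht
        exact (hS n t (Ioo_subset_Icc_self ht)).hasDerivAt (Icc_mem_nhds ht.1 ht.2)
      · exact fun t ht => ((hS N t (hsub ht)).mono hsub).continuousWithinAt
      · intro t ht
        refine (hS N t (hsub (Ioo_subset_Icc_self ht))).hasDerivAt ?_
        have := hsub (Ioo_subset_Icc_self ht)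
        refine Icc_mem_nhds ?_ ?_
        · linarith [ht.1]
        · linarith [ht.2]
      · rw [hS0 n, hS0 N]
  set Nt : ℝ → ℕ := fun t => ⌈|t - t₀| / step L⌉₊ + 1 with hNt
  have hin : ∀ t, |t - t₀| < Nt t * step L := by
    intro t
    have h1 : |t - t₀| / step L ≤ ⌈|t - t₀| / step L⌉₊ := Nat.le_ceil _
    have h2 : |t - t₀| ≤ ⌈|t - t₀| / step L⌉₊ * step L := by
      rw [div_le_iff₀ hτ] at h1
      exact h1
    have : (Nt t : ℝ) * step L = ⌈|t - t₀| / step L⌉₊ * step L + step L := by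
      simp only [hNt]; push_cast; ring
    rw [this]
    linarith
  have hmemt : ∀ (t s : ℝ) (n : ℕ), |s - t₀| ≤ n * step L →
      s ∈ Icc (t₀ - n * step L) (t₀ + n * step L) := by
    intro t s n hs
    rw [abs_le] at hs
    constructor <;> linarith [hs.1, hs.2]
  set f : ℝ → E := fun t => S (Nt t) t with hf
  have hfeq : ∀ (n : ℕ) (s : ℝ), |s - t₀| ≤ n * step L → f s = S n s := by
    intro n s hs
    have h1 : s ∈ Icc (t₀ - n * step L) (t₀ + n * step L) := hmemt s s n hs
    have h2 : s ∈ Icc (t₀ - Nt s * step L) (t₀ + Nt s * step L) :=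
      hmemt s s (Nt s) (hin s).le
    calc f s = S (Nt s) s := rfl
    _ = S (max n (Nt s)) s := hcons (Nt s) _ (le_max_right _ _) h2
    _ = S n s := (hcons n (max n (Nt s)) (le_max_left _ _) h1).symm
  have hft₀ : f t₀ = x₀ := by
    rw [hf]; exact hS0 _
  refine ⟨f, hft₀, ?_⟩
  intro t
  set n := Nt t with hn
  have hlt := hin t
  have habs := abs_lt.1 hlt
  have hdS : HasDerivAt (S n) (g (S n t)) t :=
    (hS n t (hmemt t t n hlt.le)).hasDerivAt
      (Icc_mem_nhds (by linarith [habs.1]) (by linarith [habs.2]))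
  have hη : 0 < (n:ℝ) * step L - |t - t₀| := by linarith
  have hee : f =ᶠ[𝓝 t] S n := by
    filter_upwards [Metric.ball_mem_nhds t hη] with s hs
    apply hfeq
    have hd : |s - t| < (n:ℝ) * step L - |t - t₀| := by
      simpa [Real.dist_eq] using hs
    calc |s - t₀| ≤ |s - t| + |t - t₀| := abs_sub_le s t t₀
    _ ≤ (n:ℝ) * step L := by linarith
  have hfin : HasDerivAt f (g (S n t)) t := hdS.congr_of_eventuallyEq hee
  rwa [hfeq n t hlt.le]

end GlobalFlow


noncomputable section

/-- Cut-off inverse-square kernel. -/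
def psi {E : Type*} [NormedAddCommGroup E] [NormedSpace ℝ E] (ε : ℝ) (v : E) : E :=
  ((max ε ‖v‖) ^ 2)⁻¹ • v

variable {E : Type*} [NormedAddCommGroup E] [NormedSpace ℝ E]

lemma psi_eq {ε : ℝ} {v : E} (hv : ε ≤ ‖v‖) : psi ε v = (‖v‖ ^ 2)⁻¹ • v := by
  rw [psi, max_eq_right hv]

lemma psi_dist_le {ε : ℝ} (hε : 0 < ε) (u v : E) :
    ‖psi ε u - psi ε v‖ ≤ 3 / ε ^ 2 * ‖u - v‖ := by
  set Mu := max ε ‖u‖ with hMu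
  set Mv := max ε ‖v‖ with hMv
  have hεMu : ε ≤ Mu := le_max_left _ _
  have hεMv : ε ≤ Mv := le_max_left _ _
  have hMu0 : 0 < Mu := lt_of_lt_of_le hε hεMu
  have hMv0 : 0 < Mv := lt_of_lt_of_le hε hεMv
  have huMu : ‖u‖ ≤ Mu := le_max_right _ _
  have hvMv : ‖v‖ ≤ Mv := le_max_right _ _
  have key : psi ε u - psi ε v = (Mu ^ 2)⁻¹ • (u - v) + ((Mu ^ 2)⁻¹ - (Mv ^ 2)⁻¹) • v := by
    rw [psi, psi, ← hMu, ← hMv, smul_sub, sub_smul]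
    abel
  have hM : |Mu - Mv| ≤ ‖u - v‖ := by
    have h1 : |Mu - Mv| ≤ |‖u‖ - ‖v‖| := by
      rw [hMu, hMv, max_comm ε ‖u‖, max_comm ε ‖v‖]
      exact abs_max_sub_max_le_abs _ _ _
    exact h1.trans (abs_norm_sub_norm_le u v)
  have hden : (0:ℝ) < Mu ^ 2 * Mv ^ 2 := mul_pos (pow_pos hMu0 2) (pow_pos hMv0 2)
  have hsum : (0:ℝ) < Mv + Mu := add_pos hMv0 hMu0
  have hinv : |(Mu ^ 2)⁻¹ - (Mv ^ 2)⁻¹| ≤ (Mu + Mv) / (Mu ^ 2 * Mv ^ 2) * ‖u - v‖ := by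
    have h2 : (Mu ^ 2)⁻¹ - (Mv ^ 2)⁻¹ = (Mv ^ 2 - Mu ^ 2) / (Mu ^ 2 * Mv ^ 2) := by
      field_simp
    rw [h2, abs_div, abs_of_pos hden, div_le_iff₀ hden]
    have h3 : |Mv ^ 2 - Mu ^ 2| = |Mv - Mu| * (Mv + Mu) := by
      rw [← abs_of_pos hsum, ← abs_mul]
      congr 1; ring
    rw [h3, abs_sub_comm]
    have h4 : (Mu + Mv) / (Mu ^ 2 * Mv ^ 2) * ‖u - v‖ * (Mu ^ 2 * Mv ^ 2)
        = ‖u - v‖ * (Mv + Mu) := by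
      field_simp; ring
    rw [h4]
    exact mul_le_mul_of_nonneg_right hM hsum.le
  calc ‖psi ε u - psi ε v‖
      ≤ ‖(Mu ^ 2)⁻¹ • (u - v)‖ + ‖((Mu ^ 2)⁻¹ - (Mv ^ 2)⁻¹) • v‖ := by
        rw [key]; exact norm_add_le _ _
  _ = (Mu ^ 2)⁻¹ * ‖u - v‖ + |(Mu ^ 2)⁻¹ - (Mv ^ 2)⁻¹| * ‖v‖ := by
        rw [norm_smul, norm_smul, Real.norm_eq_abs, Real.norm_eq_abs,
          abs_of_pos (show (0:ℝ) < (Mu ^ 2)⁻¹ by positivity)]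
  _ ≤ (ε ^ 2)⁻¹ * ‖u - v‖ + ((Mu + Mv) / (Mu ^ 2 * Mv ^ 2) * ‖u - v‖) * Mv := by
        refine add_le_add ?_ ?_
        · refine mul_le_mul_of_nonneg_right ?_ (norm_nonneg _)
          exact inv_anti₀ (by positivity) (by nlinarith)
        · refine mul_le_mul hinv hvMv (norm_nonneg _) ?_
          exact mul_nonneg (div_pos (add_pos hMu0 hMv0) hden).le (norm_nonneg _)
  _ ≤ (ε ^ 2)⁻¹ * ‖u - v‖ + 2 / ε ^ 2 * ‖u - v‖ := by
        refine add_le_add le_rfl ?_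
        have hsq : ε * ε ≤ Mu * Mu := mul_le_mul hεMu hεMu hε.le hMu0.le
        have h1 : ε ^ 2 ≤ Mu * Mv := by nlinarith
        have h2 : Mu * Mv * ε ^ 2 ≤ Mu ^ 2 * Mv ^ 2 := by nlinarith
        have h3 : Mv ^ 2 * ε ^ 2 ≤ Mu ^ 2 * Mv ^ 2 := by nlinarith [sq_nonneg Mv, pow_pos hMv0 2]
        have hb : (Mu + Mv) / (Mu ^ 2 * Mv ^ 2) * Mv ≤ 2 / ε ^ 2 := by
          rw [div_mul_eq_mul_div, div_le_div_iff₀ (by positivity) (by positivity)]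
          nlinarith
        calc ((Mu + Mv) / (Mu ^ 2 * Mv ^ 2) * ‖u - v‖) * Mv
            = ((Mu + Mv) / (Mu ^ 2 * Mv ^ 2) * Mv) * ‖u - v‖ := by ring
        _ ≤ 2 / ε ^ 2 * ‖u - v‖ := mul_le_mul_of_nonneg_right hb (norm_nonneg _)
  _ = 3 / ε ^ 2 * ‖u - v‖ := by
        field_simp
        ring

end

noncomputable section

abbrev Epm (m : ℕ) := EuclideanSpace ℝ (Fin m)

def forceC (m : ℕ) (h : Matrix (Fin m) (Fin m) ℝ) (ε : ℝ)
    (X : Fin m → Epm m) (i : Fin m) : Epm m :=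
  ∑ k ∈ Finset.univ.filter (fun k => k ≠ i), (psi ε (X i - X k) - h i k • (X i - X k))

variable {m : ℕ} {h : Matrix (Fin m) (Fin m) ℝ} {ε : ℝ}

lemma forceC_eq_force (hε : 0 < ε) (X : Fin m → Epm m)
    (hd : ∀ r s : Fin m, r ≠ s → ε ≤ ‖X r - X s‖) (i : Fin m) :
    forceC m h ε X i = force m h X i := by
  unfold forceC force
  refine Finset.sum_congr rfl fun k hk => ?_
  have hki : k ≠ i := by simpa using hk
  have hik : ε ≤ ‖X i - X k‖ := hd i k hki.symm
  rw [psi_eq hik, sub_smul, one_div]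

lemma forceC_dist_le (h01 : ∀ i k, h i k = 0 ∨ h i k = 1) (hε : 0 < ε)
    (X Y : Fin m → Epm m) (i : Fin m) :
    ‖forceC m h ε X i - forceC m h ε Y i‖ ≤ (m * ((3 / ε ^ 2 + 1) * 2)) * ‖X - Y‖ := by
  unfold forceC
  rw [← Finset.sum_sub_distrib]
  refine (norm_sum_le _ _).trans ?_
  have hterm : ∀ k ∈ Finset.univ.filter (fun k => k ≠ i),
      ‖(psi ε (X i - X k) - h i k • (X i - X k)) -
        (psi ε (Y i - Y k) - h i k • (Y i - Y k))‖ ≤ (3 / ε ^ 2 + 1) * 2 * ‖X - Y‖ := by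
    intro k _
    set uX := X i - X k
    set uY := Y i - Y k
    have hre : (psi ε uX - h i k • uX) - (psi ε uY - h i k • uY)
        = (psi ε uX - psi ε uY) - h i k • (uX - uY) := by
      simp only [uX, uY, smul_sub]; abel
    have habs : |h i k| ≤ 1 := by
      rcases h01 i k with h' | h' <;> rw [h'] <;> norm_num
    have hu : ‖uX - uY‖ ≤ 2 * ‖X - Y‖ := by
      have h1 : uX - uY = (X - Y) i - (X - Y) k := by
        simp only [Pi.sub_apply, uX, uY]; abel
      rw [h1]
      calc ‖(X - Y) i - (X - Y) k‖ ≤ ‖(X - Y) i‖ + ‖(X - Y) k‖ := norm_sub_le _ _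
      _ ≤ ‖X - Y‖ + ‖X - Y‖ := add_le_add (norm_le_pi_norm _ i) (norm_le_pi_norm _ k)
      _ = 2 * ‖X - Y‖ := by ring
    calc ‖(psi ε uX - h i k • uX) - (psi ε uY - h i k • uY)‖
        = ‖(psi ε uX - psi ε uY) - h i k • (uX - uY)‖ := by rw [hre]
    _ ≤ ‖psi ε uX - psi ε uY‖ + ‖h i k • (uX - uY)‖ := norm_sub_le _ _
    _ ≤ 3 / ε ^ 2 * ‖uX - uY‖ + 1 * ‖uX - uY‖ := by
        refine add_le_add (psi_dist_le hε _ _) ?_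
        rw [norm_smul, Real.norm_eq_abs]
        exact mul_le_mul_of_nonneg_right habs (norm_nonneg _)
    _ = (3 / ε ^ 2 + 1) * ‖uX - uY‖ := by ring
    _ ≤ (3 / ε ^ 2 + 1) * (2 * ‖X - Y‖) := by
        refine mul_le_mul_of_nonneg_left hu ?_
        positivity
    _ = (3 / ε ^ 2 + 1) * 2 * ‖X - Y‖ := by ring
  refine (Finset.sum_le_sum hterm).trans ?_
  rw [Finset.sum_const, nsmul_eq_mul]
  have hcard : ((Finset.univ.filter (fun k => k ≠ i)).card : ℝ) ≤ m := by
    have := Finset.card_filter_le (Finset.univ : Finset (Fin m)) (fun k => k ≠ i)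
    calc ((Finset.univ.filter (fun k => k ≠ i)).card : ℝ) ≤ (Finset.univ : Finset (Fin m)).card := by
          exact_mod_cast this
    _ = m := by simp
  calc ((Finset.univ.filter (fun k => k ≠ i)).card : ℝ) * ((3 / ε ^ 2 + 1) * 2 * ‖X - Y‖)
      ≤ m * ((3 / ε ^ 2 + 1) * 2 * ‖X - Y‖) := by
        refine mul_le_mul_of_nonneg_right hcard ?_
        positivity
  _ = (m * ((3 / ε ^ 2 + 1) * 2)) * ‖X - Y‖ := by ring

/-- First-order phase-space vector field. -/
def phaseField (m : ℕ) (h : Matrix (Fin m) (Fin m) ℝ) (ε : ℝ) :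
    ((Fin m → Epm m) × (Fin m → Epm m)) → ((Fin m → Epm m) × (Fin m → Epm m)) :=
  fun p => (p.2, fun i => forceC m h ε p.1 i)

lemma phaseField_lipschitz (h01 : ∀ i k, h i k = 0 ∨ h i k = 1) (hε : 0 < ε) :
    LipschitzWith (Real.toNNReal (m * ((3 / ε ^ 2 + 1) * 2) + 1)) (phaseField m h ε) := by
  have hC : (0:ℝ) ≤ m * ((3 / ε ^ 2 + 1) * 2) := by positivity
  refine LipschitzWith.of_dist_le_mul fun p q => ?_
  rw [dist_eq_norm, dist_eq_norm, Real.coe_toNNReal _ (by linarith)]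
  have hsub : phaseField m h ε p - phaseField m h ε q
      = (p.2 - q.2, (fun i => forceC m h ε p.1 i) - fun i => forceC m h ε q.1 i) := rfl
  rw [hsub, Prod.norm_def]
  have h1 : ‖p.2 - q.2‖ ≤ ‖p - q‖ := norm_snd_le (p - q)
  have h2 : ‖(fun i => forceC m h ε p.1 i) - fun i => forceC m h ε q.1 i‖
      ≤ (m * ((3 / ε ^ 2 + 1) * 2)) * ‖p - q‖ := by
    refine pi_norm_le_iff_of_nonneg (by positivity) |>.2 fun i => ?_
    calc ‖((fun i => forceC m h ε p.1 i) - fun i => forceC m h ε q.1 i) i‖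
        = ‖forceC m h ε p.1 i - forceC m h ε q.1 i‖ := rfl
    _ ≤ (m * ((3 / ε ^ 2 + 1) * 2)) * ‖p.1 - q.1‖ := forceC_dist_le h01 hε _ _ i
    _ ≤ (m * ((3 / ε ^ 2 + 1) * 2)) * ‖p - q‖ := by
        refine mul_le_mul_of_nonneg_left (norm_fst_le (p - q)) hC
  refine max_le ?_ ?_
  · have : (0:ℝ) ≤ ‖p - q‖ := norm_nonneg _
    nlinarith
  · have : (0:ℝ) ≤ ‖p - q‖ := norm_nonneg _
    nlinarith

end

noncomputable section
open scoped RealInnerProductSpace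

variable {m : ℕ} {h : Matrix (Fin m) (Fin m) ℝ}

lemma kinetic_nonneg (Y : Fin m → Epm m) : 0 ≤ kineticEnergy m Y := by
  unfold kineticEnergy
  positivity

lemma sq_le_two_kinetic (Y : Fin m → Epm m) (i : Fin m) :
    ‖Y i‖ ^ 2 ≤ 2 * kineticEnergy m Y := by
  unfold kineticEnergy
  have h1 : ‖Y i‖ ^ 2 ≤ ∑ r, ‖Y r‖ ^ 2 :=
    Finset.single_le_sum (f := fun r => ‖Y r‖ ^ 2)
      (fun r _ => by positivity) (Finset.mem_univ i)
  linarith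

/-- Each summand of the potential energy is at least `-d` for its pair distance `d`. -/
lemma potential_term_ge (h01 : ∀ i k, h i k = 0 ∨ h i k = 1) {X : Fin m → Epm m}
    {r s : Fin m} (hne : X r ≠ X s) :
    -(‖X r - X s‖) ≤ -(1/2) * (Real.log (‖X r - X s‖ ^ 2) - h r s * ‖X r - X s‖ ^ 2) := by
  set d := ‖X r - X s‖ with hd
  have hd0 : 0 < d := by
    rw [hd, norm_pos_iff, sub_ne_zero]
    exact hne
  have hlog : Real.log (d ^ 2) = 2 * Real.log d := by
    rw [Real.log_pow]; push_cast; ring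
  have hlogd : Real.log d ≤ d := (Real.log_le_sub_one_of_pos hd0).trans (by linarith)
  have hh : 0 ≤ h r s := by rcases h01 r s with h' | h' <;> rw [h'] <;> norm_num
  have hterm : -(1/2) * (Real.log (d ^ 2) - h r s * d ^ 2)
      = -Real.log d + (1/2) * (h r s * d ^ 2) := by rw [hlog]; ring
  rw [hterm]
  have : 0 ≤ (1/2) * (h r s * d ^ 2) := by positivity
  linarith

lemma potential_ge (h01 : ∀ i k, h i k = 0 ∨ h i k = 1) (X : Fin m → Epm m)
    (hdist : ∀ r s : Fin m, r ≠ s → X r ≠ X s) :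
    -((m:ℝ)^2 * (2 * ‖X‖)) ≤ potentialEnergy m h X := by
  unfold potentialEnergy
  rw [Finset.mul_sum]
  have hbound : ∀ p ∈ Finset.univ.filter (fun p : Fin m × Fin m => p.1 < p.2),
      -(2 * ‖X‖) ≤ -(1/2) * (Real.log (‖X p.1 - X p.2‖ ^ 2) - h p.1 p.2 * ‖X p.1 - X p.2‖ ^ 2) := by
    intro p hp
    have hlt : p.1 < p.2 := by
      simpa using (Finset.mem_filter.1 hp).2
    have hne : X p.1 ≠ X p.2 := hdist _ _ (ne_of_lt hlt)
    refine le_trans ?_ (potential_term_ge h01 hne)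
    have h1 : ‖X p.1 - X p.2‖ ≤ 2 * ‖X‖ := by
      calc ‖X p.1 - X p.2‖ ≤ ‖X p.1‖ + ‖X p.2‖ := norm_sub_le _ _
      _ ≤ ‖X‖ + ‖X‖ := add_le_add (norm_le_pi_norm X p.1) (norm_le_pi_norm X p.2)
      _ = 2 * ‖X‖ := by ring
    linarith
  have hsum := Finset.sum_le_sum hbound
  rw [Finset.sum_const, nsmul_eq_mul] at hsum
  have hcard : ((Finset.univ.filter (fun p : Fin m × Fin m => p.1 < p.2)).card : ℝ) ≤ (m:ℝ)^2 := by
    have h1 := Finset.card_filter_le (Finset.univ : Finset (Fin m × Fin m))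
      (fun p => p.1 < p.2)
    have h2 : (Finset.univ : Finset (Fin m × Fin m)).card = m * m := by
      simp [Finset.card_univ]
    calc ((Finset.univ.filter (fun p : Fin m × Fin m => p.1 < p.2)).card : ℝ)
        ≤ ((Finset.univ : Finset (Fin m × Fin m)).card : ℝ) := by exact_mod_cast h1
    _ = (m:ℝ)^2 := by rw [h2]; push_cast; ring
  have hX0 : (0:ℝ) ≤ ‖X‖ := norm_nonneg _
  have hmono : -((m:ℝ)^2 * (2 * ‖X‖)) ≤
      ((Finset.univ.filter (fun p : Fin m × Fin m => p.1 < p.2)).card : ℝ) * (-(2 * ‖X‖)) := by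
    nlinarith
  calc -((m:ℝ)^2 * (2 * ‖X‖)) ≤ _ := hmono
  _ ≤ _ := hsum

end

noncomputable section
open scoped RealInnerProductSpace

variable {m : ℕ} {h : Matrix (Fin m) (Fin m) ℝ}

/-- Static collision lower bound from an energy bound and a diameter bound. -/
lemma dist_lower (h01 : ∀ i k, h i k = 0 ∨ h i k = 1) {X Y : Fin m → Epm m} {W D : ℝ}
    (hW : kineticEnergy m Y + potentialEnergy m h X ≤ W) (hD0 : 0 ≤ D)
    (hdist : ∀ r s : Fin m, r ≠ s → X r ≠ X s)
    (hD : ∀ r s : Fin m, r ≠ s → ‖X r - X s‖ ≤ D) :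
    ∀ r s : Fin m, r ≠ s → Real.exp (-(W + (m:ℝ)^2 * D)) ≤ ‖X r - X s‖ := by
  have key : ∀ r s : Fin m, r < s → Real.exp (-(W + (m:ℝ)^2 * D)) ≤ ‖X r - X s‖ := by
    intro r s hrs
    set q : Fin m × Fin m := (r, s) with hq
    have hqmem : q ∈ Finset.univ.filter (fun p : Fin m × Fin m => p.1 < p.2) := by
      simp [hq, hrs]
    set d := ‖X r - X s‖ with hd
    have hd0 : 0 < d := by
      rw [hd, norm_pos_iff, sub_ne_zero]
      exact hdist r s (ne_of_lt hrs)
    -- split the potential sum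
    have hsplit := Finset.add_sum_erase _
      (fun p : Fin m × Fin m =>
        -(1/2) * (Real.log (‖X p.1 - X p.2‖ ^ 2) - h p.1 p.2 * ‖X p.1 - X p.2‖ ^ 2)) hqmem
    have hPeq : potentialEnergy m h X
        = -(1/2) * (Real.log (d ^ 2) - h r s * d ^ 2)
          + ∑ p ∈ (Finset.univ.filter (fun p : Fin m × Fin m => p.1 < p.2)).erase q,
            (-(1/2) * (Real.log (‖X p.1 - X p.2‖ ^ 2) - h p.1 p.2 * ‖X p.1 - X p.2‖ ^ 2)) := by
      unfold potentialEnergy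
      rw [Finset.mul_sum]
      exact hsplit.symm
    -- bound the remaining terms from below by `-D`
    have hrest : ∀ p ∈ (Finset.univ.filter (fun p : Fin m × Fin m => p.1 < p.2)).erase q,
        -D ≤ -(1/2) * (Real.log (‖X p.1 - X p.2‖ ^ 2) - h p.1 p.2 * ‖X p.1 - X p.2‖ ^ 2) := by
      intro p hp
      have hlt : p.1 < p.2 := by
        have := (Finset.mem_filter.1 (Finset.mem_of_mem_erase hp)).2
        simpa using this
      have hne : X p.1 ≠ X p.2 := hdist _ _ (ne_of_lt hlt)
      refine le_trans ?_ (potential_term_ge h01 hne)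
      have := hD p.1 p.2 (ne_of_lt hlt)
      linarith
    have hcard : (((Finset.univ.filter (fun p : Fin m × Fin m => p.1 < p.2)).erase q).card : ℝ)
        ≤ (m:ℝ)^2 := by
      have h1 := Finset.card_erase_le
        (s := Finset.univ.filter (fun p : Fin m × Fin m => p.1 < p.2)) (a := q)
      have h2 := Finset.card_filter_le (Finset.univ : Finset (Fin m × Fin m))
        (fun p => p.1 < p.2)
      have h3 : (Finset.univ : Finset (Fin m × Fin m)).card = m * m := by
        simp [Finset.card_univ]
      have : (((Finset.univ.filter (fun p : Fin m × Fin m => p.1 < p.2)).erase q).card : ℕ)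
          ≤ m * m := le_trans h1 (h3 ▸ h2)
      calc (((Finset.univ.filter (fun p : Fin m × Fin m => p.1 < p.2)).erase q).card : ℝ)
          ≤ ((m * m : ℕ) : ℝ) := by exact_mod_cast this
      _ = (m:ℝ)^2 := by push_cast; ring
    have hsumrest : -((m:ℝ)^2 * D)
        ≤ ∑ p ∈ (Finset.univ.filter (fun p : Fin m × Fin m => p.1 < p.2)).erase q,
            (-(1/2) * (Real.log (‖X p.1 - X p.2‖ ^ 2) - h p.1 p.2 * ‖X p.1 - X p.2‖ ^ 2)) := by
      have := Finset.sum_le_sum hrest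
      rw [Finset.sum_const, nsmul_eq_mul] at this
      have hcd : (((Finset.univ.filter (fun p : Fin m × Fin m => p.1 < p.2)).erase q).card : ℝ)
          * (-D) ≥ -((m:ℝ)^2 * D) := by nlinarith
      linarith
    -- the pair term
    have hlog : Real.log (d ^ 2) = 2 * Real.log d := by rw [Real.log_pow]; push_cast; ring
    have hh : 0 ≤ h r s := by rcases h01 r s with h' | h' <;> rw [h'] <;> norm_num
    have hpair : -Real.log d ≤ -(1/2) * (Real.log (d ^ 2) - h r s * d ^ 2) := by
      rw [hlog]
      have : 0 ≤ h r s * d ^ 2 := by positivity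
      linarith
    have hK := kinetic_nonneg Y
    -- conclude
    have hlogd : -Real.log d ≤ W + (m:ℝ)^2 * D := by
      have hP : -Real.log d - (m:ℝ)^2 * D ≤ potentialEnergy m h X := by
        rw [hPeq]
        linarith
      linarith
    have : Real.exp (-(W + (m:ℝ)^2 * D)) ≤ Real.exp (Real.log d) := by
      apply Real.exp_le_exp.2
      linarith
    rwa [Real.exp_log hd0] at this
  intro r s hrs
  rcases lt_or_gt_of_ne hrs with hlt | hgt
  · exact key r s hlt
  · rw [norm_sub_rev]
    exact key s r hgt

/-- Static speed bound from an energy bound. -/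
lemma speed_le (h01 : ∀ i k, h i k = 0 ∨ h i k = 1) {X Y : Fin m → Epm m} {W : ℝ}
    (hW : kineticEnergy m Y + potentialEnergy m h X ≤ W)
    (hdist : ∀ r s : Fin m, r ≠ s → X r ≠ X s) :
    ‖Y‖ ≤ (Real.sqrt (2 * max W 0) + 2 * (m:ℝ)^2) + (1/2) * ‖X‖ := by
  set A : ℝ := (Real.sqrt (2 * max W 0) + 2 * (m:ℝ)^2) + (1/2) * ‖X‖ with hA
  have hA0 : 0 ≤ A := by
    have := Real.sqrt_nonneg (2 * max W 0)
    have := norm_nonneg X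
    positivity
  refine (pi_norm_le_iff_of_nonneg hA0).2 fun i => ?_
  have h1 : ‖Y i‖ ^ 2 ≤ 2 * kineticEnergy m Y := sq_le_two_kinetic Y i
  have h2 := potential_ge h01 X hdist
  have h3 : ‖Y i‖ ^ 2 ≤ 2 * max W 0 + 4 * (m:ℝ)^2 * ‖X‖ := by
    have : W ≤ max W 0 := le_max_left _ _
    nlinarith
  have hXn : (0:ℝ) ≤ ‖X‖ := norm_nonneg _
  have hsq : ‖Y i‖ ^ 2 ≤ A ^ 2 := by
    have hs := Real.sq_sqrt (by positivity : (0:ℝ) ≤ 2 * max W 0)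
    have hsn := Real.sqrt_nonneg (2 * max W 0)
    rw [hA]
    nlinarith [sq_nonneg ((2:ℝ) * (m:ℝ)^2 - (1/2) * ‖X‖),
      mul_nonneg hsn (by positivity : (0:ℝ) ≤ 2 * (m:ℝ)^2 + (1/2) * ‖X‖), hs, h3]
  calc ‖Y i‖ = Real.sqrt (‖Y i‖ ^ 2) := (Real.sqrt_sq (norm_nonneg _)).symm
  _ ≤ Real.sqrt (A ^ 2) := Real.sqrt_le_sqrt hsq
  _ = A := Real.sqrt_sq hA0

end

noncomputable section
open scoped RealInnerProductSpace

variable {m : ℕ} {h : Matrix (Fin m) (Fin m) ℝ}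

/-- Summing a function over ordered pairs (both ways) equals summing over off-diagonal pairs. -/
lemma pair_sum (f : Fin m → Fin m → ℝ) :
    ∑ p ∈ Finset.univ.filter (fun p : Fin m × Fin m => p.1 < p.2), (f p.1 p.2 + f p.2 p.1)
      = ∑ i, ∑ k ∈ Finset.univ.filter (fun k => k ≠ i), f i k := by
  classical
  have hRHS : ∑ i, ∑ k ∈ Finset.univ.filter (fun k => k ≠ i), f i k
      = ∑ p ∈ Finset.univ.filter (fun p : Fin m × Fin m => p.2 ≠ p.1), f p.1 p.2 := by
    rw [Finset.sum_filter]
    rw [← Finset.univ_product_univ, Finset.sum_product]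
    refine Finset.sum_congr rfl fun i _ => ?_
    rw [Finset.sum_filter]
  rw [hRHS]
  have hsplit := Finset.sum_filter_add_sum_filter_not
    (Finset.univ.filter (fun p : Fin m × Fin m => p.2 ≠ p.1))
    (fun p : Fin m × Fin m => p.1 < p.2) (fun p : Fin m × Fin m => f p.1 p.2)
  have h1 : (Finset.univ.filter (fun p : Fin m × Fin m => p.2 ≠ p.1)).filter
      (fun p : Fin m × Fin m => p.1 < p.2)
      = Finset.univ.filter (fun p : Fin m × Fin m => p.1 < p.2) := by
    rw [Finset.filter_filter]
    refine Finset.filter_congr fun p _ => ?_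
    constructor
    · exact fun hp => hp.2
    · exact fun hp => ⟨(ne_of_lt hp).symm, hp⟩
  have h2 : (Finset.univ.filter (fun p : Fin m × Fin m => p.2 ≠ p.1)).filter
      (fun p : Fin m × Fin m => ¬ p.1 < p.2)
      = Finset.univ.filter (fun p : Fin m × Fin m => p.2 < p.1) := by
    rw [Finset.filter_filter]
    refine Finset.filter_congr fun p _ => ?_
    constructor
    · exact fun hp => lt_of_le_of_ne (not_lt.1 hp.2) hp.1
    · exact fun hp => ⟨ne_of_lt hp, not_lt.2 (le_of_lt hp)⟩
  have hswap : ∑ p ∈ Finset.univ.filter (fun p : Fin m × Fin m => p.2 < p.1), f p.1 p.2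
      = ∑ p ∈ Finset.univ.filter (fun p : Fin m × Fin m => p.1 < p.2), f p.2 p.1 := by
    refine Finset.sum_nbij' (fun p => Prod.swap p) (fun p => Prod.swap p) ?_ ?_ ?_ ?_ ?_
    · intro p hp
      simp only [Finset.mem_filter, Finset.mem_univ, true_and] at hp ⊢
      exact hp
    · intro p hp
      simp only [Finset.mem_filter, Finset.mem_univ, true_and] at hp ⊢
      exact hp
    · intro p _; exact Prod.swap_swap p
    · intro p _; exact Prod.swap_swap p
    · intro p _; rfl
  rw [h1, h2, hswap] at hsplit
  rw [← hsplit, ← Finset.sum_add_distrib]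

/-- Pointwise conservation of energy for a solution of the true system. -/
lemma energy_deriv (hsymm : ∀ i k, h i k = h k i)
    {X Y : ℝ → Fin m → Epm m} {t : ℝ}
    (hX : ∀ i, HasDerivAt (fun s => X s i) (Y t i) t)
    (hY : ∀ i, HasDerivAt (fun s => Y s i) (force m h (X t) i) t)
    (hdist : ∀ r s : Fin m, r ≠ s → X t r ≠ X t s) :
    HasDerivAt (fun s => kineticEnergy m (Y s) + potentialEnergy m h (X s)) 0 t := by
  classical
  set F : Fin m → Epm m := force m h (X t) with hF
  set ff : Fin m → Fin m → ℝ :=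
    fun i k => (1 / ‖X t i - X t k‖ ^ 2 - h i k) * ⟪X t i - X t k, Y t i⟫ with hff
  set pairs : Finset (Fin m × Fin m) :=
    Finset.univ.filter (fun p : Fin m × Fin m => p.1 < p.2) with hpairs
  set v : Fin m × Fin m → ℝ :=
    fun p => 2 * ⟪X t p.1 - X t p.2, Y t p.1 - Y t p.2⟫ with hv
  set nn : Fin m × Fin m → ℝ := fun p => ‖X t p.1 - X t p.2‖ ^ 2 with hnn
  -- derivative of the kinetic energy
  have hKr : ∀ r : Fin m, HasDerivAt (fun s => ‖Y s r‖ ^ 2) (2 * ⟪F r, Y t r⟫) t := by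
    intro r
    have hinner := HasDerivAt.inner ℝ (hY r) (hY r)
    simp only [real_inner_self_eq_norm_sq] at hinner
    exact hinner.congr_deriv (by rw [real_inner_comm]; ring)
  have hKsum : HasDerivAt (fun s => ∑ r, ‖Y s r‖ ^ 2) (∑ r, 2 * ⟪F r, Y t r⟫) t :=
    HasDerivAt.fun_sum (fun r _ => hKr r)
  have hK : HasDerivAt (fun s => kineticEnergy m (Y s))
      ((1/2) * ∑ r, 2 * ⟪F r, Y t r⟫) t := by
    unfold kineticEnergy
    exact hKsum.const_mul (1/2)
  -- derivative of the potential energy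
  have hPp : ∀ p ∈ pairs, HasDerivAt
      (fun s => Real.log (‖X s p.1 - X s p.2‖ ^ 2) - h p.1 p.2 * ‖X s p.1 - X s p.2‖ ^ 2)
      (v p / nn p - h p.1 p.2 * v p) t := by
    intro p hp
    have hlt : p.1 < p.2 := by
      have := (Finset.mem_filter.1 hp).2
      simpa using this
    have hne : X t p.1 ≠ X t p.2 := hdist _ _ (ne_of_lt hlt)
    have hu : HasDerivAt (fun s => X s p.1 - X s p.2) (Y t p.1 - Y t p.2) t :=
      (hX p.1).sub (hX p.2)
    have hn : HasDerivAt (fun s => ‖X s p.1 - X s p.2‖ ^ 2) (v p) t := by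
      have hinner := HasDerivAt.inner ℝ hu hu
      simp only [real_inner_self_eq_norm_sq] at hinner
      exact hinner.congr_deriv (by
        simp only [hv]
        rw [real_inner_comm (X t p.1 - X t p.2) (Y t p.1 - Y t p.2)]
        ring)
    have hn0 : nn p ≠ 0 := by
      rw [hnn]
      have h0 : X t p.1 - X t p.2 ≠ 0 := sub_ne_zero.2 hne
      exact pow_ne_zero 2 (norm_ne_zero_iff.2 h0)
    have hlog : HasDerivAt (fun s => Real.log (‖X s p.1 - X s p.2‖ ^ 2)) (v p / nn p) t :=
      hn.log hn0
    exact hlog.sub (hn.const_mul (h p.1 p.2))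
  have hPsum : HasDerivAt
      (fun s => ∑ p ∈ pairs,
        (Real.log (‖X s p.1 - X s p.2‖ ^ 2) - h p.1 p.2 * ‖X s p.1 - X s p.2‖ ^ 2))
      (∑ p ∈ pairs, (v p / nn p - h p.1 p.2 * v p)) t := HasDerivAt.fun_sum hPp
  have hP : HasDerivAt (fun s => potentialEnergy m h (X s))
      (-(1/2) * ∑ p ∈ pairs, (v p / nn p - h p.1 p.2 * v p)) t := by
    unfold potentialEnergy
    exact hPsum.const_mul (-(1/2))
  have htot := hK.add hP
  -- the derivative value vanishes
  have hzero : (1/2) * (∑ r, 2 * ⟪F r, Y t r⟫)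
      + (-(1/2) * ∑ p ∈ pairs, (v p / nn p - h p.1 p.2 * v p)) = 0 := by
    have hA : (1/2) * (∑ r, 2 * ⟪F r, Y t r⟫)
        = ∑ i, ∑ k ∈ Finset.univ.filter (fun k => k ≠ i), ff i k := by
      rw [Finset.mul_sum]
      refine Finset.sum_congr rfl fun r _ => ?_
      have hFr : ⟪F r, Y t r⟫ = ∑ k ∈ Finset.univ.filter (fun k => k ≠ r), ff r k := by
        rw [hF]
        unfold force
        rw [sum_inner]
        refine Finset.sum_congr rfl fun k _ => ?_
        rw [real_inner_smul_left, hff]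
      rw [hFr]
      ring
    have hB : (1/2) * (∑ p ∈ pairs, (v p / nn p - h p.1 p.2 * v p))
        = ∑ p ∈ pairs, (ff p.1 p.2 + ff p.2 p.1) := by
      rw [Finset.mul_sum]
      refine Finset.sum_congr rfl fun p hp => ?_
      have hlt : p.1 < p.2 := by
        have := (Finset.mem_filter.1 hp).2
        simpa using this
      have hstep : (1/2) * (v p / nn p - h p.1 p.2 * v p)
          = (1 / nn p - h p.1 p.2) * ⟪X t p.1 - X t p.2, Y t p.1 - Y t p.2⟫ := by
        rw [hv]
        ring
      rw [hstep]
      have hneg : X t p.2 - X t p.1 = -(X t p.1 - X t p.2) := by abel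
      have hffs : ff p.2 p.1
          = -((1 / nn p - h p.1 p.2) * ⟪X t p.1 - X t p.2, Y t p.2⟫) := by
        simp only [hff, hnn]
        rw [hneg, inner_neg_left, norm_neg, hsymm p.2 p.1]
        ring
      have hff1 : ff p.1 p.2 = (1 / nn p - h p.1 p.2) * ⟪X t p.1 - X t p.2, Y t p.1⟫ := by
        simp only [hff, hnn]
      rw [hff1, hffs, inner_sub_right]
      ring
    rw [hA, ← pair_sum ff]
    have hBneg : -(1/2) * ∑ p ∈ pairs, (v p / nn p - h p.1 p.2 * v p)
        = -(∑ p ∈ pairs, (ff p.1 p.2 + ff p.2 p.1)) := by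
      rw [← hB]; ring
    rw [hBneg, hpairs]
    ring
  exact hzero ▸ htot

end

noncomputable section
open scoped RealInnerProductSpace

variable {m : ℕ} {h : Matrix (Fin m) (Fin m) ℝ}

lemma energy_constant (hsymm : ∀ i k, h i k = h k i)
    {X Y : ℝ → Fin m → Epm m} {a b : ℝ}
    (hX : ∀ (t : ℝ) (i : Fin m), HasDerivAt (fun s => X s i) (Y t i) t)
    (hY : ∀ t ∈ Icc a b, ∀ i : Fin m, HasDerivAt (fun s => Y s i) (force m h (X t) i) t)
    (hdist : ∀ t ∈ Icc a b, ∀ r s : Fin m, r ≠ s → X t r ≠ X t s) :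
    ∀ t ∈ Icc a b, kineticEnergy m (Y t) + potentialEnergy m h (X t)
      = kineticEnergy m (Y a) + potentialEnergy m h (X a) := by
  apply constant_of_has_deriv_right_zero
  · intro t ht
    exact (energy_deriv hsymm (fun i => hX t i) (hY t ht)
      (hdist t ht)).continuousAt.continuousWithinAt
  · intro t ht
    exact (energy_deriv hsymm (fun i => hX t i) (hY t (Ico_subset_Icc_self ht))
      (hdist t (Ico_subset_Icc_self ht))).hasDerivWithinAt

lemma gronwallBound_mono {δ K ε' : ℝ} (hδ : 0 ≤ δ) (hK : 0 < K) (hε : 0 ≤ ε')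
    {x y : ℝ} (hxy : x ≤ y) : gronwallBound δ K ε' x ≤ gronwallBound δ K ε' y := by
  have hx' : gronwallBound δ K ε' x
      = δ * Real.exp (K * x) + ε' / K * (Real.exp (K * x) - 1) := by
    rw [gronwallBound_of_K_ne_0 hK.ne']
  have hy' : gronwallBound δ K ε' y
      = δ * Real.exp (K * y) + ε' / K * (Real.exp (K * y) - 1) := by
    rw [gronwallBound_of_K_ne_0 hK.ne']
  rw [hx', hy']
  have hexp : Real.exp (K * x) ≤ Real.exp (K * y) :=
    Real.exp_le_exp.2 (mul_le_mul_of_nonneg_left hxy hK.le)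
  have key : 0 ≤ (δ + ε' / K) * (Real.exp (K * y) - Real.exp (K * x)) :=
    mul_nonneg (by positivity) (by linarith)
  nlinarith

/-- Speed-bound constant. -/
def c1 (m : ℕ) (W : ℝ) : ℝ := Real.sqrt (2 * max W 0) + 2 * (m:ℝ)^2

lemma c1_nonneg (m : ℕ) (W : ℝ) : 0 ≤ c1 m W := by
  have := Real.sqrt_nonneg (2 * max W 0)
  unfold c1; positivity

/-- A-priori bound for `‖X t‖` on a window of length `T`. -/
def cx (m : ℕ) (W R T : ℝ) : ℝ := gronwallBound R (1/2) (c1 m W) T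

/-- A-priori collision lower bound on a window of length `T`. -/
def delta (m : ℕ) (W R T : ℝ) : ℝ :=
  Real.exp (-(W + (m:ℝ)^2 * (2 * cx m W R T)))

lemma delta_pos (m : ℕ) (W R T : ℝ) : 0 < delta m W R T := Real.exp_pos _

lemma cx_mono {W R : ℝ} (hR : 0 ≤ R) {T T' : ℝ} (hT : T ≤ T') :
    cx m W R T ≤ cx m W R T' :=
  gronwallBound_mono hR one_half_pos (c1_nonneg m W) hT

lemma R_le_cx {W R T : ℝ} (hR : 0 ≤ R) (hT : 0 ≤ T) : R ≤ cx m W R T := by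
  have := cx_mono (m := m) (W := W) hR hT
  rwa [cx, gronwallBound_x0] at this

lemma delta_anti {W R : ℝ} (hR : 0 ≤ R) {T T' : ℝ} (hT : T ≤ T') :
    delta m W R T' ≤ delta m W R T := by
  unfold delta
  apply Real.exp_le_exp.2
  have := cx_mono (m := m) (W := W) hR hT
  nlinarith [sq_nonneg (m:ℝ)]

/-- Forward bootstrap: on `[t₀, t₀+T]` the solution of the cut-off system with
`ε = delta/2` keeps all mutual distances at least `delta`. -/
lemma bootstrap (hsymm : ∀ i k, h i k = h k i) (h01 : ∀ i k, h i k = 0 ∨ h i k = 1)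
    {X Y : ℝ → Fin m → Epm m} {t₀ T ε : ℝ} (hT : 0 ≤ T)
    (hX : ∀ (t : ℝ) (i : Fin m), HasDerivAt (fun s => X s i) (Y t i) t)
    (hY : ∀ (t : ℝ) (i : Fin m), HasDerivAt (fun s => Y s i) (forceC m h ε (X t) i) t)
    (hdist0 : ∀ r s : Fin m, r ≠ s → X t₀ r ≠ X t₀ s)
    (hε : ε = delta m (kineticEnergy m (Y t₀) + potentialEnergy m h (X t₀)) ‖X t₀‖ T / 2) :
    ∀ t ∈ Icc t₀ (t₀ + T), ∀ r s : Fin m, r ≠ s →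
      delta m (kineticEnergy m (Y t₀) + potentialEnergy m h (X t₀)) ‖X t₀‖ T
        ≤ ‖X t r - X t s‖ := by
  classical
  set W : ℝ := kineticEnergy m (Y t₀) + potentialEnergy m h (X t₀) with hW
  set R : ℝ := ‖X t₀‖ with hR
  set D : ℝ := 2 * cx m W R T with hD
  set dl : ℝ := delta m W R T with hdl
  have hdlD : dl = Real.exp (-(W + (m:ℝ)^2 * D)) := by rw [hdl, delta, hD]
  have hdlpos : 0 < dl := delta_pos m W R T
  have hεpos : 0 < ε := by rw [hε]; positivity
  have hεdl : ε < dl := by rw [hε]; linarith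
  have hR0 : (0:ℝ) ≤ R := norm_nonneg _
  have hD0 : (0:ℝ) ≤ D := by
    have := R_le_cx (m := m) (W := W) hR0 hT
    rw [hD]; linarith
  -- continuity
  have hXc : ∀ i : Fin m, Continuous fun τ => X τ i := by
    intro i
    exact continuous_iff_continuousAt.2 fun τ => (hX τ i).differentiableAt.continuousAt
  have hdc : ∀ r s : Fin m, Continuous fun τ => ‖X τ r - X τ s‖ :=
    fun r s => ((hXc r).sub (hXc s)).norm
  have hXcont : Continuous X := continuous_pi hXc
  -- initial distances
  have hdiam0 : ∀ r s : Fin m, r ≠ s → ‖X t₀ r - X t₀ s‖ ≤ D := by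
    intro r s _
    have h1 : ‖X t₀ r - X t₀ s‖ ≤ 2 * ‖X t₀‖ := by
      calc ‖X t₀ r - X t₀ s‖ ≤ ‖X t₀ r‖ + ‖X t₀ s‖ := norm_sub_le _ _
      _ ≤ ‖X t₀‖ + ‖X t₀‖ := add_le_add (norm_le_pi_norm _ r) (norm_le_pi_norm _ s)
      _ = 2 * ‖X t₀‖ := by ring
    have h2 := R_le_cx (m := m) (W := W) hR0 hT
    rw [hD]; rw [hR] at h2; linarith
  have hinit : ∀ r s : Fin m, r ≠ s → dl ≤ ‖X t₀ r - X t₀ s‖ := by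
    rw [hdlD]
    exact dist_lower h01 le_rfl hD0 hdist0 hdiam0
  -- the good set
  set C : Set ℝ := {τ | ∀ r s : Fin m, r ≠ s → ε ≤ ‖X τ r - X τ s‖} with hC
  have ht₀C : t₀ ∈ C := fun r s hrs => le_trans hεdl.le (hinit r s hrs)
  -- the key a-priori estimate
  have key : ∀ u ∈ Icc t₀ (t₀ + T), Icc t₀ u ⊆ C →
      ∀ τ ∈ Icc t₀ u, ∀ r s : Fin m, r ≠ s → dl ≤ ‖X τ r - X τ s‖ := by
    intro u hu hCu
    have hdist : ∀ τ ∈ Icc t₀ u, ∀ r s : Fin m, r ≠ s → X τ r ≠ X τ s := by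
      intro τ hτ r s hrs
      have := hCu hτ r s hrs
      intro hEq
      rw [hEq, sub_self, norm_zero] at this
      linarith
    have hfc : ∀ τ ∈ Icc t₀ u, ∀ i : Fin m,
        HasDerivAt (fun s => Y s i) (force m h (X τ) i) τ := by
      intro τ hτ i
      have := hY τ i
      rwa [forceC_eq_force hεpos (X τ) (fun r s hrs => hCu hτ r s hrs) i] at this
    have hcons := energy_constant hsymm hX hfc hdist
    -- Gronwall bound for ‖X τ‖
    have hgron : ∀ τ ∈ Icc t₀ u, ‖X τ‖ ≤ gronwallBound R (1/2) (c1 m W) (τ - t₀) := by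
      refine norm_le_gronwallBound_of_norm_deriv_right_le
        (f' := Y) (hXcont.continuousOn) ?_ le_rfl ?_
      · intro τ _
        exact (hasDerivAt_pi.2 fun i => hX τ i).hasDerivWithinAt
      · intro τ hτ
        have hWτ : kineticEnergy m (Y τ) + potentialEnergy m h (X τ) ≤ W := by
          rw [hW]
          exact (hcons τ (Ico_subset_Icc_self hτ)).le
        have := speed_le h01 hWτ (hdist τ (Ico_subset_Icc_self hτ))
        rw [c1]
        linarith
    have hdiam : ∀ τ ∈ Icc t₀ u, ∀ r s : Fin m, r ≠ s → ‖X τ r - X τ s‖ ≤ D := by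
      intro τ hτ r s _
      have h1 : ‖X τ r - X τ s‖ ≤ 2 * ‖X τ‖ := by
        calc ‖X τ r - X τ s‖ ≤ ‖X τ r‖ + ‖X τ s‖ := norm_sub_le _ _
        _ ≤ ‖X τ‖ + ‖X τ‖ := add_le_add (norm_le_pi_norm _ r) (norm_le_pi_norm _ s)
        _ = 2 * ‖X τ‖ := by ring
      have h2 := hgron τ hτ
      have h3 : gronwallBound R (1/2) (c1 m W) (τ - t₀) ≤ cx m W R T := by
        rw [cx]
        exact gronwallBound_mono hR0 one_half_pos (c1_nonneg m W)
          (by cases hτ; cases hu; linarith)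
      rw [hD]; linarith
    intro τ hτ
    rw [hdlD]
    exact dist_lower h01 (hcons τ hτ).le hD0 (hdist τ hτ) (hdiam τ hτ)
  -- the sup argument
  set A : Set ℝ := {s | s ∈ Icc t₀ (t₀ + T) ∧ Icc t₀ s ⊆ C} with hA
  have ht₀A : t₀ ∈ A := by
    refine ⟨⟨le_rfl, by linarith⟩, ?_⟩
    intro τ hτ
    have : τ = t₀ := le_antisymm hτ.2 hτ.1
    rwa [this]
  have hAne : A.Nonempty := ⟨t₀, ht₀A⟩
  have hAbdd : BddAbove A := ⟨t₀ + T, fun s hs => hs.1.2⟩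
  set u : ℝ := sSup A with hu
  have hu1 : t₀ ≤ u := le_csSup hAbdd ht₀A
  have hu2 : u ≤ t₀ + T := csSup_le hAne fun s hs => hs.1.2
  have huC : Icc t₀ u ⊆ C := by
    intro τ hτ
    rcases eq_or_lt_of_le hτ.2 with hτu | hτu
    · -- τ = u
      rcases eq_or_lt_of_le hτ.1 with ht₀τ | ht₀τ
      · rwa [← ht₀τ]
      · -- t₀ < τ = u; use continuity from the left
        intro r s hrs
        have hne : (𝓝[<] τ).NeBot := inferInstance
        refine ge_of_tendsto ((hdc r s).continuousAt.continuousWithinAt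
          (s := Iio τ)) ?_
        have hmem : Ico t₀ τ ∈ 𝓝[<] τ := Ico_mem_nhdsLT_of_mem ⟨ht₀τ, le_rfl⟩
        filter_upwards [hmem] with σ hσ
        have hσu : σ < u := by rw [← hτu]; exact hσ.2
        obtain ⟨s', hs'A, hs'⟩ := exists_lt_of_lt_csSup hAne (by rw [hu] at hσu; exact hσu)
        exact hs'A.2 ⟨hσ.1, hs'.le⟩ r s hrs
    · -- τ < u
      obtain ⟨s', hs'A, hs'⟩ := exists_lt_of_lt_csSup hAne (by rw [hu] at hτu; exact hτu)
      exact hs'A.2 ⟨hτ.1, hs'.le⟩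
  have huA : u ∈ A := ⟨⟨hu1, hu2⟩, huC⟩
  -- show u = t₀ + T
  have hfinal : u = t₀ + T := by
    by_contra hne
    have hult : u < t₀ + T := lt_of_le_of_ne hu2 hne
    have hbig := key u ⟨hu1, hu2⟩ huC
    -- eventually all distances exceed ε near u
    have hev : ∀ᶠ τ in 𝓝 u, ∀ r s : Fin m, r ≠ s → ε ≤ ‖X τ r - X τ s‖ := by
      rw [Filter.eventually_all]
      intro r
      rw [Filter.eventually_all]
      intro s
      by_cases hrs : r = s
      · exact Filter.Eventually.of_forall fun τ h' => absurd hrs h'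
      · have hdu : dl ≤ ‖X u r - X u s‖ := hbig u ⟨hu1, le_rfl⟩ r s hrs
        have hgt : ε < ‖X u r - X u s‖ := lt_of_lt_of_le hεdl hdu
        have hev1 := (hdc r s).continuousAt.eventually (eventually_gt_nhds hgt)
        exact hev1.mono fun τ h' _ => h'.le
    obtain ⟨η, hη, hball⟩ := Metric.eventually_nhds_iff.1 hev
    set u' : ℝ := min (u + η/2) (t₀ + T) with hu'
    have hu'A : u' ∈ A := by
      refine ⟨⟨?_, min_le_right _ _⟩, ?_⟩
      · exact le_min (by linarith) (by linarith)
      · intro τ hτ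
        rcases le_or_gt τ u with hτu | hτu
        · exact huC ⟨hτ.1, hτu⟩
        · refine hball ?_
          have hτ2 : τ ≤ u + η/2 := le_trans hτ.2 (min_le_left _ _)
          rw [Real.dist_eq, abs_of_pos (by linarith)]
          linarith
    have : u' ≤ u := le_csSup hAbdd hu'A
    have hlt : u < u' := lt_min (by linarith) hult
    linarith
  intro t ht r s hrs
  exact key u ⟨hu1, hu2⟩ huC t (by rw [hfinal]; exact ht) r s hrs

end

noncomputable section
open scoped RealInnerProductSpace

variable {m : ℕ} {h : Matrix (Fin m) (Fin m) ℝ}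

lemma bootstrap_backward (hsymm : ∀ i k, h i k = h k i) (h01 : ∀ i k, h i k = 0 ∨ h i k = 1)
    {X Y : ℝ → Fin m → Epm m} {t₀ T ε : ℝ} (hT : 0 ≤ T)
    (hX : ∀ (t : ℝ) (i : Fin m), HasDerivAt (fun s => X s i) (Y t i) t)
    (hY : ∀ (t : ℝ) (i : Fin m), HasDerivAt (fun s => Y s i) (forceC m h ε (X t) i) t)
    (hdist0 : ∀ r s : Fin m, r ≠ s → X t₀ r ≠ X t₀ s)
    (hε : ε = delta m (kineticEnergy m (Y t₀) + potentialEnergy m h (X t₀)) ‖X t₀‖ T / 2) :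
    ∀ t ∈ Icc (t₀ - T) t₀, ∀ r s : Fin m, r ≠ s →
      delta m (kineticEnergy m (Y t₀) + potentialEnergy m h (X t₀)) ‖X t₀‖ T
        ≤ ‖X t r - X t s‖ := by
  set Xr : ℝ → Fin m → Epm m := fun τ => X (2*t₀ - τ) with hXr
  set Yr : ℝ → Fin m → Epm m := fun τ => -(Y (2*t₀ - τ)) with hYr
  have hinner : ∀ t : ℝ, HasDerivAt (fun s : ℝ => 2*t₀ - s) (-1) t := by
    intro t
    simpa using (hasDerivAt_id t).const_sub (2*t₀)
  have hXr' : ∀ (t : ℝ) (i : Fin m), HasDerivAt (fun s => Xr s i) (Yr t i) t := by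
    intro t i
    have := (hX (2*t₀ - t) i).scomp t (hinner t)
    simpa [hXr, hYr, Function.comp_def] using this
  have hYr' : ∀ (t : ℝ) (i : Fin m),
      HasDerivAt (fun s => Yr s i) (forceC m h ε (Xr t) i) t := by
    intro t i
    have := ((hY (2*t₀ - t) i).scomp t (hinner t)).neg
    simpa [hXr, hYr, Function.comp_def, Pi.neg_def] using this
  have ht₀ : (2*t₀ - t₀ : ℝ) = t₀ := by ring
  have hXrt₀ : Xr t₀ = X t₀ := by rw [hXr]; simp [ht₀]
  have hYrt₀k : kineticEnergy m (Yr t₀) = kineticEnergy m (Y t₀) := by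
    rw [hYr]
    unfold kineticEnergy
    simp [ht₀]
  have hdist0r : ∀ r s : Fin m, r ≠ s → Xr t₀ r ≠ Xr t₀ s := by
    rw [hXrt₀]; exact hdist0
  have hεr : ε = delta m (kineticEnergy m (Yr t₀) + potentialEnergy m h (Xr t₀)) ‖Xr t₀‖ T / 2 := by
    rw [hXrt₀, hYrt₀k]; exact hε
  have hmain := bootstrap hsymm h01 hT hXr' hYr' hdist0r hεr
  rw [hXrt₀, hYrt₀k] at hmain
  intro t ht r s hrs
  have hτ : 2*t₀ - t ∈ Icc t₀ (t₀ + T) := by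
    constructor <;> [linarith [ht.2]; linarith [ht.1]]
  have := hmain (2*t₀ - t) hτ r s hrs
  have hXrr : Xr (2*t₀ - t) = X t := by rw [hXr]; congr 1; ring
  rwa [hXrr] at this

/-- Existence of a global solution of the cut-off system with good distance bounds
on the window `[t₀ - T, t₀ + T]`. -/
lemma window (hsymm : ∀ i k, h i k = h k i) (h01 : ∀ i k, h i k = 0 ∨ h i k = 1)
    (t₀ : ℝ) (B V : Fin m → Epm m) (hB : ∀ r s : Fin m, r ≠ s → B r ≠ B s)
    (T : ℝ) (hT : 0 ≤ T) :
    ∃ X Y : ℝ → Fin m → Epm m, X t₀ = B ∧ Y t₀ = V ∧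
      (∀ (t : ℝ) (i : Fin m), HasDerivAt (fun s => X s i) (Y t i) t) ∧
      (∀ (t : ℝ) (i : Fin m), HasDerivAt (fun s => Y s i)
        (forceC m h (delta m (kineticEnergy m V + potentialEnergy m h B) ‖B‖ T / 2) (X t) i) t) ∧
      (∀ t ∈ Icc (t₀ - T) (t₀ + T), ∀ r s : Fin m, r ≠ s →
        delta m (kineticEnergy m V + potentialEnergy m h B) ‖B‖ T ≤ ‖X t r - X t s‖) := by
  classical
  set W0 : ℝ := kineticEnergy m V + potentialEnergy m h B with hW0
  set ε : ℝ := delta m W0 ‖B‖ T / 2 with hεdef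
  have hεpos : 0 < ε := by rw [hεdef]; have := delta_pos m W0 ‖B‖ T; positivity
  obtain ⟨f, hf0, hf⟩ := GlobalFlow.exists_global_flow
    (phaseField_lipschitz (m := m) (h := h) h01 hεpos) t₀ (B, V)
  set X : ℝ → Fin m → Epm m := fun t => (f t).1 with hXdef
  set Y : ℝ → Fin m → Epm m := fun t => (f t).2 with hYdef
  have hXt₀ : X t₀ = B := by rw [hXdef]; simp [hf0]
  have hYt₀ : Y t₀ = V := by rw [hYdef]; simp [hf0]
  have hX : ∀ (t : ℝ) (i : Fin m), HasDerivAt (fun s => X s i) (Y t i) t := by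
    intro t i
    have hL := ((ContinuousLinearMap.proj (R := ℝ) (φ := fun _ : Fin m => Epm m) i).comp
      (ContinuousLinearMap.fst ℝ (Fin m → Epm m) (Fin m → Epm m))).hasFDerivAt.comp_hasDerivAt t (hf t)
    exact hL
  have hY : ∀ (t : ℝ) (i : Fin m), HasDerivAt (fun s => Y s i) (forceC m h ε (X t) i) t := by
    intro t i
    have hL := ((ContinuousLinearMap.proj (R := ℝ) (φ := fun _ : Fin m => Epm m) i).comp
      (ContinuousLinearMap.snd ℝ (Fin m → Epm m) (Fin m → Epm m))).hasFDerivAt.comp_hasDerivAt t (hf t)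
    exact hL
  have hdist0 : ∀ r s : Fin m, r ≠ s → X t₀ r ≠ X t₀ s := by
    rw [hXt₀]; exact hB
  have hε' : ε = delta m (kineticEnergy m (Y t₀) + potentialEnergy m h (X t₀)) ‖X t₀‖ T / 2 := by
    rw [hXt₀, hYt₀, hεdef, hW0]
  have hfwd := bootstrap hsymm h01 hT hX hY hdist0 hε'
  have hbwd := bootstrap_backward hsymm h01 hT hX hY hdist0 hε'
  rw [hXt₀, hYt₀] at hfwd hbwd
  refine ⟨X, Y, hXt₀, hYt₀, hX, hY, ?_⟩
  intro t ht r s hrs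
  rcases le_or_gt t t₀ with htt | htt
  · exact hbwd t ⟨ht.1, htt⟩ r s hrs
  · exact hfwd t ⟨htt.le, ht.2⟩ r s hrs

end

noncomputable section

variable {m : ℕ} {h : Matrix (Fin m) (Fin m) ℝ}

theorem global_existence' (hsymm : ∀ i k, h i k = h k i)
    (h01 : ∀ i k, h i k = 0 ∨ h i k = 1)
    (t₀ : ℝ) (B V : Fin m → Epm m)
    (hB : ∀ i k : Fin m, i ≠ k → B i ≠ B k) :
    ∃ X : ℝ → Fin m → Epm m,
      ((∀ t : ℝ, ∀ i k : Fin m, i ≠ k → X t i ≠ X t k) ∧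
       (∀ (i : Fin m) (t : ℝ), DifferentiableAt ℝ (fun s => X s i) t) ∧
       (∀ (i : Fin m) (t : ℝ), HasDerivAt (deriv (fun s => X s i)) (force m h (X t) i) t)) ∧
      (∀ i, X t₀ i = B i) ∧ (∀ i, deriv (fun t => X t i) t₀ = V i) := by
  classical
  set W0 : ℝ := kineticEnergy m V + potentialEnergy m h B with hW0
  choose Xs Ys hX0 hY0 hXd hYd hdist using
    fun n : ℕ => window hsymm h01 t₀ B V hB ((n:ℝ)+1) (by positivity)
  have hδpos : ∀ n : ℕ, 0 < delta m W0 ‖B‖ ((n:ℝ)+1) := fun n => delta_pos _ _ _ _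
  have hεpos : ∀ n : ℕ, 0 < delta m W0 ‖B‖ ((n:ℝ)+1) / 2 := fun n => by
    have := hδpos n; positivity
  -- consistency between windows
  have hcons : ∀ n N' : ℕ, n ≤ N' → ∀ t ∈ Icc (t₀ - ((n:ℝ)+1)) (t₀ + ((n:ℝ)+1)),
      Xs n t = Xs N' t ∧ Ys n t = Ys N' t := by
    intro n N' hnN
    have hTle : ((n:ℝ)+1) ≤ ((N':ℝ)+1) := by
      have : (n:ℝ) ≤ (N':ℝ) := Nat.cast_le.2 hnN
      linarith
    have hδle : delta m W0 ‖B‖ ((N':ℝ)+1) ≤ delta m W0 ‖B‖ ((n:ℝ)+1) :=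
      delta_anti (norm_nonneg B) hTle
    set εN : ℝ := delta m W0 ‖B‖ ((N':ℝ)+1) / 2 with hεN
    have hεNpos : 0 < εN := hεpos N'
    set g : ((Fin m → Epm m) × (Fin m → Epm m)) → ((Fin m → Epm m) × (Fin m → Epm m)) :=
      phaseField m h εN with hg
    set fn : ℝ → (Fin m → Epm m) × (Fin m → Epm m) := fun t => (Xs n t, Ys n t) with hfn
    set fN : ℝ → (Fin m → Epm m) × (Fin m → Epm m) := fun t => (Xs N' t, Ys N' t) with hfN
    have hIccsub : Icc (t₀ - ((n:ℝ)+1)) (t₀ + ((n:ℝ)+1)) ⊆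
        Icc (t₀ - ((N':ℝ)+1)) (t₀ + ((N':ℝ)+1)) :=
      Icc_subset_Icc (by linarith) (by linarith)
    have hfn' : ∀ t ∈ Ioo (t₀ - ((n:ℝ)+1)) (t₀ + ((n:ℝ)+1)), HasDerivAt fn (g (fn t)) t := by
      intro t ht
      have htIcc := Ioo_subset_Icc_self ht
      have hdd := hdist n t htIcc
      have hdX : HasDerivAt (fun s => Xs n s) (Ys n t) t :=
        hasDerivAt_pi.2 fun i => hXd n t i
      have hdY : HasDerivAt (fun s => Ys n s)
          (fun i => forceC m h (delta m W0 ‖B‖ ((n:ℝ)+1) / 2) (Xs n t) i) t :=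
        hasDerivAt_pi.2 fun i => hYd n t i
      have hval : (fun i => forceC m h (delta m W0 ‖B‖ ((n:ℝ)+1) / 2) (Xs n t) i)
          = fun i => forceC m h εN (Xs n t) i := by
        funext i
        rw [forceC_eq_force (hεpos n) (Xs n t)
          (fun r s hrs => le_trans (by linarith [hδpos n]) (hdd r s hrs)) i,
          ← forceC_eq_force hεNpos (Xs n t)
          (fun r s hrs => le_trans (by rw [hεN]; linarith [hδpos N']) (hdd r s hrs)) i]
      rw [hval] at hdY
      exact hdX.prodMk hdY
    have hfN' : ∀ t ∈ Ioo (t₀ - ((n:ℝ)+1)) (t₀ + ((n:ℝ)+1)), HasDerivAt fN (g (fN t)) t := by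
      intro t _
      have hdX : HasDerivAt (fun s => Xs N' s) (Ys N' t) t :=
        hasDerivAt_pi.2 fun i => hXd N' t i
      have hdY : HasDerivAt (fun s => Ys N' s)
          (fun i => forceC m h εN (Xs N' t) i) t :=
        hasDerivAt_pi.2 fun i => hYd N' t i
      exact hdX.prodMk hdY
    have hcontn : ContinuousOn fn (Icc (t₀ - ((n:ℝ)+1)) (t₀ + ((n:ℝ)+1))) := by
      refine Continuous.continuousOn ?_
      refine Continuous.prodMk ?_ ?_ <;> refine continuous_pi fun i => ?_ <;>
        refine continuous_iff_continuousAt.2 fun s => ?_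
      · exact (hXd n s i).differentiableAt.continuousAt
      · exact (hYd n s i).differentiableAt.continuousAt
    have hcontN : ContinuousOn fN (Icc (t₀ - ((n:ℝ)+1)) (t₀ + ((n:ℝ)+1))) := by
      refine Continuous.continuousOn ?_
      refine Continuous.prodMk ?_ ?_ <;> refine continuous_pi fun i => ?_ <;>
        refine continuous_iff_continuousAt.2 fun s => ?_
      · exact (hXd N' s i).differentiableAt.continuousAt
      · exact (hYd N' s i).differentiableAt.continuousAt
    have ht₀mem : t₀ ∈ Ioo (t₀ - ((n:ℝ)+1)) (t₀ + ((n:ℝ)+1)) := by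
      constructor <;> [linarith [Nat.cast_nonneg (α := ℝ) n]; linarith [Nat.cast_nonneg (α := ℝ) n]]
    have heq : fn t₀ = fN t₀ := by
      rw [hfn, hfN]
      simp only
      rw [hX0 n, hX0 N', hY0 n, hY0 N']
    have huniq := ODE_solution_unique_of_mem_Icc (v := fun _ => g) (s := fun _ => univ)
      (fun _ _ => (phaseField_lipschitz h01 hεNpos).lipschitzOnWith) ht₀mem
      hcontn hfn' (fun _ _ => trivial) hcontN hfN' (fun _ _ => trivial) heq
    intro t ht
    have := huniq ht
    rw [hfn, hfN] at this
    exact ⟨congrArg Prod.fst this, congrArg Prod.snd this⟩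
  -- patching
  set Nt : ℝ → ℕ := fun t => ⌈|t - t₀|⌉₊ with hNt
  have hNlt : ∀ t : ℝ, |t - t₀| < (Nt t : ℝ) + 1 := by
    intro t
    have := Nat.le_ceil |t - t₀|
    calc |t - t₀| ≤ (⌈|t - t₀|⌉₊ : ℝ) := this
    _ < (Nt t : ℝ) + 1 := by rw [hNt]; linarith
  have hmem : ∀ (s : ℝ) (n : ℕ), |s - t₀| ≤ (n:ℝ) + 1 →
      s ∈ Icc (t₀ - ((n:ℝ)+1)) (t₀ + ((n:ℝ)+1)) := by
    intro s n hs
    rw [abs_le] at hs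
    constructor <;> linarith [hs.1, hs.2]
  set Xg : ℝ → Fin m → Epm m := fun t => Xs (Nt t) t with hXg
  set Yg : ℝ → Fin m → Epm m := fun t => Ys (Nt t) t with hYg
  have hglue : ∀ (n : ℕ) (s : ℝ), |s - t₀| ≤ (n:ℝ) + 1 → Xg s = Xs n s ∧ Yg s = Ys n s := by
    intro n s hs
    have h1 := hmem s n hs
    have h2 := hmem s (Nt s) (hNlt s).le
    have c1 := hcons n (max n (Nt s)) (le_max_left _ _) s h1
    have c2 := hcons (Nt s) (max n (Nt s)) (le_max_right _ _) s h2
    exact ⟨c2.1.trans c1.1.symm, c2.2.trans c1.2.symm⟩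
  have hev : ∀ t : ℝ, ∀ᶠ s in nhds t, Xg s = Xs (Nt t) s ∧ Yg s = Ys (Nt t) s := by
    intro t
    have hη : 0 < ((Nt t : ℝ) + 1) - |t - t₀| := by linarith [hNlt t]
    filter_upwards [Metric.ball_mem_nhds t hη] with s hs
    apply hglue
    have hd : |s - t| < ((Nt t:ℝ)+1) - |t - t₀| := by simpa [Real.dist_eq] using hs
    calc |s - t₀| ≤ |s - t| + |t - t₀| := abs_sub_le _ _ _
    _ ≤ (Nt t:ℝ)+1 := by linarith
  have htIcc : ∀ t : ℝ, t ∈ Icc (t₀ - ((Nt t:ℝ)+1)) (t₀ + ((Nt t:ℝ)+1)) :=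
    fun t => hmem t (Nt t) (hNlt t).le
  -- derivatives of the glued solution
  have hXgd : ∀ (t : ℝ) (i : Fin m), HasDerivAt (fun s => Xg s i) (Yg t i) t := by
    intro t i
    refine (hXd (Nt t) t i).congr_of_eventuallyEq ?_
    filter_upwards [hev t] with s hs
    rw [hs.1]
  have hYgd : ∀ (t : ℝ) (i : Fin m), HasDerivAt (fun s => Yg s i)
      (forceC m h (delta m W0 ‖B‖ ((Nt t:ℝ)+1) / 2) (Xs (Nt t) t) i) t := by
    intro t i
    refine (hYd (Nt t) t i).congr_of_eventuallyEq ?_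
    filter_upwards [hev t] with s hs
    rw [hs.2]
  have hXgt : ∀ t : ℝ, Xg t = Xs (Nt t) t := fun t => rfl
  have hfe : ∀ (t : ℝ) (i : Fin m),
      forceC m h (delta m W0 ‖B‖ ((Nt t:ℝ)+1) / 2) (Xs (Nt t) t) i = force m h (Xg t) i := by
    intro t i
    have hdd := hdist (Nt t) t (htIcc t)
    rw [forceC_eq_force (hεpos (Nt t)) (Xs (Nt t) t)
      (fun r s hrs => le_trans (by linarith [hδpos (Nt t)]) (hdd r s hrs)) i]
  have hderiv : ∀ i : Fin m, deriv (fun s => Xg s i) = fun σ => Yg σ i :=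
    fun i => funext fun σ => (hXgd σ i).deriv
  refine ⟨Xg, ⟨?_, ?_, ?_⟩, ?_, ?_⟩
  · intro t i k hik
    have hdd := hdist (Nt t) t (htIcc t) i k hik
    have := hδpos (Nt t)
    intro hEqv
    have hdd' : delta m W0 ‖B‖ ((Nt t:ℝ)+1) ≤ ‖Xg t i - Xg t k‖ := hdd
    rw [hEqv, sub_self, norm_zero] at hdd'
    linarith
  · exact fun i t => (hXgd t i).differentiableAt
  · intro i t
    rw [hderiv i]
    have := hYgd t i
    rwa [hfe t i] at this
  · intro i
    rw [hXgt t₀, hX0 (Nt t₀)]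
  · intro i
    have : deriv (fun s => Xg s i) t₀ = Yg t₀ i := by rw [hderiv i]
    rw [this, hYg]
    simp only
    rw [hY0 (Nt t₀)]

end


end NBodyAux

/-- Global existence: for any initial time `t₀`, any initial configuration `B` of pairwise
distinct points of `ℝ^m` and any initial velocities `V`, there is a solution of the system
defined on all of `ℝ` with `x_i(t₀) = b_i` and `x_i′(t₀) = v_i`. -/
theorem global_existence (m : ℕ) (hm : 2 ≤ m) (h : Matrix (Fin m) (Fin m) ℝ)
    (hsymm : ∀ i k, h i k = h k i) (hdiag : ∀ i, h i i = 0)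
    (h01 : ∀ i k, h i k = 0 ∨ h i k = 1)
    (t₀ : ℝ) (B V : Fin m → EuclideanSpace ℝ (Fin m))
    (hB : ∀ i k : Fin m, i ≠ k → B i ≠ B k) :
    ∃ X : ℝ → Fin m → EuclideanSpace ℝ (Fin m),
      IsSolution m h Set.univ X ∧ (∀ i, X t₀ i = B i) ∧
        ∀ i, deriv (fun t => X t i) t₀ = V i := by
  obtain ⟨X, ⟨hd1, hd2, hd3⟩, hinit, hvel⟩ :=
    NBodyAux.global_existence' hsymm h01 t₀ B V hB
  exact ⟨X, ⟨fun t _ => hd1 t, fun i t _ => hd2 i t, fun i t _ => hd3 i t⟩, hinit, hvel⟩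
end
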